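/- arXiv:1203.5276 — 6 statements merged into one kernel-verified Lean document; each statement's English description precedes it below -/
import Mathlib

section
/- Let f : [a,b] → (0,∞) be a continuous function. Suppose there exist two sequences (x̲_n) and (x̄_n) with a < ⋯ < x̲_n < x̄_n < ⋯ < x̲_2 < x̄_2 < x̲_1 < x̄_1 ≤ b and lim_{n→∞} x̄_n = a, such that for some α > 0 and γ ∈ (0,1) one has f(x̄_n) − f(x̲_n) ≥ α n^{−γ} for all n ∈ ℕ. Then there exists a function g : [a,b] → [0,∞) of bounded variation with g(a) = 0 such that the Riemann–Stieltjes integral ∫_a^y f(x) dg(x) is strictly negative for every y ∈ (a,b]. -/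
open Set Filter MeasureTheory

/-- The Riemann–Stieltjes sum of `f` with respect to `g` for the tagged partition with
points `t 0, …, t m` and tags `ξ 0, …, ξ (m-1)`. -/
noncomputable def RSSum (f g : ℝ → ℝ) (m : ℕ) (t ξ : ℕ → ℝ) : ℝ :=
  ∑ i ∈ Finset.range m, f (ξ i) * (g (t (i + 1)) - g (t i))

/-- `t`, `ξ` form a tagged partition of `[a, b]` into `m` subintervals. -/
def IsTaggedPartition (a b : ℝ) (m : ℕ) (t ξ : ℕ → ℝ) : Prop :=
  0 < m ∧ t 0 = a ∧ t m = b ∧ (∀ i < m, t i < t (i + 1)) ∧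
    ∀ i < m, ξ i ∈ Set.Icc (t i) (t (i + 1))

/-- `I` is the Riemann–Stieltjes integral `∫_a^b f dg`: the Riemann–Stieltjes sums tend to `I`
as the mesh of the tagged partition tends to zero. -/
def HasRSIntegral (f g : ℝ → ℝ) (a b : ℝ) (I : ℝ) : Prop :=
  ∀ ε > 0, ∃ δ > 0, ∀ (m : ℕ) (t ξ : ℕ → ℝ), IsTaggedPartition a b m t ξ →
    (∀ i < m, t (i + 1) - t i < δ) → |RSSum f g m t ξ - I| < ε

open Classical in
/-- The Riemann–Stieltjes integral `∫_a^b f dg`, defaulting to `0` if it does not exist. -/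
noncomputable def RSIntegral (f g : ℝ → ℝ) (a b : ℝ) : ℝ :=
  if h : ∃ I, HasRSIntegral f g a b I then h.choose else 0


namespace StmtZero

noncomputable def step (p t : ℝ) : ℝ := if p ≤ t then 1 else 0

lemma step_nonneg (p t : ℝ) : 0 ≤ step p t := by
  unfold step; split_ifs <;> norm_num

lemma step_le_one (p t : ℝ) : step p t ≤ 1 := by
  unfold step; split_ifs <;> norm_num

lemma abs_step_mul_le {p t M v : ℝ} (hv : |v| ≤ M) : |step p t * v| ≤ M := by
  rw [abs_mul]
  calc |step p t| * |v| ≤ 1 * M :=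
      mul_le_mul (by rw [abs_of_nonneg (step_nonneg p t)]; exact step_le_one p t) hv
        (abs_nonneg _) one_pos.le
    _ = M := one_mul M

lemma step_mono (p : ℝ) : Monotone (step p) := by
  intro s t hst
  unfold step
  by_cases h1 : p ≤ s
  · rw [if_pos h1, if_pos (h1.trans hst)]
  · rw [if_neg h1]; split_ifs <;> norm_num

lemma step_anti (t : ℝ) {p q : ℝ} (hpq : p ≤ q) : step q t ≤ step p t := by
  unfold step
  by_cases h1 : q ≤ t
  · rw [if_pos h1, if_pos (hpq.trans h1)]
  · rw [if_neg h1]; split_ifs <;> norm_num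

lemma part_mono {m : ℕ} {t : ℕ → ℝ} (hst : ∀ i < m, t i < t (i + 1)) :
    ∀ j ≤ m, ∀ i ≤ j, t i ≤ t j := by
  intro j
  induction j with
  | zero => intro _ i hi; simp_all
  | succ k ih =>
    intro hj i hi
    rcases Nat.lt_succ_iff_lt_or_eq.mp (Nat.lt_succ_of_le hi) with h | h
    · exact (ih (by omega) i (by omega)).trans (le_of_lt (hst k (by omega)))
    · rw [h]

lemma jump_sum {A B p : ℝ} {m : ℕ} {t : ℕ → ℝ} (c : ℕ → ℝ)
    (h0 : t 0 = A) (hM : t m = B)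
    (hst : ∀ i < m, t i < t (i + 1)) (hpA : A < p) :
    ∃ j, (p ≤ B → j < m ∧ t j < p ∧ p ≤ t (j + 1)) ∧
      ∑ i ∈ Finset.range m, c i * (step p (t (i + 1)) - step p (t i))
        = step p B * c j := by
  have mono := part_mono hst
  by_cases hpB : p ≤ B
  · have hex : ∃ i, p ≤ t i := ⟨m, hM ▸ hpB⟩
    have hj1 : p ≤ t (Nat.find hex) := Nat.find_spec hex
    have hj1pos : 0 < Nat.find hex := by
      rcases Nat.eq_zero_or_pos (Nat.find hex) with h | h
      · exfalso; rw [h, h0] at hj1; linarith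
      · exact h
    have hj1m : Nat.find hex ≤ m := by
      by_contra h
      exact Nat.find_min hex (by omega) (hM ▸ hpB)
    set j := Nat.find hex - 1 with hjdef
    have hjj : j + 1 = Nat.find hex := by omega
    have hjm : j < m := by omega
    have htj : t j < p := by
      have := Nat.find_min hex (show j < Nat.find hex by omega)
      linarith [lt_of_not_ge this]
    refine ⟨j, fun _ => ⟨hjm, htj, hjj ▸ hj1⟩, ?_⟩
    have hstepB : step p B = 1 := if_pos hpB
    rw [hstepB, one_mul]
    rw [Finset.sum_eq_single j]
    · have h1 : step p (t (j + 1)) = 1 := if_pos (hjj ▸ hj1)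
      have h2 : step p (t j) = 0 := if_neg (not_le.mpr htj)
      rw [h1, h2]; ring
    · intro i hi hij
      rcases lt_or_gt_of_ne hij with h | h
      · have hi1 : t (i + 1) ≤ t j := mono j (by omega) (i + 1) (by omega)
        have hi0 : t i ≤ t j := mono j (by omega) i (by omega)
        rw [show step p (t (i + 1)) = 0 from if_neg (by push_neg; linarith),
          show step p (t i) = 0 from if_neg (by push_neg; linarith)]
        ring
      · have hi0 : t (j + 1) ≤ t i := mono i (by
          simpa using (Finset.mem_range.mp hi).le) (j + 1) (by omega)
        have hi1 : t (j + 1) ≤ t (i + 1) := mono (i + 1) (by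
          exact Nat.succ_le_of_lt (Finset.mem_range.mp hi)) (j + 1) (by omega)
        rw [show step p (t (i + 1)) = 1 from if_pos (by linarith [hjj ▸ hj1]),
          show step p (t i) = 1 from if_pos (by linarith [hjj ▸ hj1])]
        ring
    · intro h
      exact absurd (Finset.mem_range.mpr hjm) h
  · refine ⟨0, fun h => absurd h hpB, ?_⟩
    have hstepB : step p B = 0 := if_neg hpB
    rw [hstepB, zero_mul]
    apply Finset.sum_eq_zero
    intro i hi
    have hB := lt_of_not_ge hpB
    have hi1 : t (i + 1) ≤ B :=
      hM ▸ mono m le_rfl (i + 1) (Nat.succ_le_of_lt (Finset.mem_range.mp hi))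
    have hi0 : t i ≤ B := hM ▸ mono m le_rfl i (le_of_lt (Finset.mem_range.mp hi))
    rw [show step p (t (i + 1)) = 0 from if_neg (by push_neg; linarith),
      show step p (t i) = 0 from if_neg (by push_neg; linarith)]
    ring

lemma exists_fine_partition {A B δ : ℝ} (hAB : A < B) (hδ : 0 < δ) :
    ∃ (m : ℕ) (t ξ : ℕ → ℝ), IsTaggedPartition A B m t ξ ∧ ∀ i < m, t (i + 1) - t i < δ := by
  set m : ℕ := ⌊(B - A) / δ⌋₊ + 1 with hm
  have hm0 : 0 < m := Nat.succ_pos _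
  have hmR : (0:ℝ) < m := by positivity
  set h : ℝ := (B - A) / m with hh
  have hBA : 0 < B - A := by linarith
  have hhpos : 0 < h := by positivity
  have hhδ : h < δ := by
    rw [hh, div_lt_iff₀ hmR]
    have := Nat.lt_floor_add_one ((B - A) / δ)
    calc B - A = ((B - A) / δ) * δ := by field_simp
    _ < (⌊(B - A) / δ⌋₊ + 1) * δ := by
        apply mul_lt_mul_of_pos_right this hδ
    _ = δ * m := by push_cast [hm]; ring
  refine ⟨m, fun i => A + i * h, fun i => A + i * h, ⟨hm0, by simp, ?_, ?_, ?_⟩, ?_⟩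
  · rw [hh]; field_simp; ring
  · intro i _
    show A + (i:ℝ) * h < A + ((i+1:ℕ):ℝ) * h
    have : (i:ℝ) < ((i+1:ℕ):ℝ) := by push_cast; linarith
    nlinarith [mul_lt_mul_of_pos_right this hhpos]
  · intro i _
    refine ⟨le_rfl, ?_⟩
    show A + (i:ℝ) * h ≤ A + ((i+1:ℕ):ℝ) * h
    have : (i:ℝ) ≤ ((i+1:ℕ):ℝ) := by push_cast; linarith
    nlinarith [mul_le_mul_of_nonneg_right this hhpos.le]
  · intro i _
    show A + ((i+1:ℕ):ℝ) * h - (A + (i:ℝ) * h) < δ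
    have : ((i+1:ℕ):ℝ) = (i:ℝ) + 1 := by push_cast; ring
    rw [this]
    calc A + ((i:ℝ) + 1) * h - (A + (i:ℝ) * h) = h := by ring
    _ < δ := hhδ

lemma hasRS_unique {f g : ℝ → ℝ} {A B I₁ I₂ : ℝ} (hAB : A < B)
    (h1 : HasRSIntegral f g A B I₁) (h2 : HasRSIntegral f g A B I₂) : I₁ = I₂ := by
  by_contra hne
  have hε : 0 < |I₁ - I₂| / 2 := by
    have : I₁ - I₂ ≠ 0 := sub_ne_zero.mpr hne
    positivity
  obtain ⟨δ₁, hδ₁, H₁⟩ := h1 _ hε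
  obtain ⟨δ₂, hδ₂, H₂⟩ := h2 _ hε
  obtain ⟨m, t, ξ, hpart, hmesh⟩ := exists_fine_partition hAB (lt_min hδ₁ hδ₂)
  have A1 := H₁ m t ξ hpart (fun i hi => (hmesh i hi).trans_le (min_le_left _ _))
  have A2 := H₂ m t ξ hpart (fun i hi => (hmesh i hi).trans_le (min_le_right _ _))
  have : |I₁ - I₂| ≤ |RSSum f g m t ξ - I₁| + |RSSum f g m t ξ - I₂| := by
    calc |I₁ - I₂| = |(RSSum f g m t ξ - I₂) - (RSSum f g m t ξ - I₁)| := by ring_nf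
    _ ≤ |RSSum f g m t ξ - I₂| + |RSSum f g m t ξ - I₁| := abs_sub _ _
    _ = _ := by ring
  linarith

lemma rsIntegral_eq {f g : ℝ → ℝ} {A B I : ℝ} (hAB : A < B)
    (h : HasRSIntegral f g A B I) : RSIntegral f g A B = I := by
  have hex : ∃ I', HasRSIntegral f g A B I' := ⟨I, h⟩
  rw [RSIntegral, dif_pos hex]
  exact hasRS_unique hAB hex.choose_spec h

lemma eVariationOn_sub_le {F G : ℝ → ℝ} (s : Set ℝ) :
    eVariationOn (fun x => F x - G x) s ≤ eVariationOn F s + eVariationOn G s := by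
  apply iSup_le
  rintro ⟨n, u, hu, us⟩
  calc ∑ i ∈ Finset.range n, edist (F (u (i+1)) - G (u (i+1))) (F (u i) - G (u i))
      ≤ ∑ i ∈ Finset.range n,
          (edist (F (u (i+1))) (F (u i)) + edist (G (u (i+1))) (G (u i))) := by
        apply Finset.sum_le_sum
        intro i _
        rw [edist_dist, edist_dist, edist_dist]
        calc ENNReal.ofReal (dist (F (u (i+1)) - G (u (i+1))) (F (u i) - G (u i)))
            ≤ ENNReal.ofReal (dist (F (u (i+1))) (F (u i)) + dist (G (u (i+1))) (G (u i))) :=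
              ENNReal.ofReal_le_ofReal (dist_sub_sub_le _ _ _ _)
          _ ≤ _ := ENNReal.ofReal_add_le
    _ = _ + _ := Finset.sum_add_distrib
    _ ≤ _ := add_le_add (eVariationOn.sum_le (f := F) (n := n) hu us) (eVariationOn.sum_le (f := G) (n := n) hu us)

lemma monotone_boundedVariationOn {F : ℝ → ℝ} {a b : ℝ} (hab : a ≤ b) (hF : Monotone F) :
    eVariationOn F (Set.Icc a b) ≠ ⊤ := by
  have h := (hF.monotoneOn (Set.Icc a b)).eVariationOn_le
    (Set.left_mem_Icc.mpr hab) (Set.right_mem_Icc.mpr hab)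
  rw [Set.inter_self] at h
  exact (h.trans_lt ENNReal.ofReal_lt_top).ne

lemma hasRS {a b y M : ℝ} {f : ℝ → ℝ} (e XL XU : ℕ → ℝ)
    (hy : a < y) (hyb : y ≤ b)
    (hfc : ContinuousOn f (Set.Icc a b))
    (hM : ∀ x ∈ Set.Icc a b, |f x| ≤ M)
    (he0 : ∀ k, 0 ≤ e k) (hes : Summable e)
    (hk : ∀ k, a < XL k ∧ XL k ≤ XU k ∧ XU k ≤ b) :
    HasRSIntegral f (fun x => ∑' k, e k * (step (XL k) x - step (XU k) x)) a y
      (∑' k, e k * (step (XL k) y * f (XL k) - step (XU k) y * f (XU k))) := by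
  have hM0 : 0 ≤ M := le_trans (abs_nonneg _) (hM a ⟨le_rfl, le_trans hy.le hyb⟩)
  have habs2 : ∀ p q x : ℝ, |step p x - step q x| ≤ 1 := by
    intro p q x; unfold step; split_ifs <;> norm_num
  have hws : ∀ x : ℝ, Summable (fun k => e k * (step (XL k) x - step (XU k) x)) := by
    intro x
    apply Summable.of_abs
    apply Summable.of_nonneg_of_le (fun k => abs_nonneg _) _ hes
    intro k
    rw [abs_mul, abs_of_nonneg (he0 k)]
    calc e k * |step (XL k) x - step (XU k) x| ≤ e k * 1 :=
        mul_le_mul_of_nonneg_left (habs2 _ _ _) (he0 k)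
      _ = e k := mul_one _
  intro ε hε
  set E := ∑' k, e k with hEdef
  have hEnn : 0 ≤ E := tsum_nonneg he0
  set ε₁ := ε / (4 * (E + 1)) with hε₁def
  have hε₁pos : 0 < ε₁ := by positivity
  have huc : UniformContinuousOn f (Set.Icc a b) :=
    isCompact_Icc.uniformContinuousOn_of_continuous hfc
  obtain ⟨δ, hδpos, hδ⟩ := Metric.uniformContinuousOn_iff.mp huc ε₁ hε₁pos
  refine ⟨δ, hδpos, ?_⟩
  rintro m t ξ ⟨hm, h0, hMm, hst, hξ⟩ hmesh
  have mono := part_mono hst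
  have hξmem : ∀ i, i < m → ξ i ∈ Set.Icc a b := by
    intro i hi
    obtain ⟨hi1, hi2⟩ := hξ i hi
    constructor
    · calc a = t 0 := h0.symm
        _ ≤ t i := mono i hi.le 0 (Nat.zero_le _)
        _ ≤ ξ i := hi1
    · calc ξ i ≤ t (i + 1) := hi2
        _ ≤ t m := mono m le_rfl (i + 1) (by omega)
        _ = y := hMm
        _ ≤ b := hyb
  choose jL hjL using fun k =>
    jump_sum (fun i => f (ξ i)) h0 hMm hst (hk k).1
  choose jU hjU using fun k =>
    jump_sum (fun i => f (ξ i)) h0 hMm hst (lt_of_lt_of_le (hk k).1 (hk k).2.1)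
  set A := fun k => e k * (step (XL k) y * f (ξ (jL k)) - step (XU k) y * f (ξ (jU k))) with hAdef
  set B := fun k => e k * (step (XL k) y * f (XL k) - step (XU k) y * f (XU k)) with hBdef
  have key : ∀ (p : ℝ) (j : ℕ), a < p → (p ≤ y → j < m ∧ t j < p ∧ p ≤ t (j + 1)) →
      |step p y * f (ξ j) - step p y * f p| ≤ ε₁ ∧ |step p y * f (ξ j)| ≤ M ∧
        |step p y * f p| ≤ M := by
    intro p j hap hj
    by_cases hpy : p ≤ y
    · obtain ⟨hjm, htj, htj1⟩ := hj hpy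
      have hstep1 : step p y = 1 := if_pos hpy
      rw [hstep1, one_mul, one_mul]
      have hpmem : p ∈ Set.Icc a b := ⟨hap.le, hpy.trans hyb⟩
      have hξj := hξ j hjm
      have hmj := hmesh j hjm
      have hdist : dist (ξ j) p < δ := by
        rw [Real.dist_eq, abs_lt]
        constructor
        · have := hξj.1; linarith
        · have := hξj.2; linarith
      refine ⟨?_, hM _ (hξmem j hjm), hM _ hpmem⟩
      have := hδ (ξ j) (hξmem j hjm) p hpmem hdist
      rw [Real.dist_eq] at this
      exact le_of_lt this
    · have hstep0 : step p y = 0 := if_neg hpy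
      rw [hstep0, zero_mul, zero_mul]
      norm_num [hM0, hε₁pos.le]
  have keyL := fun k => key (XL k) (jL k) (hk k).1 (hjL k).1
  have keyU := fun k => key (XU k) (jU k) ((hk k).1.trans_le (hk k).2.1) (hjU k).1
  have hABc : ∀ k, |A k - B k| ≤ 2 * ε₁ * e k := by
    intro k
    have hrw : A k - B k = e k * ((step (XL k) y * f (ξ (jL k)) - step (XL k) y * f (XL k)) -
        (step (XU k) y * f (ξ (jU k)) - step (XU k) y * f (XU k))) := by
      rw [hAdef, hBdef]; ring
    rw [hrw, abs_mul, abs_of_nonneg (he0 k)]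
    calc e k * |_| ≤ e k * (ε₁ + ε₁) := by
          apply mul_le_mul_of_nonneg_left _ (he0 k)
          exact le_trans (abs_sub _ _) (add_le_add (keyL k).1 (keyU k).1)
      _ = 2 * ε₁ * e k := by ring
  have hAabs : ∀ k, |A k| ≤ 2 * M * e k := by
    intro k
    rw [hAdef, abs_mul, abs_of_nonneg (he0 k)]
    calc e k * |_| ≤ e k * (M + M) := by
          apply mul_le_mul_of_nonneg_left _ (he0 k)
          exact le_trans (abs_sub _ _) (add_le_add (keyL k).2.1 (keyU k).2.1)
      _ = 2 * M * e k := by ring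
  have hBabs : ∀ k, |B k| ≤ 2 * M * e k := by
    intro k
    rw [hBdef, abs_mul, abs_of_nonneg (he0 k)]
    calc e k * |_| ≤ e k * (M + M) := by
          apply mul_le_mul_of_nonneg_left _ (he0 k)
          exact le_trans (abs_sub _ _) (add_le_add (keyL k).2.2 (keyU k).2.2)
      _ = 2 * M * e k := by ring
  have hAs : Summable A :=
    Summable.of_abs (Summable.of_nonneg_of_le (fun k => abs_nonneg _) hAabs (hes.mul_left (2 * M)))
  have hBs : Summable B :=
    Summable.of_abs (Summable.of_nonneg_of_le (fun k => abs_nonneg _) hBabs (hes.mul_left (2 * M)))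
  have hABs : Summable (fun k => |A k - B k|) :=
    Summable.of_nonneg_of_le (fun k => abs_nonneg _) hABc (hes.mul_left (2 * ε₁))
  have hRS : RSSum f (fun x => ∑' k, e k * (step (XL k) x - step (XU k) x)) m t ξ
      = ∑' k, A k := by
    have hDs : ∀ i, Summable (fun k => f (ξ i) *
        (e k * ((step (XL k) (t (i + 1)) - step (XU k) (t (i + 1))) -
          (step (XL k) (t i) - step (XU k) (t i))))) := by
      intro i
      apply Summable.mul_left
      exact ((hws (t (i + 1))).sub (hws (t i))).congr (fun k => by ring)
    calc RSSum f (fun x => ∑' k, e k * (step (XL k) x - step (XU k) x)) m t ξ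
        = ∑ i ∈ Finset.range m, f (ξ i) *
            ((∑' k, e k * (step (XL k) (t (i + 1)) - step (XU k) (t (i + 1)))) -
              (∑' k, e k * (step (XL k) (t i) - step (XU k) (t i)))) := rfl
      _ = ∑ i ∈ Finset.range m, ∑' k, f (ξ i) *
            (e k * ((step (XL k) (t (i + 1)) - step (XU k) (t (i + 1))) -
              (step (XL k) (t i) - step (XU k) (t i)))) := by
          apply Finset.sum_congr rfl; intro i _
          rw [← Summable.tsum_sub (hws (t (i + 1))) (hws (t i)), ← tsum_mul_left]
          apply tsum_congr; intro k; ring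
      _ = ∑' k, ∑ i ∈ Finset.range m, f (ξ i) *
            (e k * ((step (XL k) (t (i + 1)) - step (XU k) (t (i + 1))) -
              (step (XL k) (t i) - step (XU k) (t i)))) := (Summable.tsum_finsetSum (fun i _ => hDs i)).symm
      _ = ∑' k, A k := by
          apply tsum_congr; intro k
          calc ∑ i ∈ Finset.range m, f (ξ i) *
                (e k * ((step (XL k) (t (i + 1)) - step (XU k) (t (i + 1))) -
                  (step (XL k) (t i) - step (XU k) (t i))))
              = ∑ i ∈ Finset.range m,
                  (e k * (f (ξ i) * (step (XL k) (t (i + 1)) - step (XL k) (t i))) -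
                    e k * (f (ξ i) * (step (XU k) (t (i + 1)) - step (XU k) (t i)))) :=
                Finset.sum_congr rfl (fun i _ => by ring)
            _ = e k * (∑ i ∈ Finset.range m, f (ξ i) * (step (XL k) (t (i + 1)) - step (XL k) (t i)))
                - e k * (∑ i ∈ Finset.range m, f (ξ i) * (step (XU k) (t (i + 1)) - step (XU k) (t i))) := by
                rw [Finset.sum_sub_distrib, Finset.mul_sum, Finset.mul_sum]
            _ = e k * (step (XL k) y * f (ξ (jL k))) - e k * (step (XU k) y * f (ξ (jU k))) := by
                rw [(hjL k).2, (hjU k).2]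
            _ = A k := by rw [hAdef]; ring
  rw [hRS, ← Summable.tsum_sub hAs hBs]
  calc |∑' k, (A k - B k)| ≤ ∑' k, |A k - B k| := by
        simpa using norm_tsum_le_tsum_norm (f := fun k => A k - B k) (by simpa using hABs)
    _ ≤ ∑' k, 2 * ε₁ * e k := Summable.tsum_le_tsum hABc hABs (hes.mul_left (2 * ε₁))
    _ = 2 * ε₁ * E := tsum_mul_left
    _ < ε := by
        rw [hε₁def]
        have h4 : (0:ℝ) < 4 * (E + 1) := by positivity
        calc 2 * (ε / (4 * (E + 1))) * E = ε * (2 * E) / (4 * (E + 1)) := by ring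
          _ < ε := by rw [div_lt_iff₀ h4]; nlinarith

end StmtZero


/-- Theorem 2 of the paper: if a continuous positive `f` on `[a, b]`
oscillates by at least `α n^{-γ}` along sequences `x̲ₙ < x̄ₙ` accumulating at `a`, then there is
a non-negative function `g` of bounded variation with `g a = 0` whose Riemann–Stieltjes integral
`∫_a^y f dg` is strictly negative for every `y ∈ (a, b]`. -/
theorem stmt_0 (a b α γ : ℝ) (f : ℝ → ℝ) (xl xu : ℕ → ℝ)
    (hf_cont : ContinuousOn f (Set.Icc a b))
    (hf_pos : ∀ x ∈ Set.Icc a b, 0 < f x)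
    (hα : 0 < α) (hγ : γ ∈ Set.Ioo (0 : ℝ) 1)
    (h_lt : ∀ n : ℕ, 1 ≤ n → a < xl n)
    (h_pair : ∀ n : ℕ, 1 ≤ n → xl n < xu n)
    (h_order : ∀ n : ℕ, 1 ≤ n → xu (n + 1) < xl n)
    (h_top : xu 1 ≤ b)
    (h_lim : Filter.Tendsto xu Filter.atTop (nhds a))
    (h_osc : ∀ n : ℕ, 1 ≤ n → α * (n : ℝ) ^ (-γ) ≤ f (xu n) - f (xl n)) :
    ∃ g : ℝ → ℝ, (∀ x ∈ Set.Icc a b, 0 ≤ g x) ∧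
      BoundedVariationOn g (Set.Icc a b) ∧ g a = 0 ∧
      ∀ y ∈ Set.Ioc a b, RSIntegral f g a y < 0 := by
  classical
  obtain ⟨hγ0, hγ1⟩ := hγ
  have hab : a ≤ b :=
    le_trans (h_lt 1 le_rfl).le (le_trans (h_pair 1 le_rfl).le h_top)
  -- a uniform bound for f
  obtain ⟨M₀, hM₀⟩ := isCompact_Icc.exists_bound_of_continuousOn hf_cont
  set M := max M₀ 1 with hMdef
  have hM1 : (1:ℝ) ≤ M := le_max_right _ _
  have hMpos : (0:ℝ) < M := lt_of_lt_of_le one_pos hM1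
  have hM : ∀ x ∈ Set.Icc a b, |f x| ≤ M := fun x hx =>
    le_trans (by simpa [Real.norm_eq_abs] using hM₀ x hx) (le_max_left _ _)
  -- xu is antitone on indices ≥ 1
  have hanti : ∀ i j : ℕ, 1 ≤ i → i ≤ j → xu j ≤ xu i := by
    intro i j hi hij
    induction j with
    | zero => omega
    | succ k ih =>
      rcases eq_or_lt_of_le hij with h | h
      · rw [← h]
      · have hik : i ≤ k := by omega
        have h1 : 1 ≤ k := le_trans hi hik
        calc xu (k + 1) ≤ xl k := (h_order k h1).le
          _ ≤ xu k := (h_pair k h1).le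
          _ ≤ xu i := ih hik
  have hxub : ∀ n : ℕ, 1 ≤ n → xu n ≤ b := fun n hn => (hanti 1 n le_rfl hn).trans h_top
  -- choose the starting index N
  have h1γ : 0 < 1 - γ := by linarith
  have h2γpos : (0:ℝ) < 2 ^ (-γ) := Real.rpow_pos_of_pos two_pos _
  have htend : Filter.Tendsto (fun n : ℕ => (n:ℝ) ^ (1 - γ)) Filter.atTop Filter.atTop :=
    (tendsto_rpow_atTop h1γ).comp tendsto_natCast_atTop_atTop
  obtain ⟨N₀, hN₀⟩ := Filter.eventually_atTop.mp
    (htend.eventually_gt_atTop ((16 * M) / (α * 2 ^ (-γ))))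
  set N := max N₀ 1 with hNdef
  have hN1 : 1 ≤ N := le_max_right _ _
  have hNbig : ∀ n : ℕ, N ≤ n → (16 * M) / (α * 2 ^ (-γ)) < (n:ℝ) ^ (1 - γ) :=
    fun n hn => hN₀ n (le_trans (le_max_left _ _) hn)
  -- re-indexed sequences and weights
  set XL := fun k : ℕ => xl (N + k) with hXLdef
  set XU := fun k : ℕ => xu (N + k) with hXUdef
  set e := fun k : ℕ => (((N + k : ℕ) : ℝ) ^ 2)⁻¹ with hedef
  have hNk : ∀ k : ℕ, 1 ≤ N + k := fun k => le_trans hN1 (Nat.le_add_right _ _)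
  have hNkR : ∀ k : ℕ, (1:ℝ) ≤ ((N + k : ℕ) : ℝ) := fun k => by exact_mod_cast hNk k
  have he0 : ∀ k, 0 ≤ e k := fun k => by
    have := hNkR k; rw [hedef]; positivity
  have hes : Summable e := by
    have hbase : Summable (fun n : ℕ => ((n:ℝ) ^ 2)⁻¹) := by
      have := (Real.summable_one_div_nat_pow (p := 2)).mpr one_lt_two
      simpa [one_div] using this
    rw [hedef]
    exact ((summable_nat_add_iff N).mpr hbase).congr (fun k => by rw [Nat.add_comm])
  have hkprop : ∀ k : ℕ, a < XL k ∧ XL k ≤ XU k ∧ XU k ≤ b := fun k =>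
    ⟨h_lt _ (hNk k), (h_pair _ (hNk k)).le, hxub _ (hNk k)⟩
  -- the function g
  refine ⟨fun x => ∑' k, e k * (StmtZero.step (XL k) x - StmtZero.step (XU k) x),
    ?_, ?_, ?_, ?_⟩
  · -- nonnegativity
    intro x _
    apply tsum_nonneg
    intro k
    exact mul_nonneg (he0 k) (sub_nonneg.mpr (StmtZero.step_anti x (hkprop k).2.1))
  · -- bounded variation
    have hsumL : ∀ x : ℝ, Summable (fun k => e k * StmtZero.step (XL k) x) := by
      intro x
      apply Summable.of_nonneg_of_le
        (fun k => mul_nonneg (he0 k) (StmtZero.step_nonneg _ _)) _ hes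
      intro k
      calc e k * StmtZero.step (XL k) x ≤ e k * 1 :=
          mul_le_mul_of_nonneg_left (StmtZero.step_le_one _ _) (he0 k)
        _ = e k := mul_one _
    have hsumU : ∀ x : ℝ, Summable (fun k => e k * StmtZero.step (XU k) x) := by
      intro x
      apply Summable.of_nonneg_of_le
        (fun k => mul_nonneg (he0 k) (StmtZero.step_nonneg _ _)) _ hes
      intro k
      calc e k * StmtZero.step (XU k) x ≤ e k * 1 :=
          mul_le_mul_of_nonneg_left (StmtZero.step_le_one _ _) (he0 k)
        _ = e k := mul_one _
    have hGup : Monotone (fun x => ∑' k, e k * StmtZero.step (XL k) x) := by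
      intro x x' hxx'
      exact Summable.tsum_le_tsum
        (fun k => mul_le_mul_of_nonneg_left (StmtZero.step_mono _ hxx') (he0 k))
        (hsumL x) (hsumL x')
    have hGdn : Monotone (fun x => ∑' k, e k * StmtZero.step (XU k) x) := by
      intro x x' hxx'
      exact Summable.tsum_le_tsum
        (fun k => mul_le_mul_of_nonneg_left (StmtZero.step_mono _ hxx') (he0 k))
        (hsumU x) (hsumU x')
    have hgeq : (fun x => ∑' k, e k * (StmtZero.step (XL k) x - StmtZero.step (XU k) x)) =
        fun x => (∑' k, e k * StmtZero.step (XL k) x) - ∑' k, e k * StmtZero.step (XU k) x := by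
      funext x
      rw [← Summable.tsum_sub (hsumL x) (hsumU x)]
      apply tsum_congr; intro k; ring
    rw [BoundedVariationOn, hgeq]
    have hle := StmtZero.eVariationOn_sub_le
      (F := fun x => ∑' k, e k * StmtZero.step (XL k) x)
      (G := fun x => ∑' k, e k * StmtZero.step (XU k) x) (Set.Icc a b)
    intro htop
    rw [htop] at hle
    exact (ENNReal.add_ne_top.mpr
      ⟨StmtZero.monotone_boundedVariationOn hab hGup,
        StmtZero.monotone_boundedVariationOn hab hGdn⟩) (top_le_iff.mp hle)
  · -- g a = 0
    have : ∀ k : ℕ, e k * (StmtZero.step (XL k) a - StmtZero.step (XU k) a) = 0 := by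
      intro k
      have h1 : StmtZero.step (XL k) a = 0 := if_neg (not_le.mpr (hkprop k).1)
      have h2 : StmtZero.step (XU k) a = 0 :=
        if_neg (not_le.mpr ((hkprop k).1.trans_le (hkprop k).2.1))
      rw [h1, h2]; ring
    show (∑' k, e k * (StmtZero.step (XL k) a - StmtZero.step (XU k) a)) = 0
    rw [tsum_congr this, tsum_zero]
  · -- negativity of the integral
    rintro y ⟨hya, hyb⟩
    have hRS := StmtZero.hasRS e XL XU hya hyb hf_cont hM he0 hes hkprop
    rw [StmtZero.rsIntegral_eq hya hRS]
    -- bound the sum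
    set T := fun k => e k * (StmtZero.step (XL k) y * f (XL k) -
      StmtZero.step (XU k) y * f (XU k)) with hTdef
    have hfmem : ∀ k, XL k ∈ Set.Icc a b ∧ XU k ∈ Set.Icc a b := by
      intro k
      obtain ⟨h1, h2, h3⟩ := hkprop k
      exact ⟨⟨h1.le, (h2.trans h3)⟩, ⟨(h1.trans_le h2).le, h3⟩⟩
    -- find the first pair below y
    have hbelow : ∃ k, XU k ≤ y := by
      obtain ⟨n₀, hn₀⟩ := Filter.eventually_atTop.mp (h_lim.eventually_lt_const hya)
      exact ⟨n₀, (hn₀ (N + n₀) (by omega)).le⟩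
    obtain ⟨n, hn, hmin⟩ : ∃ n, XU n ≤ y ∧ ∀ k, k < n → y < XU k :=
      ⟨Nat.find hbelow, Nat.find_spec hbelow, fun k hk =>
        lt_of_not_ge (Nat.find_min hbelow hk)⟩
    set nA : ℝ := ((N + n : ℕ) : ℝ) with hnAdef
    have hnA1 : (1:ℝ) ≤ nA := hNkR n
    have hnApos : (0:ℝ) < nA := lt_of_lt_of_le one_pos hnA1
    -- per-term facts
    have hT_ge : ∀ k, n ≤ k → T k ≤ -(α * (((N + k : ℕ) : ℝ) ^ (-γ)) * e k) := by
      intro k hk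
      have hXUk : XU k ≤ y := le_trans (hanti (N + n) (N + k) (hNk n) (by omega)) hn
      have hXLk : XL k ≤ y := le_trans (hkprop k).2.1 hXUk
      have h1 : StmtZero.step (XL k) y = 1 := if_pos hXLk
      have h2 : StmtZero.step (XU k) y = 1 := if_pos hXUk
      have hosc := h_osc (N + k) (hNk k)
      rw [hTdef]
      simp only [h1, h2, one_mul]
      calc e k * (f (XL k) - f (XU k)) ≤ e k * (-(α * ((N + k : ℕ) : ℝ) ^ (-γ))) := by
            apply mul_le_mul_of_nonneg_left _ (he0 k)
            rw [hXLdef, hXUdef]; linarith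
        _ = -(α * (((N + k : ℕ) : ℝ) ^ (-γ)) * e k) := by ring
    have hT_eq0 : ∀ k, k + 1 < n → T k = 0 := by
      intro k hk
      have h2 : y < XU k := hmin k (by omega)
      have h1 : y < XL k := by
        have := hmin (k + 1) hk
        have horder := h_order (N + k) (hNk k)
        have : XU (k + 1) < XL k := horder
        linarith [hmin (k + 1) hk]
      rw [hTdef]
      simp only [if_neg (not_le.mpr h1), if_neg (not_le.mpr h2), StmtZero.step]
      ring
    have hT_abs : ∀ k, |T k| ≤ 2 * M * e k := by
      intro k
      rw [hTdef, abs_mul, abs_of_nonneg (he0 k)]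
      have b1 : |StmtZero.step (XL k) y * f (XL k)| ≤ M :=
        StmtZero.abs_step_mul_le (hM _ (hfmem k).1)
      have b2 : |StmtZero.step (XU k) y * f (XU k)| ≤ M :=
        StmtZero.abs_step_mul_le (hM _ (hfmem k).2)
      calc e k * |_| ≤ e k * (M + M) := by
            apply mul_le_mul_of_nonneg_left _ (he0 k)
            exact le_trans (abs_sub _ _) (add_le_add b1 b2)
        _ = 2 * M * e k := by ring
    have hTs : Summable T :=
      Summable.of_abs (Summable.of_nonneg_of_le (fun k => abs_nonneg _) hT_abs
        (hes.mul_left (2 * M)))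
    set R := n + (N + n) with hRdef
    have hsplit := (Summable.sum_add_tsum_subtype_compl hTs (Finset.range R)).symm
    -- the tail is nonpositive
    have htail : ∑' (k : {x : ℕ // x ∉ Finset.range R}), T k ≤ 0 := by
      apply tsum_nonpos
      rintro ⟨k, hk⟩
      have hk' : n ≤ k := by
        simp only [Finset.mem_range, not_lt] at hk; omega
      calc T k ≤ -(α * (((N + k : ℕ) : ℝ) ^ (-γ)) * e k) := hT_ge k hk'
        _ ≤ 0 := by
          have h1 : (0:ℝ) ≤ ((N + k : ℕ) : ℝ) ^ (-γ) := Real.rpow_nonneg (by positivity) _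
          have h2 := mul_nonneg (mul_nonneg hα.le h1) (he0 k)
          linarith
    -- head: split into [0, n) and [n, R)
    have hhead1 : ∑ k ∈ Finset.Ico 0 n, T k ≤ M * (4 / nA ^ 2) := by
      rcases Nat.eq_zero_or_pos n with hn0 | hn0
      · rw [hn0]
        simp only [Finset.Ico_self, Finset.sum_empty]
        positivity
      · have hn' : n = (n - 1) + 1 := by omega
        rw [← Finset.range_eq_Ico, hn', Finset.sum_range_succ]
        have hz : ∑ k ∈ Finset.range (n - 1), T k = 0 :=
          Finset.sum_eq_zero (fun k hk => hT_eq0 k (by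
            simp only [Finset.mem_range] at hk; omega))
        rw [hz, zero_add]
        -- T (n-1) ≤ M * e (n-1) ≤ M * (4 / nA^2)
        have h2 : StmtZero.step (XU (n - 1)) y = 0 :=
          if_neg (not_le.mpr (hmin (n - 1) (by omega)))
        have hTn1 : T (n - 1) ≤ M * e (n - 1) := by
          rw [hTdef]
          simp only [h2, zero_mul, sub_zero]
          calc e (n - 1) * (StmtZero.step (XL (n - 1)) y * f (XL (n - 1)))
              ≤ e (n - 1) * M := by
                apply mul_le_mul_of_nonneg_left _ (he0 _)
                calc StmtZero.step (XL (n - 1)) y * f (XL (n - 1))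
                    ≤ |StmtZero.step (XL (n - 1)) y * f (XL (n - 1))| := le_abs_self _
                  _ ≤ M := StmtZero.abs_step_mul_le (hM _ (hfmem (n - 1)).1)
            _ = M * e (n - 1) := by ring
        have he_le : e (n - 1) ≤ 4 / nA ^ 2 := by
          simp only [hedef]
          have hcast : ((N + (n - 1) : ℕ) : ℝ) = nA - 1 := by
            rw [hnAdef]
            have : N + (n - 1) = (N + n) - 1 := by omega
            rw [this]
            have h1 : (1:ℕ) ≤ N + n := hNk n
            push_cast [Nat.cast_sub h1]
            ring
          rw [hcast]
          have h2nA : 2 ≤ nA := by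
            rw [hnAdef]
            have : (2:ℕ) ≤ N + n := by omega
            exact_mod_cast this
          have hpos1 : (0:ℝ) < (nA - 1) ^ 2 := by nlinarith
          rw [← one_div, div_le_div_iff₀ hpos1 (by positivity)]
          nlinarith
        calc T (n - 1) ≤ M * e (n - 1) := hTn1
          _ ≤ M * (4 / nA ^ 2) := mul_le_mul_of_nonneg_left he_le hMpos.le
    have hhead2 : ∑ k ∈ Finset.Ico n R, T k ≤
        nA * (-(α * ((2 * nA) ^ (-γ)) * (4 * nA ^ 2)⁻¹)) := by
      have hperk : ∀ k ∈ Finset.Ico n R,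
          T k ≤ -(α * ((2 * nA) ^ (-γ)) * (4 * nA ^ 2)⁻¹) := by
        intro k hk
        obtain ⟨hk1, hk2⟩ := Finset.mem_Ico.mp hk
        refine le_trans (hT_ge k hk1) ?_
        have hpos : (0:ℝ) < ((N + k : ℕ) : ℝ) := lt_of_lt_of_le one_pos (hNkR k)
        have hle : ((N + k : ℕ) : ℝ) ≤ 2 * nA := by
          rw [hnAdef]
          have h1 : (N + k : ℕ) ≤ 2 * (N + n) := by omega
          calc ((N + k : ℕ) : ℝ) ≤ ((2 * (N + n) : ℕ) : ℝ) := by exact_mod_cast h1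
            _ = 2 * ((N + n : ℕ) : ℝ) := by push_cast; ring
        have hr1 : (2 * nA) ^ (-γ) ≤ ((N + k : ℕ) : ℝ) ^ (-γ) :=
          Real.rpow_le_rpow_of_nonpos hpos hle (by linarith)
        have hr2 : (4 * nA ^ 2)⁻¹ ≤ e k := by
          simp only [hedef]
          rw [inv_le_inv₀ (by positivity) (by positivity)]
          nlinarith
        have hcomb : α * ((2 * nA) ^ (-γ)) * (4 * nA ^ 2)⁻¹ ≤
            α * (((N + k : ℕ) : ℝ) ^ (-γ)) * e k := by
          apply mul_le_mul (mul_le_mul le_rfl hr1 (by positivity) hα.le) hr2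
            (by positivity) (by positivity)
        linarith
      refine le_trans (Finset.sum_le_card_nsmul _ _ _ hperk) ?_
      have hRn : R - n = N + n := by omega
      rw [Nat.card_Ico, hRn, nsmul_eq_mul, hnAdef]
    -- final numeric combination
    have h2rw : ((2 * nA) ^ (-γ) : ℝ) = 2 ^ (-γ) * nA ^ (-γ) :=
      Real.mul_rpow (by norm_num) hnApos.le
    have h3rw : nA ^ (1 - γ) = nA * nA ^ (-γ) := by
      rw [show (1:ℝ) - γ = 1 + (-γ) by ring, Real.rpow_add hnApos, Real.rpow_one]
    have hbig : 16 * M < α * 2 ^ (-γ) * nA ^ (1 - γ) := by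
      have := hNbig (N + n) (Nat.le_add_right _ _)
      rw [div_lt_iff₀ (by positivity)] at this
      calc 16 * M < ((N + n : ℕ) : ℝ) ^ (1 - γ) * (α * 2 ^ (-γ)) := this
        _ = α * 2 ^ (-γ) * nA ^ (1 - γ) := by rw [hnAdef]; ring
    have heq : M * (4 / nA ^ 2) + nA * (-(α * ((2 * nA) ^ (-γ)) * (4 * nA ^ 2)⁻¹))
        = (16 * M - α * 2 ^ (-γ) * nA ^ (1 - γ)) / (4 * nA ^ 2) := by
      rw [h2rw, h3rw]
      have hnA0 : nA ≠ 0 := ne_of_gt hnApos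
      field_simp
      ring
    have hfin : M * (4 / nA ^ 2) + nA * (-(α * ((2 * nA) ^ (-γ)) * (4 * nA ^ 2)⁻¹)) < 0 := by
      rw [heq]
      apply div_neg_of_neg_of_pos (by linarith) (by positivity)
    calc (∑' k, T k) = ∑ k ∈ Finset.range R, T k
          + ∑' (k : {x : ℕ // x ∉ Finset.range R}), T k := hsplit
      _ = (∑ k ∈ Finset.Ico 0 n, T k + ∑ k ∈ Finset.Ico n R, T k)
          + ∑' (k : {x : ℕ // x ∉ Finset.range R}), T k := by
          rw [Finset.range_eq_Ico, Finset.sum_Ico_consecutive _ (Nat.zero_le n) (by omega)]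
      _ ≤ (M * (4 / nA ^ 2) + nA * (-(α * ((2 * nA) ^ (-γ)) * (4 * nA ^ 2)⁻¹))) + 0 :=
          add_le_add (add_le_add hhead1 hhead2) htail
      _ = M * (4 / nA ^ 2) + nA * (-(α * ((2 * nA) ^ (-γ)) * (4 * nA ^ 2)⁻¹)) := by ring
      _ < 0 := hfin
end

section
/- Let f : [a,b] → (0,∞) be a continuous function of bounded variation and let g : [a,b] → [0,∞) be a non-vanishing function of bounded variation with g(a) = 0. Then there exists y ∈ (a,b] such that the Riemann–Stieltjes integral ∫_a^y f(x) dg(x) is strictly positive. -/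
open Set Filter MeasureTheory
open scoped ENNReal

namespace RSAux



lemma tele_Ico (G : ℕ → ℝ) {p q : ℕ} (h : p ≤ q) :
    ∑ j ∈ Finset.Ico p q, (G (j + 1) - G j) = G q - G p := by
  induction q, h using Nat.le_induction with
  | base => simp
  | succ n hn ih => rw [Finset.sum_Ico_succ_top (by omega), ih]; ring

lemma sum_blocks {M : Type*} [AddCommMonoid M] (h : ℕ → M) (k : ℕ → ℕ)
    (hk : ∀ i, k i ≤ k (i + 1)) (hk0 : k 0 = 0) (m : ℕ) :
    ∑ j ∈ Finset.range (k m), h j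
      = ∑ i ∈ Finset.range m, ∑ j ∈ Finset.Ico (k i) (k (i + 1)), h j := by
  induction m with
  | zero => simp [hk0]
  | succ n ih =>
    rw [Finset.sum_range_succ, ← ih, Finset.range_eq_Ico, Finset.range_eq_Ico]
    exact (Finset.sum_Ico_consecutive h (Nat.zero_le (k n)) (hk n)).symm

lemma real_sum_le_evar (f : ℝ → ℝ) {s : Set ℝ} (hs : eVariationOn f s ≠ ⊤) {p q : ℕ}
    {u : ℕ → ℝ} (hu : MonotoneOn u (Icc p q)) (us : ∀ i ∈ Icc p q, u i ∈ s) :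
    ∑ i ∈ Finset.Ico p q, |f (u (i + 1)) - f (u i)| ≤ (eVariationOn f s).toReal := by
  have h := eVariationOn.sum_le_of_monotoneOn_Icc (f := f) hu us
  rw [← ENNReal.ofReal_le_iff_le_toReal hs]
  rw [ENNReal.ofReal_sum_of_nonneg (fun i _ => abs_nonneg _)]
  refine le_trans (le_of_eq ?_) h
  exact Finset.sum_congr rfl fun i _ => by rw [edist_dist, Real.dist_eq]

lemma part_t_mono {a b : ℝ} {m : ℕ} {t ξ : ℕ → ℝ} (h : IsTaggedPartition a b m t ξ) :
    ∀ ⦃i j⦄, i ≤ j → j ≤ m → t i ≤ t j := by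
  obtain ⟨hm, h0, hmb, hstep, htag⟩ := h
  intro i j hij hjm
  induction j with
  | zero => have : i = 0 := by omega
            rw [this]
  | succ n ih =>
    rcases Nat.eq_or_lt_of_le hij with rfl | hlt
    · exact le_rfl
    · exact le_trans (ih (by omega) (by omega)) (le_of_lt (hstep n (by omega)))

lemma ref_est (f g : ℝ → ℝ) (a y : ℝ) {ε : ℝ} (hε : 0 ≤ ε)
    (hVg : eVariationOn g (Icc a y) ≠ ⊤)
    {m : ℕ} {t ξ : ℕ → ℝ} (hP : IsTaggedPartition a y m t ξ)
    {c : ℕ} {w ζ : ℕ → ℝ} (hQ : IsTaggedPartition a y c w ζ)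
    {k : ℕ → ℕ} (hk0 : k 0 = 0) (hkm : k m = c) (hkmono : ∀ i, k i ≤ k (i + 1))
    (hkw : ∀ i ≤ m, w (k i) = t i)
    (hclose : ∀ i < m, ∀ j, k i ≤ j → j < k (i + 1) → |f (ζ j) - f (ξ i)| ≤ ε) :
    |RSSum f g c w ζ - RSSum f g m t ξ| ≤ ε * (eVariationOn g (Icc a y)).toReal := by
  have hQblocks : RSSum f g c w ζ
      = ∑ i ∈ Finset.range m, ∑ j ∈ Finset.Ico (k i) (k (i + 1)),
          f (ζ j) * (g (w (j + 1)) - g (w j)) := by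
    rw [RSSum, ← hkm]; exact sum_blocks _ k hkmono hk0 m
  have hPblocks : RSSum f g m t ξ
      = ∑ i ∈ Finset.range m, ∑ j ∈ Finset.Ico (k i) (k (i + 1)),
          f (ξ i) * (g (w (j + 1)) - g (w j)) := by
    refine Finset.sum_congr rfl fun i hi => ?_
    rw [Finset.mem_range] at hi
    rw [← Finset.mul_sum, tele_Ico (fun j => g (w j)) (hkmono i),
      hkw i (by omega), hkw (i+1) (by omega)]
  have hwmono : MonotoneOn w (Icc (0:ℕ) c) := by
    intro i hi j hj hij
    exact part_t_mono hQ hij hj.2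
  have habs : ∑ j ∈ Finset.Ico 0 c, |g (w (j + 1)) - g (w j)|
      ≤ (eVariationOn g (Icc a y)).toReal := by
    refine real_sum_le_evar g hVg hwmono fun i hi => ?_
    constructor
    · rw [← hQ.2.1]; exact part_t_mono hQ (Nat.zero_le _) hi.2
    · rw [← hQ.2.2.1]; exact part_t_mono hQ hi.2 le_rfl
  rw [hQblocks, hPblocks, ← Finset.sum_sub_distrib]
  calc |∑ i ∈ Finset.range m, (∑ j ∈ Finset.Ico (k i) (k (i+1)),
          f (ζ j) * (g (w (j + 1)) - g (w j))
        - ∑ j ∈ Finset.Ico (k i) (k (i+1)), f (ξ i) * (g (w (j + 1)) - g (w j)))|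
      ≤ ∑ i ∈ Finset.range m, ∑ j ∈ Finset.Ico (k i) (k (i+1)),
          ε * |g (w (j + 1)) - g (w j)| := by
        refine le_trans (Finset.abs_sum_le_sum_abs _ _) (Finset.sum_le_sum fun i hi => ?_)
        rw [Finset.mem_range] at hi
        rw [← Finset.sum_sub_distrib]
        refine le_trans (Finset.abs_sum_le_sum_abs _ _) (Finset.sum_le_sum fun j hj => ?_)
        rw [Finset.mem_Ico] at hj
        rw [← sub_mul, abs_mul]
        exact mul_le_mul_of_nonneg_right (hclose i hi j hj.1 hj.2) (abs_nonneg _)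
    _ = ε * ∑ j ∈ Finset.Ico 0 c, |g (w (j + 1)) - g (w j)| := by
        rw [← Finset.range_eq_Ico, ← hkm, sum_blocks (fun j => |g (w (j+1)) - g (w j)|) k hkmono hk0 m,
          Finset.mul_sum]
        exact Finset.sum_congr rfl fun i _ => by rw [Finset.mul_sum]
    _ ≤ ε * (eVariationOn g (Icc a y)).toReal := by
        exact mul_le_mul_of_nonneg_left habs hε

lemma part_t_strict {a b : ℝ} {m : ℕ} {t ξ : ℕ → ℝ} (h : IsTaggedPartition a b m t ξ) :
    ∀ ⦃i j⦄, i < j → j ≤ m → t i < t j := by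
  intro i j hij hjm
  exact lt_of_lt_of_le (h.2.2.2.1 i (by omega)) (part_t_mono h hij hjm)

/-- Partition from a finite set of points. -/
lemma partition_of_finset {a y : ℝ} (hay : a < y) (S : Finset ℝ)
    (haS : a ∈ S) (hyS : y ∈ S) (hS : ∀ x ∈ S, x ∈ Icc a y) :
    ∃ (c : ℕ) (w : ℕ → ℝ), IsTaggedPartition a y c w w ∧ Monotone w ∧
      (∀ x ∈ S, ∃ j ≤ c, w j = x) := by
  have hN : 1 < S.card := Finset.one_lt_card.2 ⟨a, haS, y, hyS, ne_of_lt hay⟩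
  set N := S.card with hNdef
  set c := N - 1 with hcdef
  have hcN : c < N := by omega
  set e := S.orderIsoOfFin (rfl : S.card = N) with he
  have bnd : ∀ j : ℕ, min j c < N := fun j => lt_of_le_of_lt (min_le_right _ _) hcN
  set w : ℕ → ℝ := fun j => (e ⟨min j c, bnd j⟩ : ℝ) with hw
  have hwmono : Monotone w := by
    intro i j hij
    have h : (⟨min i c, bnd i⟩ : Fin N) ≤ ⟨min j c, bnd j⟩ := by
      rw [Fin.mk_le_mk]; omega
    exact e.monotone h
  have hwS : ∀ j, w j ∈ S := fun j => (e _).2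
  have hw0 : w 0 = a := by
    have h1 : a ≤ w 0 := (hS _ (hwS 0)).1
    have h2 : w 0 ≤ a := by
      have h3 : e ⟨min 0 c, bnd 0⟩ ≤ e (e.symm ⟨a, haS⟩) := by
        apply e.monotone
        rcases e.symm ⟨a, haS⟩ with ⟨v, hv⟩
        rw [Fin.mk_le_mk]; omega
      rw [OrderIso.apply_symm_apply] at h3
      exact h3
    linarith
  have hwc : w c = y := by
    have h1 : w c ≤ y := (hS _ (hwS c)).2
    have h2 : y ≤ w c := by
      have h3 : e (e.symm ⟨y, hyS⟩) ≤ e ⟨min c c, bnd c⟩ := by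
        apply e.monotone
        rcases e.symm ⟨y, hyS⟩ with ⟨v, hv⟩
        rw [Fin.mk_le_mk]; omega
      rw [OrderIso.apply_symm_apply] at h3
      exact h3
    linarith
  have hstep : ∀ j < c, w j < w (j + 1) := by
    intro j hj
    apply e.strictMono
    rw [Fin.mk_lt_mk]; omega
  refine ⟨c, w, ⟨by omega, hw0, hwc, hstep, fun j hj => ⟨le_rfl, hwmono (by omega)⟩⟩,
    hwmono, ?_⟩
  intro x hx
  refine ⟨(e.symm ⟨x, hx⟩ : Fin N).val, ?_, ?_⟩
  · have hv : (e.symm ⟨x, hx⟩ : Fin N).val < N := (e.symm ⟨x, hx⟩).2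
    omega
  · show (e ⟨min _ c, bnd _⟩ : ℝ) = x
    have hv : (e.symm ⟨x, hx⟩ : Fin N).val < N := (e.symm ⟨x, hx⟩).2
    have hmin : (⟨min (e.symm ⟨x, hx⟩ : Fin N).val c, bnd _⟩ : Fin N) = e.symm ⟨x, hx⟩ := by
      apply Fin.ext
      simp only []
      omega
    rw [hmin, OrderIso.apply_symm_apply]

/-- Index map of a refinement. -/
lemma index_map {a y : ℝ} {m : ℕ} {t ξ : ℕ → ℝ} (hP : IsTaggedPartition a y m t ξ)
    {c : ℕ} {w : ℕ → ℝ} (hW : IsTaggedPartition a y c w w) (hwmono : Monotone w)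
    (hmem : ∀ i ≤ m, ∃ j ≤ c, w j = t i) :
    ∃ k : ℕ → ℕ, k 0 = 0 ∧ k m = c ∧ (∀ i, k i ≤ k (i + 1)) ∧ (∀ i ≤ m, w (k i) = t i) ∧
      ∀ i < m, ∀ j, k i ≤ j → j < k (i + 1) →
        w j ∈ Icc (t i) (t (i + 1)) ∧ w (j + 1) ∈ Icc (t i) (t (i + 1)) := by
  have hch : ∀ i : ℕ, ∃ j ≤ c, w j = t (min i m) := fun i => hmem _ (min_le_right _ _)
  set k : ℕ → ℕ := fun i => (hch i).choose with hk
  have hkc : ∀ i, k i ≤ c := fun i => (hch i).choose_spec.1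
  have hkw' : ∀ i, w (k i) = t (min i m) := fun i => (hch i).choose_spec.2
  have hkw : ∀ i ≤ m, w (k i) = t i := by
    intro i hi; rw [hkw' i, min_eq_left hi]
  have hwinj : ∀ j j', j ≤ c → j' ≤ c → w j = w j' → j = j' := by
    intro j j' hj hj' heq
    by_contra hne
    rcases Nat.lt_or_ge j j' with h | h
    · exact absurd heq (ne_of_lt (part_t_strict hW h hj'))
    · have : j' < j := by omega
      exact absurd heq.symm (ne_of_lt (part_t_strict hW this hj))
  have hk0 : k 0 = 0 := by
    apply hwinj _ _ (hkc 0) (Nat.zero_le c)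
    rw [hkw 0 (Nat.zero_le m), hP.2.1, hW.2.1]
  have hkm : k m = c := by
    apply hwinj _ _ (hkc m) le_rfl
    rw [hkw m le_rfl, hP.2.2.1, hW.2.2.1]
  have hkmono : ∀ i, k i ≤ k (i + 1) := by
    intro i
    by_contra hlt
    push_neg at hlt
    have h1 : w (k (i+1)) < w (k i) := part_t_strict hW hlt (hkc i)
    rw [hkw' i, hkw' (i+1)] at h1
    exact absurd (part_t_mono hP (min_le_min_right m (Nat.le_succ i)) (min_le_right _ _)) (not_le.2 h1)
  refine ⟨k, hk0, hkm, hkmono, hkw, ?_⟩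
  intro i hi j hji hj1
  have h1 : t i ≤ w j := by rw [← hkw i (by omega)]; exact hwmono hji
  have h2 : w (j + 1) ≤ t (i + 1) := by rw [← hkw (i+1) (by omega)]; exact hwmono hj1
  have h3 : w j ≤ w (j + 1) := hwmono (Nat.le_succ j)
  exact ⟨⟨h1, le_trans h3 h2⟩, ⟨le_trans h1 h3, h2⟩⟩


lemma part_t_mem {a b : ℝ} {m : ℕ} {t ξ : ℕ → ℝ} (h : IsTaggedPartition a b m t ξ) :
    ∀ ⦃i⦄, i ≤ m → t i ∈ Icc a b := by
  intro i hi
  constructor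
  · rw [← h.2.1]; exact part_t_mono h (Nat.zero_le _) hi
  · rw [← h.2.2.1]; exact part_t_mono h hi le_rfl

lemma part_ξ_mem {a b : ℝ} {m : ℕ} {t ξ : ℕ → ℝ} (h : IsTaggedPartition a b m t ξ) :
    ∀ ⦃i⦄, i < m → ξ i ∈ Icc a b := by
  intro i hi
  obtain ⟨h1, h2⟩ := h.2.2.2.2 i hi
  exact ⟨le_trans (part_t_mem h (by omega)).1 h1, le_trans h2 (part_t_mem h (by omega)).2⟩

lemma exists_uniform_partition (a y : ℝ) (hay : a < y) {δ : ℝ} (hδ : 0 < δ) :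
    ∃ m t ξ, IsTaggedPartition a y m t ξ ∧ ∀ i < m, t (i + 1) - t i < δ := by
  obtain ⟨n, hn⟩ := exists_nat_gt ((y - a) / δ)
  have hn0 : 0 < n := by
    have h1 : 0 < (y - a) / δ := div_pos (by linarith) hδ
    by_contra h
    have : n = 0 := by omega
    rw [this] at hn; norm_num at hn; linarith
  set c : ℝ := (y - a) / n with hc
  have hnR : (0:ℝ) < n := by exact_mod_cast hn0
  have hcpos : 0 < c := div_pos (by linarith) hnR
  refine ⟨n, fun i => a + i * c, fun i => a + i * c, ⟨hn0, by simp, ?_, ?_, ?_⟩, ?_⟩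
  · beta_reduce; rw [hc, ← mul_div_assoc, mul_div_cancel_left₀ _ hnR.ne']; ring
  · intro i _; push_cast; nlinarith
  · intro i _; constructor <;> [skip; push_cast] <;> nlinarith
  · intro i _
    have hcδ : c < δ := by
      rw [hc, div_lt_iff₀ hnR]
      calc y - a = ((y-a)/δ) * δ := by field_simp
        _ < n * δ := by apply mul_lt_mul_of_pos_right hn hδ
        _ = δ * n := by ring
    calc a + (↑(i+1):ℝ) * c - (a + i * c) = c := by push_cast; ring
      _ < δ := hcδ

lemma two_partitions_est (f g : ℝ → ℝ) {a y : ℝ} (hay : a < y)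
    (hVg : eVariationOn g (Icc a y) ≠ ⊤) {ε δ : ℝ} (hε : 0 ≤ ε) (hδ : 0 < δ)
    (hf : ∀ x ∈ Icc a y, ∀ x' ∈ Icc a y, |x - x'| < δ → |f x - f x'| ≤ ε)
    {m : ℕ} {t ξ : ℕ → ℝ} (hP : IsTaggedPartition a y m t ξ)
    (hPm : ∀ i < m, t (i + 1) - t i < δ)
    {n : ℕ} {u ζ : ℕ → ℝ} (hQ : IsTaggedPartition a y n u ζ)
    (hQm : ∀ i < n, u (i + 1) - u i < δ) :
    |RSSum f g m t ξ - RSSum f g n u ζ| ≤ 2 * ε * (eVariationOn g (Icc a y)).toReal := by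
  set S : Finset ℝ := ((Finset.range (m+1)).image t) ∪ ((Finset.range (n+1)).image u) with hSdef
  have haS : a ∈ S := by
    apply Finset.mem_union_left
    exact Finset.mem_image.2 ⟨0, Finset.mem_range.2 (by omega), hP.2.1⟩
  have hyS : y ∈ S := by
    apply Finset.mem_union_left
    exact Finset.mem_image.2 ⟨m, Finset.mem_range.2 (by omega), hP.2.2.1⟩
  have hS : ∀ x ∈ S, x ∈ Icc a y := by
    intro x hx
    rcases Finset.mem_union.1 hx with h | h <;> obtain ⟨i, hi, rfl⟩ := Finset.mem_image.1 h
    · exact part_t_mem hP (by simpa using Nat.lt_succ_iff.1 (Finset.mem_range.1 hi))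
    · exact part_t_mem hQ (by simpa using Nat.lt_succ_iff.1 (Finset.mem_range.1 hi))
  obtain ⟨c, w, hW, hwmono, hsurj⟩ := partition_of_finset hay S haS hyS hS
  have hmemt : ∀ i ≤ m, ∃ j ≤ c, w j = t i := fun i hi => hsurj _
    (Finset.mem_union_left _ (Finset.mem_image.2 ⟨i, Finset.mem_range.2 (by omega), rfl⟩))
  have hmemu : ∀ i ≤ n, ∃ j ≤ c, w j = u i := fun i hi => hsurj _
    (Finset.mem_union_right _ (Finset.mem_image.2 ⟨i, Finset.mem_range.2 (by omega), rfl⟩))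
  obtain ⟨k, hk0, hkm, hkmono, hkw, hkblk⟩ := index_map hP hW hwmono hmemt
  obtain ⟨k', hk'0, hk'n, hk'mono, hk'w, hk'blk⟩ := index_map hQ hW hwmono hmemu
  have hcloseP : ∀ i < m, ∀ j, k i ≤ j → j < k (i + 1) → |f (w j) - f (ξ i)| ≤ ε := by
    intro i hi j hj1 hj2
    obtain ⟨hwj, _⟩ := hkblk i hi j hj1 hj2
    have hxi := hP.2.2.2.2 i hi
    have hjc : j ≤ c := by
      have h2 := (monotone_nat_of_le_succ hkmono) (show i+1 ≤ m by omega)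
      omega
    apply hf _ (part_t_mem hW hjc) _ (part_ξ_mem hP hi) ?_
    have := hPm i hi
    rw [abs_sub_lt_iff]
    constructor <;> cases hwj <;> cases hxi <;> linarith
  have hcloseQ : ∀ i < n, ∀ j, k' i ≤ j → j < k' (i + 1) → |f (w j) - f (ζ i)| ≤ ε := by
    intro i hi j hj1 hj2
    obtain ⟨hwj, _⟩ := hk'blk i hi j hj1 hj2
    have hxi := hQ.2.2.2.2 i hi
    have hjc : j ≤ c := by
      have h2 := (monotone_nat_of_le_succ hk'mono) (show i+1 ≤ n by omega)
      omega
    apply hf _ (part_t_mem hW hjc) _ (part_ξ_mem hQ hi) ?_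
    have := hQm i hi
    rw [abs_sub_lt_iff]
    constructor <;> cases hwj <;> cases hxi <;> linarith
  have h1 := ref_est f g a y hε hVg hP hW hk0 hkm hkmono hkw hcloseP
  have h2 := ref_est f g a y hε hVg hQ hW hk'0 hk'n hk'mono hk'w hcloseQ
  have h3 := abs_sub_le (RSSum f g m t ξ) (RSSum f g c w w) (RSSum f g n u ζ)
  have h4 := abs_sub_comm (RSSum f g m t ξ) (RSSum f g c w w)
  linarith

lemma key_cauchy (f g : ℝ → ℝ) {a y : ℝ} (hay : a < y)
    (hf : ContinuousOn f (Icc a y)) (hVg : eVariationOn g (Icc a y) ≠ ⊤) :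
    ∀ ε > 0, ∃ δ > 0, ∀ (m : ℕ) (t ξ : ℕ → ℝ), IsTaggedPartition a y m t ξ →
      (∀ i < m, t (i + 1) - t i < δ) → ∀ (n : ℕ) (u ζ : ℕ → ℝ), IsTaggedPartition a y n u ζ →
      (∀ i < n, u (i + 1) - u i < δ) →
      |RSSum f g m t ξ - RSSum f g n u ζ| ≤ ε := by
  intro ε hε
  set V := (eVariationOn g (Icc a y)).toReal with hV
  have hV0 : 0 ≤ V := ENNReal.toReal_nonneg
  set ε' := ε / (2 * (V + 1)) with hε'
  have hε'pos : 0 < ε' := by positivity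
  have hunif := (isCompact_Icc (a := a) (b := y)).uniformContinuousOn_of_continuous hf
  rw [Metric.uniformContinuousOn_iff] at hunif
  obtain ⟨δ, hδpos, hδ⟩ := hunif ε' hε'pos
  refine ⟨δ, hδpos, fun m t ξ hP hPm n u ζ hQ hQm => ?_⟩
  have hfmod : ∀ x ∈ Icc a y, ∀ x' ∈ Icc a y, |x - x'| < δ → |f x - f x'| ≤ ε' := by
    intro x hx x' hx' hd
    have := hδ x hx x' hx' (by rwa [Real.dist_eq])
    rw [Real.dist_eq] at this
    exact le_of_lt this
  have := two_partitions_est f g hay hVg (le_of_lt hε'pos) hδpos hfmod hP hPm hQ hQm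
  calc |RSSum f g m t ξ - RSSum f g n u ζ| ≤ 2 * ε' * V := this
    _ = ε * (V / (V + 1)) := by rw [hε']; field_simp
    _ ≤ ε * 1 := by
        apply mul_le_mul_of_nonneg_left _ (le_of_lt hε)
        rw [div_le_one (by linarith)]; linarith
    _ = ε := mul_one ε

lemma exists_hasRS (f g : ℝ → ℝ) {a y : ℝ} (hay : a < y)
    (hf : ContinuousOn f (Icc a y)) (hVg : eVariationOn g (Icc a y) ≠ ⊤) :
    ∃ I, HasRSIntegral f g a y I := by
  have key := key_cauchy f g hay hf hVg
  have hpart : ∀ n : ℕ, ∃ m t ξ, IsTaggedPartition a y m t ξ ∧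
      ∀ i < m, t (i + 1) - t i < 1 / (n + 1) := by
    intro n
    exact exists_uniform_partition a y hay (by positivity)
  choose pm pt pξ hpart hmesh using hpart
  set sn : ℕ → ℝ := fun n => RSSum f g (pm n) (pt n) (pξ n) with hsn
  have hmesh' : ∀ {N n : ℕ} {δ : ℝ}, 1 / (N + 1 : ℝ) < δ → N ≤ n →
      ∀ i < pm n, pt n (i + 1) - pt n i < δ := by
    intro N n δ h1 h2 i hi
    refine lt_trans (hmesh n i hi) (lt_of_le_of_lt ?_ h1)
    apply one_div_le_one_div_of_le (by positivity)
    have : (N : ℝ) ≤ n := Nat.cast_le.2 h2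
    push_cast; linarith
  have hcauchy : CauchySeq sn := by
    rw [Metric.cauchySeq_iff']
    intro ε hε
    obtain ⟨δ, hδpos, hδ⟩ := key (ε/2) (by linarith)
    obtain ⟨N, hN⟩ := exists_nat_gt (1/δ)
    have hNδ : 1 / (N + 1 : ℝ) < δ := by
      rw [div_lt_iff₀ (by positivity)]
      rw [div_lt_iff₀ hδpos] at hN
      nlinarith
    refine ⟨N, fun n hn => ?_⟩
    rw [Real.dist_eq]
    have := hδ (pm n) (pt n) (pξ n) (hpart n) (hmesh' hNδ hn)
      (pm N) (pt N) (pξ N) (hpart N) (hmesh' hNδ le_rfl)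
    calc |sn n - sn N| ≤ ε/2 := this
      _ < ε := by linarith
  obtain ⟨I, hI⟩ := cauchySeq_tendsto_of_complete hcauchy
  refine ⟨I, fun ε hε => ?_⟩
  obtain ⟨δ, hδpos, hδ⟩ := key (ε/3) (by linarith)
  refine ⟨δ, hδpos, fun m t ξ hP hPm => ?_⟩
  obtain ⟨N₁, hN₁⟩ := (Metric.tendsto_atTop.1 hI) (ε/3) (by linarith)
  obtain ⟨N₂, hN₂⟩ := exists_nat_gt (1/δ)
  set n := max N₁ N₂ with hn
  have hNδ : 1 / (n + 1 : ℝ) < δ := by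
    rw [div_lt_iff₀ (by positivity)]
    rw [div_lt_iff₀ hδpos] at hN₂
    have : (N₂ : ℝ) ≤ n := Nat.cast_le.2 (le_max_right _ _)
    nlinarith
  have h1 := hδ m t ξ hP hPm (pm n) (pt n) (pξ n) (hpart n) (hmesh' hNδ le_rfl)
  have h2 := hN₁ n (le_max_left _ _)
  rw [Real.dist_eq] at h2
  calc |RSSum f g m t ξ - I| ≤ |RSSum f g m t ξ - sn n| + |sn n - I| := abs_sub_le _ _ _
    _ < ε/3 + ε/3 := by
        apply add_lt_add_of_le_of_lt h1 h2
    _ < ε := by linarith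

lemma rsintegral_eq (f g : ℝ → ℝ) {a y : ℝ} (hay : a < y) {I : ℝ}
    (hI : HasRSIntegral f g a y I) : RSIntegral f g a y = I := by
  have hex : ∃ J, HasRSIntegral f g a y J := ⟨I, hI⟩
  rw [RSIntegral, dif_pos hex]
  set J := hex.choose with hJdef
  have hJ : HasRSIntegral f g a y J := hex.choose_spec
  by_contra hne
  set ε := |J - I| / 2 with hε
  have hεpos : 0 < ε := by
    have : J - I ≠ 0 := sub_ne_zero.2 hne
    have := abs_pos.2 this
    positivity
  obtain ⟨δ₁, hδ₁pos, hδ₁⟩ := hJ ε hεpos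
  obtain ⟨δ₂, hδ₂pos, hδ₂⟩ := hI ε hεpos
  obtain ⟨m, t, ξ, hP, hPm⟩ := exists_uniform_partition a y hay (lt_min hδ₁pos hδ₂pos)
  have h1 := hδ₁ m t ξ hP (fun i hi => lt_of_lt_of_le (hPm i hi) (min_le_left _ _))
  have h2 := hδ₂ m t ξ hP (fun i hi => lt_of_lt_of_le (hPm i hi) (min_le_right _ _))
  have := abs_sub_le J (RSSum f g m t ξ) I
  rw [abs_sub_comm J (RSSum f g m t ξ)] at this
  have : |J - I| < 2 * ε := by linarith
  rw [hε] at this; linarith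



lemma evar_right_small (f : ℝ → ℝ) {A B sp : ℝ}
    (hbv : eVariationOn f (Icc A B) ≠ ⊤)
    (hsp : sp ∈ Icc A B) (hspB : sp < B)
    {ε : ℝ≥0∞} (hε0 : 0 < ε) (hεt : ε ≠ ⊤) {θ : ℝ} (hθ : 0 < θ)
    (hcont : ∀ x ∈ Icc A B, |x - sp| ≤ θ → edist (f x) (f sp) ≤ ε) :
    ∃ r, sp < r ∧ r ≤ B ∧ eVariationOn f (Icc A B ∩ Icc sp r) ≤ 2 * ε := by
  set r₀ := min B (sp + θ) with hr₀
  have hspr₀ : sp < r₀ := lt_min hspB (by linarith)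
  have hr₀B : r₀ ≤ B := min_le_left _ _
  set E := eVariationOn f (Icc A B ∩ Icc sp r₀) with hE
  have hEne : E ≠ ⊤ := by
    refine ne_top_of_le_ne_top hbv (eVariationOn.mono f inter_subset_left)
  by_cases hcase : E ≤ 2 * ε
  · exact ⟨r₀, hspr₀, hr₀B, hcase⟩
  push_neg at hcase
  have hEpos : ε < E := lt_of_le_of_lt (le_mul_of_one_le_left (le_of_lt hε0) one_le_two) hcase
  have hsub : E - ε < E := ENNReal.sub_lt_self hEne (lt_trans hε0 hEpos).ne' (ne_of_gt hε0)
  -- extract a near-optimal partition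
  have : E - ε < eVariationOn f (Icc A B ∩ Icc sp r₀) := hsub
  rw [eVariationOn, lt_iSup_iff] at this
  obtain ⟨⟨nn, uu, huu, uus⟩, hsum⟩ := this
  -- prepend sp
  set v : ℕ → ℝ := fun j => if j = 0 then sp else uu (j - 1) with hv
  have hspmem : sp ∈ Icc A B ∩ Icc sp r₀ := ⟨hsp, le_rfl, le_of_lt hspr₀⟩
  have hvmem : ∀ j, v j ∈ Icc A B ∩ Icc sp r₀ := by
    intro j; rw [hv]; dsimp only; split
    · exact hspmem
    · exact uus _
  have hvmono : Monotone v := by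
    intro i j hij
    rw [hv]; dsimp only
    split <;> split
    · exact le_rfl
    · exact (uus (j-1)).2.1
    · omega
    · exact huu (by omega)
  have hvsum : E - ε < ∑ i ∈ Finset.range (nn + 1), edist (f (v (i + 1))) (f (v i)) := by
    refine lt_of_lt_of_le hsum ?_
    rw [Finset.sum_range_succ']
    refine le_add_of_le_of_nonneg (le_of_eq ?_) zero_le
    refine Finset.sum_congr rfl fun i _ => ?_
    congr 1
  set n := nn + 1 with hn
  have hv0 : v 0 = sp := by simp [hv]
  by_cases hP : ∀ j ≤ n, v j ≤ sp
  · -- all points equal sp, sum is zero, contradiction with E - ε > 0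
    exfalso
    have hz : ∀ j ≤ n, v j = sp := fun j hj => le_antisymm (hP j hj) (hvmem j).2.1
    have : ∑ i ∈ Finset.range n, edist (f (v (i + 1))) (f (v i)) = 0 := by
      apply Finset.sum_eq_zero
      intro i hi
      rw [Finset.mem_range] at hi
      rw [hz i (by omega), hz (i+1) (by omega), edist_self]
    rw [this] at hvsum
    simp at hvsum
  push_neg at hP
  obtain ⟨j₀, hj₀n, hj₀⟩ := hP
  have hPex : ∃ j, j ≤ n ∧ sp < v j := ⟨j₀, hj₀n, hj₀⟩
  classical
  set j₁ := Nat.find hPex with hj₁def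
  obtain ⟨hj₁n, hj₁sp⟩ := Nat.find_spec hPex
  rw [← hj₁def] at hj₁n hj₁sp
  have hj₁min : ∀ j < j₁, ¬(j ≤ n ∧ sp < v j) := fun j hj => Nat.find_min hPex hj
  have hj₁pos : 0 < j₁ := by
    rcases Nat.eq_zero_or_pos j₁ with h | h
    · rw [h, hv0] at hj₁sp; exact absurd hj₁sp (lt_irrefl sp)
    · exact h
  set r := v j₁ with hr
  have hrmem := hvmem j₁
  refine ⟨r, hj₁sp, le_trans hrmem.2.2 hr₀B, ?_⟩
  -- split E
  have hsplit : eVariationOn f (Icc A B ∩ Icc sp r) + eVariationOn f (Icc A B ∩ Icc r r₀) = E := by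
    exact eVariationOn.Icc_add_Icc f hrmem.2.1 hrmem.2.2 hrmem.1
  -- bound the sum
  have hzero : ∀ j < j₁, v j = sp := by
    intro j hj
    have := hj₁min j hj
    push_neg at this
    exact le_antisymm (this (by omega)) (hvmem j).2.1
  have hsucc : j₁ - 1 + 1 = j₁ := by omega
  have hsing : Finset.Ico (j₁ - 1) j₁ = {j₁ - 1} := by
    conv_lhs => rw [← hsucc]
    exact Nat.Ico_succ_singleton _
  have hsum_split : ∑ i ∈ Finset.range n, edist (f (v (i + 1))) (f (v i))
      = (∑ i ∈ Finset.Ico 0 (j₁ - 1), edist (f (v (i + 1))) (f (v i)))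
        + edist (f (v j₁)) (f (v (j₁ - 1)))
        + ∑ i ∈ Finset.Ico j₁ n, edist (f (v (i + 1))) (f (v i)) := by
    rw [Finset.range_eq_Ico,
      ← Finset.sum_Ico_consecutive _ (Nat.zero_le j₁) hj₁n,
      ← Finset.sum_Ico_consecutive _ (Nat.zero_le (j₁ - 1)) (show j₁ - 1 ≤ j₁ by omega),
      hsing, Finset.sum_singleton, hsucc]
  have hfirst : ∑ i ∈ Finset.Ico 0 (j₁ - 1), edist (f (v (i + 1))) (f (v i)) = 0 := by
    apply Finset.sum_eq_zero
    intro i hi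
    rw [Finset.mem_Ico] at hi
    rw [hzero i (by omega), hzero (i + 1) (by omega), edist_self]
  have hmid : edist (f (v j₁)) (f (v (j₁ - 1))) ≤ ε := by
    rw [hzero (j₁ - 1) (by omega)]
    apply hcont _ hrmem.1
    rw [abs_le]
    have h1 : sp ≤ v j₁ := hrmem.2.1
    have h2 : v j₁ ≤ r₀ := hrmem.2.2
    have h3 : r₀ ≤ sp + θ := min_le_right _ _
    constructor <;> linarith
  set Y := eVariationOn f (Icc A B ∩ Icc r r₀) with hY
  have htail : ∑ i ∈ Finset.Ico j₁ n, edist (f (v (i + 1))) (f (v i)) ≤ Y := by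
    apply eVariationOn.sum_le_of_monotoneOn_Icc
    · intro i hi j hj hij
      exact hvmono hij
    · intro i hi
      rw [mem_Icc] at hi
      refine ⟨(hvmem i).1, ?_, (hvmem i).2.2⟩
      exact hvmono hi.1
  have hkey : E - ε < ε + Y := by
    rw [hsum_split, hfirst, zero_add] at hvsum
    exact lt_of_lt_of_le hvsum (add_le_add hmid htail)
  set X := eVariationOn f (Icc A B ∩ Icc sp r) with hX
  have hYne : Y ≠ ⊤ := by
    refine ne_top_of_le_ne_top hbv (eVariationOn.mono f inter_subset_left)
  have h5 : E < ε + Y + ε := by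
    rw [ENNReal.sub_lt_iff_lt_right hεt (le_of_lt hEpos)] at hkey
    exact hkey
  rw [← hsplit] at h5
  have h6 : X + Y < 2 * ε + Y := by
    calc X + Y < ε + Y + ε := h5
      _ = 2 * ε + Y := by ring
  rw [ENNReal.add_lt_add_iff_right hYne] at h6
  exact le_of_lt h6

lemma evar_neg_comp (f : ℝ → ℝ) (s : Set ℝ) :
    eVariationOn (fun x => f (-x)) (Neg.neg '' s) = eVariationOn f s := by
  have h := eVariationOn.comp_eq_of_antitoneOn f Neg.neg
    (t := Neg.neg '' s) (fun x _ y _ hxy => neg_le_neg hxy)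
  have h2 : Neg.neg '' (Neg.neg '' s) = s := by
    ext x
    constructor
    · rintro ⟨z, ⟨w, hw, rfl⟩, rfl⟩
      simpa using hw
    · intro hx
      exact ⟨-x, ⟨x, hx, rfl⟩, by simp⟩
  rw [h2] at h
  exact h

lemma evar_left_small (f : ℝ → ℝ) {A B sp : ℝ}
    (hbv : eVariationOn f (Icc A B) ≠ ⊤)
    (hsp : sp ∈ Icc A B) (hAsp : A < sp)
    {ε : ℝ≥0∞} (hε0 : 0 < ε) (hεt : ε ≠ ⊤) {θ : ℝ} (hθ : 0 < θ)
    (hcont : ∀ x ∈ Icc A B, |x - sp| ≤ θ → edist (f x) (f sp) ≤ ε) :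
    ∃ l, A ≤ l ∧ l < sp ∧ eVariationOn f (Icc A B ∩ Icc l sp) ≤ 2 * ε := by
  set f' : ℝ → ℝ := fun x => f (-x) with hf'
  have himg : ∀ u v : ℝ, Neg.neg '' (Icc u v) = Icc (-v) (-u) := fun u v => image_neg_Icc u v
  have hbv' : eVariationOn f' (Icc (-B) (-A)) ≠ ⊤ := by
    rw [← himg A B, evar_neg_comp]; exact hbv
  have hsp' : -sp ∈ Icc (-B) (-A) := ⟨neg_le_neg hsp.2, neg_le_neg hsp.1⟩
  have hcont' : ∀ x ∈ Icc (-B) (-A), |x - (-sp)| ≤ θ → edist (f' x) (f' (-sp)) ≤ ε := by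
    intro x hx hd
    have hmem : -x ∈ Icc A B := ⟨le_neg.1 hx.2, neg_le.1 hx.1⟩
    have : |(-x) - sp| ≤ θ := by
      rw [show (-x) - sp = -(x - (-sp)) by ring, abs_neg]; exact hd
    have := hcont (-x) hmem this
    simpa [hf'] using this
  obtain ⟨r, hr1, hr2, hr3⟩ := evar_right_small f' hbv' hsp' (by linarith) hε0 hεt hθ hcont'
  refine ⟨-r, by linarith, by linarith, ?_⟩
  have : Icc (-B) (-A) ∩ Icc (-sp) r = Neg.neg '' (Icc A B ∩ Icc (-r) sp) := by
    rw [Set.image_inter neg_injective, himg, himg]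
    norm_num
  rw [this, evar_neg_comp] at hr3
  simpa using hr3


lemma abel_id (F G : ℕ → ℝ) (m : ℕ) (hm : 1 ≤ m) :
    ∑ i ∈ Finset.range m, F i * (G (i + 1) - G i)
      = F (m - 1) * G m - F 0 * G 0 - ∑ i ∈ Finset.Ico 1 m, (F i - F (i - 1)) * G i := by
  induction m, hm using Nat.le_induction with
  | base => simp; ring
  | succ n hn ih =>
    rw [Finset.sum_range_succ, ih, Finset.sum_Ico_succ_top hn]
    simp only [Nat.add_sub_cancel]
    have h1 : n - 1 + 1 = n := by omega
    ring

end RSAux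

open RSAux in
/-- Theorem 3 of the paper: if `f` is continuous, positive and of bounded
variation on `[a, b]`, and `g` is a non-negative, non-vanishing function of bounded variation
with `g a = 0`, then `∫_a^y f dg > 0` for some `y ∈ (a, b]`. -/
theorem stmt_1 (a b : ℝ) (hab : a ≤ b) (f g : ℝ → ℝ)
    (hf_cont : ContinuousOn f (Set.Icc a b))
    (hf_pos : ∀ x ∈ Set.Icc a b, 0 < f x)
    (hf_bv : BoundedVariationOn f (Set.Icc a b))
    (hg_nonneg : ∀ x ∈ Set.Icc a b, 0 ≤ g x)
    (hg_bv : BoundedVariationOn g (Set.Icc a b))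
    (hg_ne : ∃ x ∈ Set.Icc a b, g x ≠ 0)
    (hga : g a = 0) :
    ∃ y ∈ Set.Ioc a b, 0 < RSIntegral f g a y := by
  classical
  obtain ⟨x₀, hx₀, hgx₀⟩ := hg_ne
  have hb : a < b := by
    rcases eq_or_lt_of_le hab with heq | h
    · exfalso
      have hxa : x₀ = a := le_antisymm (heq ▸ hx₀.2) hx₀.1
      rw [hxa, hga] at hgx₀
      exact hgx₀ rfl
    · exact h
  set K := {x : ℝ | x ∈ Set.Icc a b ∧ g x ≠ 0} with hK
  have hKne : K.Nonempty := ⟨x₀, hx₀, hgx₀⟩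
  have hKbdd : BddBelow K := ⟨a, fun x hx => hx.1.1⟩
  set s := sInf K with hsdef
  have hsa : a ≤ s := le_csInf hKne fun x hx => hx.1.1
  have hsx₀ : s ≤ x₀ := csInf_le hKbdd ⟨hx₀, hgx₀⟩
  have hsb : s ≤ b := le_trans hsx₀ hx₀.2
  have hzero : ∀ x ∈ Set.Icc a b, x < s → g x = 0 := by
    intro x hx hlt
    by_contra h
    exact absurd (csInf_le hKbdd ⟨hx, h⟩) (not_le.2 hlt)
  obtain ⟨z, hz, hzmin⟩ := isCompact_Icc.exists_isMinOn (nonempty_Icc.2 hab) hf_cont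
  set c := f z with hc
  have hcpos : 0 < c := hf_pos z hz
  have hcle : ∀ x ∈ Set.Icc a b, c ≤ f x := fun x hx => hzmin hx
  have hsmem : s ∈ Set.Icc a b := ⟨hsa, hsb⟩
  have hscont : ContinuousWithinAt f (Set.Icc a b) s := hf_cont s hsmem
  obtain ⟨θ₀, hθ₀pos, hθ₀⟩ := Metric.continuousWithinAt_iff.1 hscont (c/20) (by positivity)
  set θ := θ₀ / 2 with hθdef
  have hθpos : 0 < θ := by positivity
  have hmod : ∀ x ∈ Set.Icc a b, |x - s| ≤ θ → edist (f x) (f s) ≤ ENNReal.ofReal (c/20) := by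
    intro x hx hd
    have h1 : dist x s < θ₀ := by
      rw [Real.dist_eq]
      rw [hθdef] at hd
      linarith
    have h2 := hθ₀ hx h1
    rw [edist_dist]
    exact ENNReal.ofReal_le_ofReal (le_of_lt h2)
  have hεt : (ENNReal.ofReal (c/20)) ≠ ⊤ := ENNReal.ofReal_ne_top
  have hε0 : 0 < ENNReal.ofReal (c/20) := ENNReal.ofReal_pos.2 (by positivity)
  -- right-side variation smallness and a point of K below r
  obtain ⟨r, hsr, hrb, hVr, x₁, hx₁K, hx₁r⟩ :
      ∃ r, s ≤ r ∧ r ≤ b ∧ eVariationOn f (Set.Icc a b ∩ Set.Icc s r) ≤ 2 * ENNReal.ofReal (c/20)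
        ∧ ∃ x₁, x₁ ∈ K ∧ x₁ ≤ r := by
    rcases lt_or_eq_of_le hsb with hlt | heq
    · obtain ⟨r, h1, h2, h3⟩ := evar_right_small f hf_bv hsmem hlt hε0 hεt hθpos hmod
      have h4 : sInf K < r := hsdef ▸ h1
      obtain ⟨x₁, hx₁, hx₁lt⟩ := (csInf_lt_iff hKbdd hKne).1 h4
      exact ⟨r, le_of_lt h1, h2, h3, x₁, hx₁, le_of_lt hx₁lt⟩
    · refine ⟨b, hsb, le_rfl, ?_, x₀, ⟨hx₀, hgx₀⟩, hx₀.2⟩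
      have hss : (Set.Icc a b ∩ Set.Icc s b : Set ℝ).Subsingleton := by
        intro u hu v hv
        have hu' : u = b := le_antisymm hu.2.2 (heq ▸ hu.2.1)
        have hv' : v = b := le_antisymm hv.2.2 (heq ▸ hv.2.1)
        rw [hu', hv']
      rw [eVariationOn.subsingleton f hss]
      exact zero_le
  have hIccsub : Set.Icc s r ⊆ Set.Icc a b := fun x hx => ⟨le_trans hsa hx.1, le_trans hx.2 hrb⟩
  have hamem : a ∈ Set.Icc a b := left_mem_Icc.2 hab
  have hgbdd : BddAbove (g '' Set.Icc s r) := by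
    refine ⟨(eVariationOn g (Set.Icc a b)).toReal, ?_⟩
    rintro v ⟨x, hx, rfl⟩
    have := BoundedVariationOn.sub_le hg_bv (hIccsub hx) hamem
    rw [hga] at this
    linarith
  have himgne : (g '' Set.Icc s r).Nonempty := ⟨g s, s, left_mem_Icc.2 hsr, rfl⟩
  set M := sSup (g '' Set.Icc s r) with hM
  have hx₁mem : x₁ ∈ Set.Icc s r := ⟨hsdef ▸ csInf_le hKbdd hx₁K, hx₁r⟩
  have hgx₁pos : 0 < g x₁ := lt_of_le_of_ne (hg_nonneg x₁ hx₁K.1) (Ne.symm hx₁K.2)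
  have hMpos : 0 < M := lt_of_lt_of_le hgx₁pos (le_csSup hgbdd ⟨x₁, hx₁mem, rfl⟩)
  obtain ⟨v, hvmem, hvlt⟩ := exists_lt_of_lt_csSup himgne (show M/2 < M by linarith)
  obtain ⟨y, hy, rfl⟩ := hvmem
  have hgy : M/2 < g y := hvlt
  have hyb : y ≤ b := le_trans hy.2 hrb
  have hya : a < y := by
    rcases lt_or_eq_of_le (le_trans hsa hy.1) with h | h
    · exact h
    · exfalso
      rw [← h, hga] at hgy
      linarith
  -- left-side variation smallness
  obtain ⟨l, hal, hls, hVl, hlcase⟩ :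
      ∃ l, a ≤ l ∧ l ≤ s ∧ eVariationOn f (Set.Icc a b ∩ Set.Icc l s) ≤ 2 * ENNReal.ofReal (c/20)
        ∧ (l < s ∨ l = a) := by
    rcases lt_or_eq_of_le hsa with hlt | heq
    · obtain ⟨l, h1, h2, h3⟩ := evar_left_small f hf_bv hsmem hlt hε0 hεt hθpos hmod
      exact ⟨l, h1, le_of_lt h2, h3, Or.inl h2⟩
    · refine ⟨a, le_rfl, hsa, ?_, Or.inr rfl⟩
      have hss : (Set.Icc a b ∩ Set.Icc a s : Set ℝ).Subsingleton := by
        intro u hu v hv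
        have hu' : u = a := le_antisymm (heq ▸ hu.2.2) hu.2.1
        have hv' : v = a := le_antisymm (heq ▸ hv.2.2) hv.2.1
        rw [hu', hv']
      rw [eVariationOn.subsingleton f hss]
      exact zero_le
  set δ' := if l < s then s - l else 1 with hδ'
  have hδ'pos : 0 < δ' := by
    rw [hδ']
    split
    · linarith
    · norm_num
  set σ := max a (s - δ') with hσ
  have hlσ : l ≤ σ := by
    rw [hσ, hδ']
    rcases hlcase with h | h
    · rw [if_pos h]
      have : s - (s - l) = l := by ring
      rw [this]
      exact le_max_right _ _
    · rw [h]
      exact le_max_left _ _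
  have hσs : σ ≤ s := max_le hsa (by linarith)
  have hσy : σ ≤ y := le_trans hσs hy.1
  have haσ : a ≤ σ := le_max_left _ _
  have hIccσy : Set.Icc σ y ⊆ Set.Icc a b := fun x hx => ⟨le_trans haσ hx.1, le_trans hx.2 hyb⟩
  have hinter : Set.Icc a b ∩ Set.Icc σ y = Set.Icc σ y :=
    inter_eq_self_of_subset_right hIccσy
  have hsplit := eVariationOn.Icc_add_Icc f (s := Set.Icc a b) hσs hy.1 hsmem
  have hVwin : (eVariationOn f (Set.Icc σ y)).toReal ≤ c/5 := by
    rw [← hinter]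
    have h1 : eVariationOn f (Set.Icc a b ∩ Set.Icc σ s) ≤ 2 * ENNReal.ofReal (c/20) :=
      le_trans (eVariationOn.mono f (inter_subset_inter_right _ (Icc_subset_Icc_left hlσ))) hVl
    have h2 : eVariationOn f (Set.Icc a b ∩ Set.Icc s y) ≤ 2 * ENNReal.ofReal (c/20) :=
      le_trans (eVariationOn.mono f (inter_subset_inter_right _ (Icc_subset_Icc_right hy.2))) hVr
    have h3 : eVariationOn f (Set.Icc a b ∩ Set.Icc σ y) ≤ 4 * ENNReal.ofReal (c/20) := by
      rw [← hsplit]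
      calc eVariationOn f (Set.Icc a b ∩ Set.Icc σ s) + eVariationOn f (Set.Icc a b ∩ Set.Icc s y)
          ≤ 2 * ENNReal.ofReal (c/20) + 2 * ENNReal.ofReal (c/20) := add_le_add h1 h2
        _ = 4 * ENNReal.ofReal (c/20) := by ring
    have h4 : (4 * ENNReal.ofReal (c/20)) ≠ ⊤ := by
      apply ENNReal.mul_ne_top
      · norm_num
      · exact ENNReal.ofReal_ne_top
    calc (eVariationOn f (Set.Icc a b ∩ Set.Icc σ y)).toReal
        ≤ (4 * ENNReal.ofReal (c/20)).toReal := ENNReal.toReal_mono h4 h3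
      _ = 4 * (c/20) := by
          rw [ENNReal.toReal_mul, ENNReal.toReal_ofReal (by positivity)]
          norm_num
      _ = c/5 := by ring
  have hwinfin : eVariationOn f (Set.Icc σ y) ≠ ⊤ :=
    ne_top_of_le_ne_top hf_bv (eVariationOn.mono f hIccσy)
  have hgbvy : eVariationOn g (Set.Icc a y) ≠ ⊤ :=
    ne_top_of_le_ne_top hg_bv (eVariationOn.mono g (Icc_subset_Icc_right hyb))
  obtain ⟨I, hI⟩ := exists_hasRS f g hya (hf_cont.mono (Icc_subset_Icc_right hyb)) hgbvy
  refine ⟨y, ⟨hya, hyb⟩, ?_⟩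
  rw [rsintegral_eq f g hya hI]
  set P₀ := c * (M/2) - M * (c/5) with hP₀def
  clear_value P₀
  have hP₀pos : 0 < P₀ := by
    rw [hP₀def]
    nlinarith
  have hlower : ∀ (m : ℕ) (t ξ : ℕ → ℝ), IsTaggedPartition a y m t ξ →
      (∀ i < m, t (i+1) - t i < δ') → P₀ ≤ RSSum f g m t ξ := by
    intro m t ξ hP hPm
    have hm1 : 1 ≤ m := hP.1
    have habel : ∑ i ∈ Finset.range m, f (ξ i) * (g (t (i+1)) - g (t i))
        = f (ξ (m-1)) * g (t m) - f (ξ 0) * g (t 0)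
          - ∑ i ∈ Finset.Ico 1 m, (f (ξ i) - f (ξ (i-1))) * g (t i) :=
      abel_id (fun i => f (ξ i)) (fun i => g (t i)) m hm1
    have hty : ∀ ⦃i⦄, i ≤ m → t i ∈ Set.Icc a y := part_t_mem hP
    have htab : ∀ ⦃i⦄, i ≤ m → t i ∈ Set.Icc a b :=
      fun i hi => ⟨(hty hi).1, le_trans (hty hi).2 hyb⟩
    have hξy : ∀ ⦃i⦄, i < m → ξ i ∈ Set.Icc a y := part_ξ_mem hP
    set ξ' : ℕ → ℝ := fun i => max (ξ i) σ with hξ'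
    have hterm : ∀ i ∈ Finset.Ico 1 m,
        (f (ξ i) - f (ξ (i-1))) * g (t i) ≤ M * |f (ξ' i) - f (ξ' (i-1))| := by
      intro i hi
      rw [Finset.mem_Ico] at hi
      obtain ⟨hi1, him⟩ := hi
      rcases lt_or_ge (t i) s with hts | hst
      · rw [hzero (t i) (htab (by omega)) hts, mul_zero]
        positivity
      · have hgti : σ ≤ ξ i := le_trans hσs (le_trans hst (hP.2.2.2.2 i him).1)
        have h1 : ξ' i = ξ i := max_eq_left hgti
        have h2 : ξ' (i-1) = ξ (i-1) := by
          apply max_eq_left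
          apply max_le
          · exact (hξy (by omega)).1
          · have hmesh := hPm (i-1) (by omega)
            have hidx : i - 1 + 1 = i := by omega
            rw [hidx] at hmesh
            have htag := (hP.2.2.2.2 (i-1) (by omega)).1
            linarith
        have h3 : g (t i) ≤ M := by
          apply le_csSup hgbdd
          exact ⟨t i, ⟨hst, le_trans (hty (by omega)).2 hy.2⟩, rfl⟩
        have h4 : 0 ≤ g (t i) := hg_nonneg _ (htab (by omega))
        calc (f (ξ i) - f (ξ (i-1))) * g (t i)
            ≤ |f (ξ i) - f (ξ (i-1))| * g (t i) :=
              mul_le_mul_of_nonneg_right (le_abs_self _) h4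
          _ ≤ |f (ξ i) - f (ξ (i-1))| * M :=
              mul_le_mul_of_nonneg_left h3 (abs_nonneg _)
          _ = M * |f (ξ' i) - f (ξ' (i-1))| := by rw [h1, h2]; ring
    have hξ'mono : MonotoneOn ξ' (Set.Icc (0:ℕ) (m-1)) := by
      intro i hi j hj hij
      rw [mem_Icc] at hi hj
      rcases eq_or_lt_of_le hij with rfl | hlt
      · exact le_rfl
      · apply max_le_max _ le_rfl
        calc ξ i ≤ t (i+1) := (hP.2.2.2.2 i (by omega)).2
          _ ≤ t j := part_t_mono hP hlt (by omega)
          _ ≤ ξ j := (hP.2.2.2.2 j (by omega)).1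
    have hξ'mem : ∀ i ∈ Set.Icc (0:ℕ) (m-1), ξ' i ∈ Set.Icc σ y := by
      intro i hi
      rw [mem_Icc] at hi
      refine ⟨le_max_right _ _, max_le (hξy (by omega)).2 hσy⟩
    have hsum2 : ∑ i ∈ Finset.Ico 1 m, |f (ξ' i) - f (ξ' (i-1))|
        = ∑ j ∈ Finset.Ico 0 (m-1), |f (ξ' (j+1)) - f (ξ' j)| := by
      rw [Finset.sum_Ico_eq_sum_range, ← Finset.range_eq_Ico]
      apply Finset.sum_congr rfl
      intro j _
      rw [add_comm 1 j]
      norm_num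
    have hT : ∑ i ∈ Finset.Ico 1 m, (f (ξ i) - f (ξ (i-1))) * g (t i) ≤ M * (c/5) := by
      calc ∑ i ∈ Finset.Ico 1 m, (f (ξ i) - f (ξ (i-1))) * g (t i)
          ≤ ∑ i ∈ Finset.Ico 1 m, M * |f (ξ' i) - f (ξ' (i-1))| := Finset.sum_le_sum hterm
        _ = M * ∑ i ∈ Finset.Ico 1 m, |f (ξ' i) - f (ξ' (i-1))| := by rw [Finset.mul_sum]
        _ ≤ M * (c/5) := by
            apply mul_le_mul_of_nonneg_left _ (le_of_lt hMpos)
            rw [hsum2]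
            exact le_trans (real_sum_le_evar f hwinfin hξ'mono hξ'mem) hVwin
    have hG0 : g (t 0) = 0 := by rw [hP.2.1, hga]
    have hGm : g (t m) = g y := by rw [hP.2.2.1]
    have hξmab : ξ (m-1) ∈ Set.Icc a b := by
      have := hξy (show m - 1 < m by omega)
      exact ⟨this.1, le_trans this.2 hyb⟩
    have hfirst : c * (M/2) ≤ f (ξ (m-1)) * g (t m) := by
      rw [hGm]
      have hc1 : c ≤ f (ξ (m-1)) := hcle _ hξmab
      have hgy0 : M/2 ≤ g y := le_of_lt hgy
      have hM2 : (0:ℝ) ≤ M/2 := by linarith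
      exact mul_le_mul hc1 hgy0 hM2 (by linarith)
    show P₀ ≤ ∑ i ∈ Finset.range m, f (ξ i) * (g (t (i+1)) - g (t i))
    rw [habel, hG0, mul_zero, sub_zero, hP₀def]
    linarith
  obtain ⟨δI, hδIpos, hδI⟩ := hI (P₀/2) (by linarith)
  obtain ⟨m, t, ξ, hP, hPm⟩ := exists_uniform_partition a y hya (lt_min hδIpos hδ'pos)
  have h1 := hδI m t ξ hP (fun i hi => lt_of_lt_of_le (hPm i hi) (min_le_left _ _))
  have h2 := hlower m t ξ hP (fun i hi => lt_of_lt_of_le (hPm i hi) (min_le_right _ _))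
  rw [abs_sub_lt_iff] at h1
  linarith [h1.1]
end

section
/- Let f : [a,b] → (0,∞) be continuous, let (x̲_n) and (x̄_n) be sequences with a < ⋯ < x̲_n < x̄_n < ⋯ < x̲_1 < x̄_1 ≤ b and lim_{n→∞} x̄_n = a, let β > 1, and define h : [a,b] → [0,∞) by h(x) := Σ_{n∈ℕ} n^{−β} χ_{[x̲_n, x̄_n)}(x). Then for every n ∈ ℕ, the Riemann–Stieltjes integral satisfies ∫_a^{x̲_n} f(x) dh(x) = n^{−β} f(x̲_n) − Σ_{k=n+1}^∞ k^{−β} ( f(x̄_k) − f(x̲_k) ). -/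
open Set Filter MeasureTheory

private lemma t_mono' {m : ℕ} {t : ℕ → ℝ} (ht : ∀ i < m, t i < t (i + 1)) :
    ∀ i j, i ≤ j → j ≤ m → t i ≤ t j := by
  intro i j hij hjm
  induction j, hij using Nat.le_induction with
  | base => exact le_rfl
  | succ j hj ih => exact (ih (by omega)).trans (ht j (by omega)).le

private lemma exists_loc {m : ℕ} {t : ℕ → ℝ} {p : ℝ}
    (h0 : t 0 < p) (hm' : p ≤ t m) :
    ∃ j < m, t j < p ∧ p ≤ t (j + 1) := by
  classical
  have hex : ∃ i, p ≤ t i := ⟨m, hm'⟩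
  have hspec : p ≤ t (Nat.find hex) := Nat.find_spec hex
  have hj0m : Nat.find hex ≤ m := Nat.find_min' hex hm'
  have hj0pos : 0 < Nat.find hex := by
    rcases Nat.eq_zero_or_pos (Nat.find hex) with hz | h
    · exfalso; rw [hz] at hspec; linarith
    · exact h
  refine ⟨Nat.find hex - 1, by omega, ?_, ?_⟩
  · have := Nat.find_min hex (m := Nat.find hex - 1) (by omega)
    exact not_le.mp this
  · have heq : Nat.find hex - 1 + 1 = Nat.find hex := by omega
    rw [heq]; exact hspec

private lemma stepSum_eq_zero {m : ℕ} {t : ℕ → ℝ} (ht : ∀ i < m, t i < t (i + 1))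
    {p : ℝ} (hp : t m < p) (g : ℕ → ℝ) :
    ∑ i ∈ Finset.range m,
      g i * ((if p ≤ t (i + 1) then (1 : ℝ) else 0) - (if p ≤ t i then 1 else 0)) = 0 := by
  apply Finset.sum_eq_zero
  intro i hi
  rw [Finset.mem_range] at hi
  have h1 : t (i + 1) ≤ t m := t_mono' ht (i + 1) m (by omega) le_rfl
  have h2 : t i ≤ t m := t_mono' ht i m (by omega) le_rfl
  rw [if_neg (by linarith), if_neg (by linarith)]
  ring

private lemma stepSum_eq {m : ℕ} {t : ℕ → ℝ} (ht : ∀ i < m, t i < t (i + 1))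
    {p : ℝ} {j : ℕ} (hj : j < m) (h1 : t j < p) (h2 : p ≤ t (j + 1)) (g : ℕ → ℝ) :
    ∑ i ∈ Finset.range m,
      g i * ((if p ≤ t (i + 1) then (1 : ℝ) else 0) - (if p ≤ t i then 1 else 0)) = g j := by
  rw [Finset.sum_eq_single j]
  · rw [if_pos h2, if_neg (not_le.mpr h1)]; ring
  · intro i hi hne
    rw [Finset.mem_range] at hi
    rcases lt_or_gt_of_ne hne with hlt | hgt
    · have hle : t (i + 1) ≤ t j := t_mono' ht (i + 1) j hlt (by omega)
      have h3 : t i ≤ t (i + 1) := (ht i hi).le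
      rw [if_neg (by linarith), if_neg (by linarith)]; ring
    · have hle : t (j + 1) ≤ t i := t_mono' ht (j + 1) i hgt (by omega)
      have h3 : t i ≤ t (i + 1) := (ht i hi).le
      rw [if_pos (by linarith), if_pos (by linarith)]; ring
  · intro hnj; exact absurd (Finset.mem_range.mpr hj) hnj

/-- the value of the Riemann–Stieltjes integral of `f` against the step
function `h` up to `x̲ₙ` is `n^{-β} f(x̲ₙ) − Σ_{k>n} k^{-β} (f(x̄ₖ) − f(x̲ₖ))`. -/
theorem stmt_6 (a b β : ℝ) (f : ℝ → ℝ) (xl xu : ℕ → ℝ) (hβ : 1 < β)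
    (hf_cont : ContinuousOn f (Set.Icc a b))
    (hf_pos : ∀ x ∈ Set.Icc a b, 0 < f x)
    (h_lt : ∀ n : ℕ, 1 ≤ n → a < xl n)
    (h_pair : ∀ n : ℕ, 1 ≤ n → xl n < xu n)
    (h_order : ∀ n : ℕ, 1 ≤ n → xu (n + 1) < xl n)
    (h_top : xu 1 ≤ b)
    (h_lim : Filter.Tendsto xu Filter.atTop (nhds a))
    (h : ℝ → ℝ)
    (hh : ∀ x : ℝ, h x =
      ∑' n : ℕ, if 1 ≤ n ∧ x ∈ Set.Ico (xl n) (xu n) then (n : ℝ) ^ (-β) else 0) :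
    ∀ n : ℕ, 1 ≤ n →
      HasRSIntegral f h a (xl n)
        ((n : ℝ) ^ (-β) * f (xl n) -
          ∑' k : ℕ, if n + 1 ≤ k then (k : ℝ) ^ (-β) * (f (xu k) - f (xl k)) else 0) := by
  intro n hn
  classical
  -- chain facts
  have chain : ∀ j k : ℕ, 1 ≤ j → j < k → xu k < xl j := by
    intro j k hj hjk
    induction k, hjk using Nat.le_induction with
    | base => exact h_order j hj
    | succ k hk ih =>
      have h1 := h_order k (by omega)
      have h2 := h_pair k (by omega)
      linarith
  have hxu_le_b : ∀ k : ℕ, 1 ≤ k → xu k ≤ b := by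
    intro k hk
    rcases eq_or_lt_of_le hk with heq | hlt
    · rw [← heq]; exact h_top
    · have h1 := chain 1 k le_rfl hlt
      have h2 := h_pair 1 le_rfl
      linarith
  have hxlb : xl n ≤ b := by
    have := h_pair n hn; have := hxu_le_b n hn; linarith
  have hab : a ≤ b := le_of_lt (lt_of_lt_of_le (h_lt n hn) hxlb)
  have hxl_mem : ∀ k, 1 ≤ k → xl k ∈ Set.Icc a b := fun k hk =>
    ⟨(h_lt k hk).le, le_trans (h_pair k hk).le (hxu_le_b k hk)⟩
  have hxu_mem : ∀ k, 1 ≤ k → xu k ∈ Set.Icc a b := fun k hk =>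
    ⟨(lt_trans (h_lt k hk) (h_pair k hk)).le, hxu_le_b k hk⟩
  -- coefficients
  set c : ℕ → ℝ := fun k => if 1 ≤ k then (k : ℝ) ^ (-β) else 0 with hc_def
  have hc_nonneg : ∀ k, 0 ≤ c k := by
    intro k
    simp only [hc_def]
    split
    · exact Real.rpow_nonneg (Nat.cast_nonneg k) _
    · exact le_rfl
  have hc_summable : Summable c := by
    apply Summable.of_nonneg_of_le hc_nonneg (fun k => ?_)
      ((Real.summable_nat_rpow (p := -β)).mpr (by linarith))
    simp only [hc_def]
    split
    · exact le_rfl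
    · exact Real.rpow_nonneg (Nat.cast_nonneg k) _
  -- summands of h
  set hk : ℕ → ℝ → ℝ :=
    fun k x => if 1 ≤ k ∧ x ∈ Set.Ico (xl k) (xu k) then (k : ℝ) ^ (-β) else 0 with hk_def
  have hh' : ∀ x, h x = ∑' k, hk k x := by
    intro x; rw [hh x]
  have hk_nonneg : ∀ k x, 0 ≤ hk k x := by
    intro k x; simp only [hk_def]
    split
    · exact Real.rpow_nonneg (Nat.cast_nonneg k) _
    · exact le_rfl
  have hk_le : ∀ k x, hk k x ≤ c k := by
    intro k x
    simp only [hk_def, hc_def]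
    split_ifs with h1 h2
    · exact le_rfl
    · exact absurd h1.1 h2
    · exact Real.rpow_nonneg (Nat.cast_nonneg k) _
    · exact le_rfl
  have hsum_hk : ∀ x, Summable (fun k => hk k x) :=
    fun x => Summable.of_nonneg_of_le (fun k => hk_nonneg k x) (fun k => hk_le k x) hc_summable
  have hk_eq : ∀ k x, hk k x =
      c k * ((if xl k ≤ x then (1 : ℝ) else 0) - (if xu k ≤ x then 1 else 0)) := by
    intro k x
    simp only [hk_def, hc_def]
    by_cases h1 : 1 ≤ k
    · have hlt := h_pair k h1
      simp only [h1, true_and, if_true]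
      by_cases hB : xl k ≤ x
      · by_cases hC : xu k ≤ x
        · rw [if_neg (by rw [Set.mem_Ico]; push_neg; intro _; linarith), if_pos hB, if_pos hC]
          ring
        · rw [if_pos (by rw [Set.mem_Ico]; exact ⟨hB, not_le.mp hC⟩), if_pos hB, if_neg hC]
          ring
      · rw [if_neg (by rw [Set.mem_Ico]; push_neg; intro hx; exact absurd hx hB), if_neg hB,
          if_neg (fun hx => hB (by linarith))]
        ring
    · simp [h1]
  -- bound on f
  obtain ⟨M, hM⟩ := isCompact_Icc.exists_bound_of_continuousOn hf_cont
  have hM0 : 0 ≤ M := le_trans (norm_nonneg (f a)) (hM a ⟨le_rfl, hab⟩)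
  -- uniform continuity
  have huc := isCompact_Icc.uniformContinuousOn_of_continuous hf_cont
  rw [Metric.uniformContinuousOn_iff] at huc
  intro ε hε
  set C := ∑' k, c k with hC_def
  have hC0 : 0 ≤ C := tsum_nonneg hc_nonneg
  set ε' := ε / (2 * (C + 1)) with hε'_def
  have hε'0 : 0 < ε' := div_pos hε (by linarith)
  obtain ⟨δ, hδ0, hδ⟩ := huc ε' hε'0
  refine ⟨δ, hδ0, ?_⟩
  intro m t ξ hpart hmesh
  obtain ⟨hm0, ht0, htm, htlt, hξ⟩ := hpart
  have tmono := t_mono' htlt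
  set SU : ℝ → ℝ := fun p => ∑ i ∈ Finset.range m,
    f (ξ i) * ((if p ≤ t (i + 1) then (1 : ℝ) else 0) - (if p ≤ t i then 1 else 0)) with hSU_def
  have hξmem : ∀ j, j < m → ξ j ∈ Set.Icc a b := by
    intro j hj
    obtain ⟨hξ1, hξ2⟩ := hξ j hj
    constructor
    · calc a = t 0 := ht0.symm
        _ ≤ t j := tmono 0 j (Nat.zero_le _) (by omega)
        _ ≤ ξ j := hξ1
    · calc ξ j ≤ t (j + 1) := hξ2
        _ ≤ t m := tmono (j + 1) m (by omega) le_rfl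
        _ = xl n := htm
        _ ≤ b := hxlb
  have main_est : ∀ p, a < p → p ≤ xl n →
      ∃ j, j < m ∧ SU p = f (ξ j) ∧ |f (ξ j) - f p| < ε' := by
    intro p hap hpl
    have h0p : t 0 < p := by rw [ht0]; exact hap
    have hpm : p ≤ t m := by rw [htm]; exact hpl
    obtain ⟨j, hjm, hj1, hj2⟩ := exists_loc h0p hpm
    refine ⟨j, hjm, ?_, ?_⟩
    · simp only [hSU_def]
      exact stepSum_eq htlt hjm hj1 hj2 _
    · have hpmem : p ∈ Set.Icc a b := ⟨hap.le, hpl.trans hxlb⟩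
      have hdist : dist (ξ j) p < δ := by
        rw [Real.dist_eq]
        obtain ⟨hξ1, hξ2⟩ := hξ j hjm
        have hme := hmesh j hjm
        exact lt_of_le_of_lt (abs_le.mpr ⟨by linarith, by linarith⟩) hme
      have := hδ (ξ j) (hξmem j hjm) p hpmem hdist
      rwa [Real.dist_eq] at this
  have vanish : ∀ p, xl n < p → SU p = 0 := by
    intro p hp
    simp only [hSU_def]
    exact stepSum_eq_zero htlt (by rw [htm]; exact hp) _
  set A : ℕ → ℝ := fun k => c k * (SU (xl k) - SU (xu k)) with hA_def
  set Bf : ℕ → ℝ := fun k =>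
    (if k = n then (n : ℝ) ^ (-β) * f (xl n) else 0) +
    (if n + 1 ≤ k then (k : ℝ) ^ (-β) * (f (xl k) - f (xu k)) else 0) with hB_def
  -- key estimate
  have key : ∀ k, |A k - Bf k| ≤ 2 * ε' * c k := by
    intro k
    simp only [hA_def, hB_def]
    rcases Nat.lt_or_ge k 1 with hk0 | hk1
    · have hk0' : k = 0 := by omega
      subst hk0'
      have hne : (0 : ℕ) ≠ n := by omega
      have hc0 : c 0 = 0 := by simp [hc_def]
      rw [hc0, if_neg hne, if_neg (by omega)]
      simp [hε'0.le]
    rcases lt_trichotomy k n with hkn | hkn | hkn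
    · have h1 : xl n < xl k := by
        have := chain k n hk1 hkn; have := h_pair n hn; linarith
      have h2 : xl n < xu k := by
        have := h_pair k hk1; linarith
      rw [vanish _ h1, vanish _ h2, if_neg (by omega : ¬ k = n), if_neg (by omega : ¬ n + 1 ≤ k)]
      have hz : c k * ((0 : ℝ) - 0) - (0 + 0) = 0 := by ring
      rw [hz, abs_zero]
      exact mul_nonneg (by linarith) (hc_nonneg k)
    · subst hkn
      obtain ⟨j, hjm, hSUeq, hfj⟩ := main_est (xl k) (h_lt k hn) le_rfl
      have hv : SU (xu k) = 0 := vanish _ (h_pair k hn)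
      rw [hSUeq, hv, if_pos rfl, if_neg (by omega : ¬ k + 1 ≤ k)]
      have hck : c k = (k : ℝ) ^ (-β) := by simp [hc_def, hn]
      have hrw : c k * (f (ξ j) - 0) - ((k : ℝ) ^ (-β) * f (xl k) + 0)
          = c k * (f (ξ j) - f (xl k)) := by rw [hck]; ring
      rw [hrw, abs_mul, abs_of_nonneg (hc_nonneg k)]
      nlinarith [hc_nonneg k, abs_nonneg (f (ξ j) - f (xl k)), hfj.le, hε'0.le]
    · have hk1' : 1 ≤ k := by omega
      have hukn : xu k < xl n := chain n k hn hkn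
      have haxl : a < xl k := h_lt k hk1'
      have haxu : a < xu k := lt_trans haxl (h_pair k hk1')
      obtain ⟨j1, hj1m, hS1, hf1⟩ := main_est (xl k) haxl (by linarith [h_pair k hk1'])
      obtain ⟨j2, hj2m, hS2, hf2⟩ := main_est (xu k) haxu hukn.le
      rw [hS1, hS2, if_neg (by omega : ¬ k = n), if_pos (by omega : n + 1 ≤ k)]
      have hck : c k = (k : ℝ) ^ (-β) := by simp [hc_def, hk1']
      have hrw : c k * (f (ξ j1) - f (ξ j2)) - (0 + (k : ℝ) ^ (-β) * (f (xl k) - f (xu k)))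
          = c k * ((f (ξ j1) - f (xl k)) - (f (ξ j2) - f (xu k))) := by rw [hck]; ring
      rw [hrw, abs_mul, abs_of_nonneg (hc_nonneg k)]
      have habs : |(f (ξ j1) - f (xl k)) - (f (ξ j2) - f (xu k))| ≤ 2 * ε' := by
        calc |(f (ξ j1) - f (xl k)) - (f (ξ j2) - f (xu k))|
            ≤ |f (ξ j1) - f (xl k)| + |f (ξ j2) - f (xu k)| := abs_sub _ _
          _ ≤ ε' + ε' := add_le_add hf1.le hf2.le
          _ = 2 * ε' := by ring
      calc c k * |(f (ξ j1) - f (xl k)) - (f (ξ j2) - f (xu k))|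
          ≤ c k * (2 * ε') := mul_le_mul_of_nonneg_left habs (hc_nonneg k)
        _ = 2 * ε' * c k := by ring
  -- summability facts
  have hesummable : Summable (fun k => if k = n then (n : ℝ) ^ (-β) * f (xl n) else 0) := by
    apply summable_of_ne_finset_zero (s := {n})
    intro k hks
    simp only [Finset.mem_singleton] at hks
    rw [if_neg hks]
  have hdsummable :
      Summable (fun k => if n + 1 ≤ k then (k : ℝ) ^ (-β) * (f (xl k) - f (xu k)) else 0) := by
    apply Summable.of_norm_bounded (hc_summable.mul_left (2 * M))
    intro k
    by_cases hk : n + 1 ≤ k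
    · have hk1 : 1 ≤ k := by omega
      have hck : c k = (k : ℝ) ^ (-β) := by simp [hc_def, hk1]
      rw [if_pos hk, Real.norm_eq_abs, abs_mul,
        abs_of_nonneg (Real.rpow_nonneg (Nat.cast_nonneg k) _)]
      have hfl := hM (xl k) (hxl_mem k hk1)
      have hfu := hM (xu k) (hxu_mem k hk1)
      rw [Real.norm_eq_abs] at hfl hfu
      have habs : |f (xl k) - f (xu k)| ≤ 2 * M := by
        calc |f (xl k) - f (xu k)| ≤ |f (xl k)| + |f (xu k)| := abs_sub _ _
          _ ≤ 2 * M := by linarith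
      calc (k : ℝ) ^ (-β) * |f (xl k) - f (xu k)| ≤ (k : ℝ) ^ (-β) * (2 * M) :=
            mul_le_mul_of_nonneg_left habs (Real.rpow_nonneg (Nat.cast_nonneg k) _)
        _ = 2 * M * c k := by rw [hck]; ring
    · rw [if_neg hk]
      simp only [norm_zero]
      exact mul_nonneg (by linarith) (hc_nonneg k)
  have hBsummable : Summable Bf := by
    simp only [hB_def]
    exact hesummable.add hdsummable
  have hsub : Summable (fun k => A k - Bf k) := by
    apply Summable.of_norm_bounded (hc_summable.mul_left (2 * ε'))
    intro k
    rw [Real.norm_eq_abs]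
    exact key k
  have hAsummable : Summable A := by
    have := hsub.add hBsummable
    simpa using this
  -- compute RSSum
  have inner_eq : ∀ k, (∑ i ∈ Finset.range m, f (ξ i) * (hk k (t (i + 1)) - hk k (t i))) = A k := by
    intro k
    simp only [hA_def, hSU_def, hk_eq]
    rw [mul_sub, Finset.mul_sum, Finset.mul_sum, ← Finset.sum_sub_distrib]
    exact Finset.sum_congr rfl fun i _ => by ring
  have hRS : RSSum f h m t ξ = ∑' k, A k := by
    unfold RSSum
    calc ∑ i ∈ Finset.range m, f (ξ i) * (h (t (i + 1)) - h (t i))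
        = ∑ i ∈ Finset.range m, ∑' k, f (ξ i) * (hk k (t (i + 1)) - hk k (t i)) := by
          refine Finset.sum_congr rfl fun i _ => ?_
          rw [hh' (t (i + 1)), hh' (t i), ← Summable.tsum_sub (hsum_hk _) (hsum_hk _), ← tsum_mul_left]
      _ = ∑' k, ∑ i ∈ Finset.range m, f (ξ i) * (hk k (t (i + 1)) - hk k (t i)) :=
          (Summable.tsum_finsetSum fun i _ => ((hsum_hk _).sub (hsum_hk _)).mul_left _).symm
      _ = ∑' k, A k := tsum_congr inner_eq
  -- compute tsum of Bf
  have hBtsum : ∑' k, Bf k = (n : ℝ) ^ (-β) * f (xl n) -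
      ∑' k : ℕ, (if n + 1 ≤ k then (k : ℝ) ^ (-β) * (f (xu k) - f (xl k)) else 0) := by
    simp only [hB_def]
    rw [Summable.tsum_add hesummable hdsummable, tsum_ite_eq]
    congr 1
    have hcong : ∀ k : ℕ, (if n + 1 ≤ k then (k : ℝ) ^ (-β) * (f (xl k) - f (xu k)) else 0)
        = -(if n + 1 ≤ k then (k : ℝ) ^ (-β) * (f (xu k) - f (xl k)) else 0) := by
      intro k
      split_ifs
      · ring
      · ring
    rw [tsum_congr hcong, tsum_neg]
  rw [hRS, ← hBtsum, ← Summable.tsum_sub hAsummable hBsummable]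
  calc |∑' k, (A k - Bf k)| ≤ ∑' k, |A k - Bf k| := by
        simpa [Real.norm_eq_abs] using norm_tsum_le_tsum_norm
          (f := fun k => A k - Bf k) (by simpa [Real.norm_eq_abs] using hsub.abs)
    _ ≤ ∑' k, 2 * ε' * c k := Summable.tsum_le_tsum key hsub.abs (hc_summable.mul_left _)
    _ = 2 * ε' * C := by rw [tsum_mul_left]
    _ < ε := by
        rw [hε'_def]
        have h1 : (0 : ℝ) < C + 1 := by linarith
        have heq : 2 * (ε / (2 * (C + 1))) * C = ε * (C / (C + 1)) := by
          field_simp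
        rw [heq]
        have h2 : C / (C + 1) < 1 := (div_lt_one h1).mpr (by linarith)
        calc ε * (C / (C + 1)) < ε * 1 := by
              apply mul_lt_mul_of_pos_left h2 hε
          _ = ε := mul_one ε
end

section
/- Let f : [a,b] → (0,∞) be continuous with sequences (x̲_n), (x̄_n) satisfying a < ⋯ < x̲_n < x̄_n < ⋯ < x̲_1 < x̄_1 ≤ b, lim_{n→∞} x̄_n = a, and f(x̄_n) − f(x̲_n) ≥ α n^{−γ} for all n, where α > 0 and γ ∈ (0,1). Let β > 1 and h(x) := Σ_{n∈ℕ} n^{−β} χ_{[x̲_n, x̄_n)}(x). Then there exists n₀ ∈ ℕ such that for all n ≥ n₀, ∫_a^{x̲_n} f(x) dh(x) < 0. -/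
open Set Filter MeasureTheory

lemma abel_aux (F H : ℕ → ℝ) : ∀ m : ℕ, 0 < m →
    ∑ i ∈ Finset.range m, F i * (H (i+1) - H i)
      = F (m-1) * H m - F 0 * H 0 + ∑ i ∈ Finset.Ico 1 m, (F (i-1) - F i) * H i := by
  intro m
  induction m with
  | zero => simp
  | succ m ih =>
    intro _
    rcases Nat.eq_zero_or_pos m with hm | hm
    · subst hm; simp; ring
    · rw [Finset.sum_range_succ, ih hm, Finset.sum_Ico_succ_top (by omega : 1 ≤ m)]
      have h1 : m + 1 - 1 = m := by omega
      rw [h1]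
      ring

lemma telescope_aux (G : ℕ → ℝ) (p q : ℕ) (hp : 1 ≤ p) (hpq : p ≤ q) :
    ∑ i ∈ Finset.Ico p q, (G (i-1) - G i) = G (p-1) - G (q-1) := by
  induction q, hpq using Nat.le_induction with
  | base => simp
  | succ q hq ih =>
    rw [Finset.sum_Ico_succ_top hq, ih]
    have h1 : q + 1 - 1 = q := rfl
    rw [h1]
    have h2 : 1 ≤ q := le_trans hp hq
    ring

lemma RS_unique {f g : ℝ → ℝ} {a b I J : ℝ} (hab : a < b)
    (hI : HasRSIntegral f g a b I) (hJ : HasRSIntegral f g a b J) : I = J := by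
  by_contra hne
  have habs : 0 < |I - J| := abs_pos.mpr (sub_ne_zero.mpr hne)
  have hε : 0 < |I - J| / 2 := by linarith
  obtain ⟨δ1, hδ1, H1⟩ := hI _ hε
  obtain ⟨δ2, hδ2, H2⟩ := hJ _ hε
  set δ := min δ1 δ2 with hδdef
  have hδ : 0 < δ := lt_min hδ1 hδ2
  obtain ⟨m, hm⟩ := exists_nat_gt ((b - a) / δ)
  have hba : 0 < b - a := by linarith
  have hmpos0 : (0:ℝ) < (m:ℝ) := lt_of_lt_of_le (by positivity) (le_of_lt hm)
  have hm0 : 0 < m := by exact_mod_cast hmpos0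
  set t : ℕ → ℝ := fun i => a + i * ((b - a) / m) with ht
  have hstep : ∀ i : ℕ, t (i+1) - t i = (b-a)/m := by
    intro i; simp only [ht]; push_cast; ring
  have hsteppos : 0 < (b-a)/m := by positivity
  have hstepδ : (b-a)/m < δ := by
    rw [div_lt_iff₀ hmpos0]
    calc b - a = ((b-a)/δ) * δ := by field_simp
    _ < m * δ := by apply mul_lt_mul_of_pos_right hm hδ
    _ = δ * m := by ring
  have htmono : ∀ i < m, t i < t (i+1) := by
    intro i _
    have h1 := hstep i
    have h2 : 0 < t (i+1) - t i := h1 ▸ hsteppos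
    linarith
  have hpart : IsTaggedPartition a b m t t := by
    refine ⟨hm0, by simp [ht], ?_, htmono, fun i hi => ⟨le_rfl, le_of_lt (htmono i hi)⟩⟩
    simp only [ht]; field_simp; ring
  have hmesh1 : ∀ i < m, t (i+1) - t i < δ1 := by
    intro i _; rw [hstep]; exact lt_of_lt_of_le hstepδ (min_le_left _ _)
  have hmesh2 : ∀ i < m, t (i+1) - t i < δ2 := by
    intro i _; rw [hstep]; exact lt_of_lt_of_le hstepδ (min_le_right _ _)
  have e1 := H1 m t t hpart hmesh1
  have e2 := H2 m t t hpart hmesh2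
  have : |I - J| < |I - J| := by
    calc |I - J| = |(RSSum f g m t t - J) - (RSSum f g m t t - I)| := by ring_nf
    _ ≤ |RSSum f g m t t - J| + |RSSum f g m t t - I| := abs_sub _ _
    _ < |I - J| / 2 + |I - J| / 2 := add_lt_add e2 e1
    _ = |I - J| := by ring
  exact absurd this (lt_irrefl _)

lemma RSIntegral_eq {f g : ℝ → ℝ} {a b I : ℝ} (hab : a < b) (hI : HasRSIntegral f g a b I) :
    RSIntegral f g a b = I := by
  rw [RSIntegral, dif_pos ⟨I, hI⟩]
  exact RS_unique hab (Exists.choose_spec (⟨I, hI⟩ : ∃ I, HasRSIntegral f g a b I)) hI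

set_option maxHeartbeats 1000000 in
/-- under the oscillation condition `f(x̄ₙ) − f(x̲ₙ) ≥ α n^{-γ}`, there is
`n₀` such that `∫_a^{x̲ₙ} f dh < 0` for all `n ≥ n₀`. -/
theorem stmt_7 (a b α β γ : ℝ) (f : ℝ → ℝ) (xl xu : ℕ → ℝ)
    (hf_cont : ContinuousOn f (Set.Icc a b))
    (hf_pos : ∀ x ∈ Set.Icc a b, 0 < f x)
    (hα : 0 < α) (hγ : γ ∈ Set.Ioo (0 : ℝ) 1) (hβ : 1 < β)
    (h_lt : ∀ n : ℕ, 1 ≤ n → a < xl n)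
    (h_pair : ∀ n : ℕ, 1 ≤ n → xl n < xu n)
    (h_order : ∀ n : ℕ, 1 ≤ n → xu (n + 1) < xl n)
    (h_top : xu 1 ≤ b)
    (h_lim : Filter.Tendsto xu Filter.atTop (nhds a))
    (h_osc : ∀ n : ℕ, 1 ≤ n → α * (n : ℝ) ^ (-γ) ≤ f (xu n) - f (xl n))
    (h : ℝ → ℝ)
    (hh : ∀ x : ℝ, h x =
      ∑' n : ℕ, if 1 ≤ n ∧ x ∈ Set.Ico (xl n) (xu n) then (n : ℝ) ^ (-β) else 0) :
    ∃ n₀ : ℕ, 1 ≤ n₀ ∧ ∀ n : ℕ, n₀ ≤ n → RSIntegral f h a (xl n) < 0 := by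
  classical
  obtain ⟨hγ0, hγ1⟩ := hγ
  have chain : ∀ k l : ℕ, 1 ≤ k → k < l → xu l < xl k := by
    intro k l hk hkl
    induction l, hkl using Nat.le_induction with
    | base => exact h_order k hk
    | succ l hl ih =>
      exact lt_trans (lt_trans (h_order l (by omega)) (h_pair l (by omega))) ih
  have hxub : ∀ k : ℕ, 1 ≤ k → xu k ≤ b := by
    intro k hk
    rcases eq_or_lt_of_le hk with h1 | h1
    · rw [← h1]; exact h_top
    · exact le_trans (le_of_lt (lt_trans (chain 1 k le_rfl h1) (h_pair 1 le_rfl))) h_top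
  have hmem : ∀ k : ℕ, 1 ≤ k → xl k ∈ Set.Icc a b ∧ xu k ∈ Set.Icc a b := fun k hk =>
    ⟨⟨le_of_lt (h_lt k hk), le_trans (le_of_lt (h_pair k hk)) (hxub k hk)⟩,
     ⟨le_of_lt (lt_trans (h_lt k hk) (h_pair k hk)), hxub k hk⟩⟩
  have hab : a < b := lt_of_lt_of_le (lt_trans (h_lt 1 le_rfl) (h_pair 1 le_rfl)) h_top
  have sumβ : Summable (fun k : ℕ => (k:ℝ) ^ (-β)) := by
    rw [Real.summable_nat_rpow]; linarith
  have rpow_nn : ∀ (k : ℕ) (s : ℝ), 0 ≤ (k:ℝ) ^ s := fun k s =>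
    Real.rpow_nonneg (Nat.cast_nonneg k) s
  set C := ∑' k : ℕ, (k:ℝ) ^ (-β) with hCdef
  have hC1 : (1:ℝ) ≤ C := by
    have h1 := Summable.le_tsum sumβ 1 (fun j _ => rpow_nn j _)
    simpa using h1
  have hCpos : (0:ℝ) < C := lt_of_lt_of_le one_pos hC1
  obtain ⟨xM, hxM, hMmax⟩ :=
    isCompact_Icc.exists_isMaxOn (Set.nonempty_Icc.mpr hab.le) hf_cont
  set M := f xM with hMdef
  have hMpos : 0 < M := hf_pos xM hxM
  have hfM : ∀ y ∈ Set.Icc a b, f y ≤ M := fun y hy => hMmax hy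
  have Ssummand : ∀ x : ℝ, Summable
      (fun k : ℕ => if 1 ≤ k ∧ x ∈ Set.Ico (xl k) (xu k) then (k:ℝ)^(-β) else 0) := by
    intro x
    apply Summable.of_nonneg_of_le _ _ sumβ
    · intro k; split_ifs; exacts [rpow_nn k _, le_rfl]
    · intro k; split_ifs; exacts [le_rfl, rpow_nn k _]
  have ha0 : h a = 0 := by
    rw [hh a]
    have hz : ∀ k:ℕ, (if 1 ≤ k ∧ a ∈ Set.Ico (xl k) (xu k) then (k:ℝ)^(-β) else 0) = 0 := by
      intro k; rw [if_neg]; rintro ⟨hk1, hk2⟩; exact absurd hk2.1 (not_le.mpr (h_lt k hk1))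
    rw [tsum_congr hz, tsum_zero]
  -- the uniform continuity of f
  have hUC := Metric.uniformContinuousOn_iff.mp
    (isCompact_Icc.uniformContinuousOn_of_continuous hf_cont)
  -- main existence statement
  have main : ∀ n : ℕ, 1 ≤ n → HasRSIntegral f h a (xl n)
      ((n:ℝ)^(-β) * f (xl n) +
        ∑' k : ℕ, (if n < k then (k:ℝ)^(-β) * (f (xl k) - f (xu k)) else 0)) := by
    intro n hn
    set A : ℕ → ℝ := fun k => if n < k then (k:ℝ)^(-β) * (f (xl k) - f (xu k)) else 0 with hAdef
    have hAabs : ∀ k, |A k| ≤ M * (k:ℝ)^(-β) := by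
      intro k
      simp only [hAdef]
      split_ifs with hk
      · have hk1 : 1 ≤ k := by omega
        have h1 := (hf_pos _ (hmem k hk1).1)
        have h2 := (hf_pos _ (hmem k hk1).2)
        have h3 := hfM _ (hmem k hk1).1
        have h4 := hfM _ (hmem k hk1).2
        rw [abs_mul, abs_of_nonneg (rpow_nn k _)]
        rw [mul_comm M _]
        apply mul_le_mul_of_nonneg_left _ (rpow_nn k _)
        rw [abs_sub_le_iff]
        constructor <;> linarith
      · simp [rpow_nn k _, le_of_lt hMpos]
        positivity
    have hAsum : Summable A :=
      Summable.of_abs (Summable.of_nonneg_of_le (fun k => abs_nonneg _) hAabs (sumβ.mul_left M))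
    have hcval : h (xl n) = (n:ℝ)^(-β) := by
      rw [hh]
      rw [tsum_eq_single n ?_, if_pos ⟨hn, le_rfl, h_pair n hn⟩]
      intro k hkne
      rw [if_neg]
      rintro ⟨hk1, hmem2⟩
      rcases lt_or_gt_of_ne hkne with hlt | hgt
      · exact absurd hmem2.1 (not_le.mpr (lt_trans (h_pair n hn) (chain k n hk1 hlt)))
      · exact absurd hmem2.2 (not_lt.mpr (le_of_lt (chain n k hn hgt)))
    intro ε hε
    set ε' := ε / (4 * C) with hε'def
    have hε' : 0 < ε' := by positivity
    obtain ⟨δ, hδ, hδUC⟩ := hUC ε' hε'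
    refine ⟨δ, hδ, ?_⟩
    rintro m t ξ ⟨hm, ht0, htm, hti, hξi⟩ hmesh
    have tmono : ∀ i j : ℕ, i ≤ j → j ≤ m → t i ≤ t j := by
      intro i j hij hjm
      induction j, hij using Nat.le_induction with
      | base => exact le_rfl
      | succ j hj ih => exact le_trans (ih (by omega)) (le_of_lt (hti j (by omega)))
    have tltm : ∀ i, i < m → t i < t m := fun i hi =>
      lt_of_lt_of_le (hti i hi) (tmono (i+1) m (by omega) le_rfl)
    have ξrange : ∀ i, i < m → ξ i ∈ Set.Icc a b := by
      intro i hi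
      obtain ⟨h1, h2⟩ := hξi i hi
      constructor
      · exact le_trans (ht0 ▸ tmono 0 i (by omega) (by omega)) h1
      · refine le_trans h2 (le_trans (htm ▸ tmono (i+1) m (by omega) le_rfl) ?_)
        exact le_trans (le_of_lt (h_pair n hn)) (hxub n hn)
    have hxlnb : xl n ≤ b := le_trans (le_of_lt (h_pair n hn)) (hxub n hn)
    -- Abel summation
    have hRS : RSSum f h m t ξ = f (ξ (m-1)) * h (t m) - f (ξ 0) * h (t 0)
        + ∑ i ∈ Finset.Ico 1 m, (f (ξ (i-1)) - f (ξ i)) * h (t i) := by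
      rw [RSSum]
      exact abel_aux (fun i => f (ξ i)) (fun j => h (t j)) m hm
    rw [hRS, ht0, htm, ha0, hcval, mul_zero, sub_zero]
    -- swap sum and tsum
    set D : ℕ → ℝ := fun k => ∑ i ∈ Finset.Ico 1 m,
      (f (ξ (i-1)) - f (ξ i)) *
        (if 1 ≤ k ∧ t i ∈ Set.Ico (xl k) (xu k) then (k:ℝ)^(-β) else 0) with hDdef
    have hswap : ∑ i ∈ Finset.Ico 1 m, (f (ξ (i-1)) - f (ξ i)) * h (t i) = ∑' k, D k := by
      have e1 : ∑ i ∈ Finset.Ico 1 m, (f (ξ (i-1)) - f (ξ i)) * h (t i)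
          = ∑ i ∈ Finset.Ico 1 m, ∑' k : ℕ, (f (ξ (i-1)) - f (ξ i)) *
              (if 1 ≤ k ∧ t i ∈ Set.Ico (xl k) (xu k) then (k:ℝ)^(-β) else 0) := by
        apply Finset.sum_congr rfl
        intro i _
        rw [hh (t i), ← tsum_mul_left]
      rw [e1, hDdef]
      exact (Summable.tsum_finsetSum (fun i _ => ((Ssummand (t i)).mul_left _))).symm
    rw [hswap]
    -- summability of D
    set B := ∑ i ∈ Finset.Ico 1 m, |f (ξ (i-1)) - f (ξ i)| with hBdef
    have hDabs : ∀ k, |D k| ≤ B * (k:ℝ)^(-β) := by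
      intro k
      calc |D k| ≤ ∑ i ∈ Finset.Ico 1 m, |(f (ξ (i-1)) - f (ξ i)) *
          (if 1 ≤ k ∧ t i ∈ Set.Ico (xl k) (xu k) then (k:ℝ)^(-β) else 0)| :=
        Finset.abs_sum_le_sum_abs _ _
      _ ≤ ∑ i ∈ Finset.Ico 1 m, |f (ξ (i-1)) - f (ξ i)| * (k:ℝ)^(-β) := by
          apply Finset.sum_le_sum
          intro i _
          rw [abs_mul]
          apply mul_le_mul_of_nonneg_left _ (abs_nonneg _)
          rw [abs_of_nonneg (by split_ifs; exacts [rpow_nn k _, le_rfl])]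
          split_ifs; exacts [le_rfl, rpow_nn k _]
      _ = B * (k:ℝ)^(-β) := by rw [hBdef, Finset.sum_mul]
    have hDsum : Summable D :=
      Summable.of_abs (Summable.of_nonneg_of_le (fun k => abs_nonneg _) hDabs (sumβ.mul_left B))
    -- the key estimate
    have key : ∀ k : ℕ, |D k - A k| ≤ 2 * ε' * (k:ℝ)^(-β) := by
      intro k
      have h2ε' : 0 ≤ 2 * ε' * (k:ℝ)^(-β) := by positivity
      rcases Nat.lt_or_ge n k with hnk | hkn
      swap
      · -- k ≤ n : D k = 0 and A k = 0
        have hD0 : D k = 0 := by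
          simp only [hDdef]
          apply Finset.sum_eq_zero
          intro i hi
          rw [Finset.mem_Ico] at hi
          rw [if_neg, mul_zero]
          rintro ⟨hk1, hmem2⟩
          have hti_lt : t i < xl n := htm ▸ tltm i hi.2
          have hxln_le : xl n ≤ xl k := by
            rcases eq_or_lt_of_le hkn with he | hlt'
            · rw [he]
            · exact le_of_lt (lt_trans (h_pair n hn) (chain k n hk1 hlt'))
          exact absurd hmem2.1 (not_le.mpr (lt_of_lt_of_le hti_lt hxln_le))
        have hA0 : A k = 0 := by rw [hAdef]; exact if_neg (by omega)
        rw [hD0, hA0, sub_zero, abs_zero]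
        exact h2ε'
      · -- n < k
        have hk1 : 1 ≤ k := by omega
        have hukxln : xu k < xl n := chain n k hn hnk
        have hxlk_tm : xl k ≤ t m := by
          rw [htm]; exact le_of_lt (lt_trans (h_pair k hk1) hukxln)
        have hxuk_tm : xu k ≤ t m := by rw [htm]; exact le_of_lt hukxln
        have hPu : ∃ i, xl k ≤ t i ∧ i ≤ m := ⟨m, hxlk_tm, le_rfl⟩
        have hPv : ∃ i, xu k ≤ t i ∧ i ≤ m := ⟨m, hxuk_tm, le_rfl⟩
        obtain ⟨p, hp, hpmin⟩ : ∃ p : ℕ, (xl k ≤ t p ∧ p ≤ m) ∧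
            ∀ j, j < p → ¬(xl k ≤ t j ∧ j ≤ m) :=
          ⟨Nat.find hPu, Nat.find_spec hPu, fun j hj => Nat.find_min hPu hj⟩
        obtain ⟨q, hq, hqmin⟩ : ∃ q : ℕ, (xu k ≤ t q ∧ q ≤ m) ∧
            ∀ j, j < q → ¬(xu k ≤ t j ∧ j ≤ m) :=
          ⟨Nat.find hPv, Nat.find_spec hPv, fun j hj => Nat.find_min hPv hj⟩
        have hpmin' : ∀ i, xl k ≤ t i → i ≤ m → p ≤ i := by
          intro i h1 h2
          by_contra hc
          push_neg at hc
          exact hpmin i hc ⟨h1, h2⟩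
        have hqmin' : ∀ i, xu k ≤ t i → i ≤ m → q ≤ i := by
          intro i h1 h2
          by_contra hc
          push_neg at hc
          exact hqmin i hc ⟨h1, h2⟩
        have hpm : p ≤ m := hp.2
        have hqm : q ≤ m := hq.2
        have hp1 : 1 ≤ p := by
          rcases Nat.eq_zero_or_pos p with h0 | h0
          · exfalso
            have hthis := hp.1
            rw [h0, ht0] at hthis
            exact absurd hthis (not_le.mpr (h_lt k hk1))
          · exact h0
        have hpq : p ≤ q :=
          hpmin' q (le_trans (le_of_lt (h_pair k hk1)) hq.1) hq.2
        have hq1 : 1 ≤ q := le_trans hp1 hpq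
        have charu : ∀ i, i ≤ m → (xl k ≤ t i ↔ p ≤ i) := by
          intro i him
          constructor
          · intro hx; exact hpmin' i hx him
          · intro hpi; exact le_trans hp.1 (tmono p i hpi him)
        have charv : ∀ i, i ≤ m → (xu k ≤ t i ↔ q ≤ i) := by
          intro i him
          constructor
          · intro hx; exact hqmin' i hx him
          · intro hqi; exact le_trans hq.1 (tmono q i hqi him)
        have tpm1 : t (p-1) < xl k := by
          have h' := hpmin (p-1) (by omega)
          rw [not_and] at h'
          exact not_le.mp (fun hx => (h' hx) (by omega))
        have tqm1 : t (q-1) < xu k := by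
          have h' := hqmin (q-1) (by omega)
          rw [not_and] at h'
          exact not_le.mp (fun hx => (h' hx) (by omega))
        have hAval : A k = (k:ℝ)^(-β) * (f (xl k) - f (xu k)) := by
          rw [hAdef]; exact if_pos hnk
        -- D k = k^{-β} * telescoping sum
        have hDval : D k = (k:ℝ)^(-β) * ∑ i ∈ Finset.Ico p q, (f (ξ (i-1)) - f (ξ i)) := by
          simp only [hDdef]
          have hsubset : Finset.Ico p q ⊆ Finset.Ico 1 m := by
            intro i hi
            rw [Finset.mem_Ico] at hi ⊢
            omega
          have hvanish : ∀ i ∈ Finset.Ico 1 m, i ∉ Finset.Ico p q →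
              (f (ξ (i-1)) - f (ξ i)) *
                (if 1 ≤ k ∧ t i ∈ Set.Ico (xl k) (xu k) then (k:ℝ)^(-β) else 0) = 0 := by
            intro i hi hni
            rw [Finset.mem_Ico] at hi
            rw [Finset.mem_Ico] at hni
            push_neg at hni
            have him : i ≤ m := by omega
            rw [if_neg, mul_zero]
            rintro ⟨-, hmem2⟩
            rcases Nat.lt_or_ge i p with hip | hip
            · exact absurd hmem2.1 (by rw [charu i him]; omega)
            · exact absurd hmem2.2 (not_lt.mpr ((charv i him).mpr (hni hip)))
          rw [← Finset.sum_subset hsubset hvanish, Finset.mul_sum]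
          apply Finset.sum_congr rfl
          intro i hi
          rw [Finset.mem_Ico] at hi
          have him : i ≤ m := by omega
          rw [if_pos, mul_comm]
          refine ⟨hk1, (charu i him).mpr hi.1, ?_⟩
          by_contra hcon
          push_neg at hcon
          exact absurd ((charv i him).mp hcon) (by omega)
        rcases eq_or_lt_of_le hpq with hpq' | hpq'
        · -- p = q : no partition point inside, D k = 0
          have hD0 : D k = 0 := by
            rw [hDval, ← hpq', Finset.Ico_self, Finset.sum_empty, mul_zero]
          have hdist : dist (xl k) (xu k) < δ := by
            have hm1 : p - 1 < m := by omega
            have hmesh' := hmesh (p-1) hm1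
            have hpp : p - 1 + 1 = p := by omega
            rw [hpp] at hmesh'
            have hvq : xu k ≤ t p := by rw [hpq']; exact hq.1
            rw [Real.dist_eq, abs_sub_lt_iff]
            have := h_pair k hk1
            constructor <;> linarith
          have hUCk := hδUC _ (hmem k hk1).1 _ (hmem k hk1).2 hdist
          rw [Real.dist_eq] at hUCk
          rw [hD0, hAval, zero_sub, abs_neg, abs_mul, abs_of_nonneg (rpow_nn k _)]
          calc (k:ℝ)^(-β) * |f (xl k) - f (xu k)| ≤ (k:ℝ)^(-β) * ε' :=
              mul_le_mul_of_nonneg_left (le_of_lt hUCk) (rpow_nn k _)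
          _ ≤ 2 * ε' * (k:ℝ)^(-β) := by nlinarith [rpow_nn k (-β)]
        · -- p < q : telescoping
          have htel : ∑ i ∈ Finset.Ico p q, (f (ξ (i-1)) - f (ξ i))
              = f (ξ (p-1)) - f (ξ (q-1)) :=
            telescope_aux (fun i => f (ξ i)) p q hp1 hpq
          -- estimate |f (ξ (p-1)) - f (xl k)| < ε'
          have hest1 : |f (ξ (p-1)) - f (xl k)| < ε' := by
            have hm1 : p - 1 < m := by omega
            obtain ⟨hξ1, hξ2⟩ := hξi (p-1) hm1
            have hpp : p - 1 + 1 = p := by omega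
            rw [hpp] at hξ2
            have hmesh' := hmesh (p-1) hm1
            rw [hpp] at hmesh'
            have hdist : dist (ξ (p-1)) (xl k) < δ := by
              rw [Real.dist_eq, abs_sub_lt_iff]
              have := hp.1
              constructor <;> linarith
            have := hδUC _ (ξrange (p-1) hm1) _ (hmem k hk1).1 hdist
            rwa [Real.dist_eq] at this
          have hest2 : |f (ξ (q-1)) - f (xu k)| < ε' := by
            have hm1 : q - 1 < m := by omega
            obtain ⟨hξ1, hξ2⟩ := hξi (q-1) hm1
            have hqq : q - 1 + 1 = q := by omega
            rw [hqq] at hξ2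
            have hmesh' := hmesh (q-1) hm1
            rw [hqq] at hmesh'
            have hdist : dist (ξ (q-1)) (xu k) < δ := by
              rw [Real.dist_eq, abs_sub_lt_iff]
              have := hq.1
              constructor <;> linarith
            have := hδUC _ (ξrange (q-1) hm1) _ (hmem k hk1).2 hdist
            rwa [Real.dist_eq] at this
          rw [hDval, htel, hAval, ← mul_sub]
          rw [abs_mul, abs_of_nonneg (rpow_nn k _)]
          have hb2 : |f (ξ (p-1)) - f (ξ (q-1)) - (f (xl k) - f (xu k))| ≤ 2 * ε' := by
            have e : f (ξ (p-1)) - f (ξ (q-1)) - (f (xl k) - f (xu k))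
                = (f (ξ (p-1)) - f (xl k)) - (f (ξ (q-1)) - f (xu k)) := by ring
            rw [e]
            calc |(f (ξ (p-1)) - f (xl k)) - (f (ξ (q-1)) - f (xu k))|
                ≤ |f (ξ (p-1)) - f (xl k)| + |f (ξ (q-1)) - f (xu k)| := abs_sub _ _
            _ ≤ 2 * ε' := by linarith
          calc (k:ℝ)^(-β) * |f (ξ (p-1)) - f (ξ (q-1)) - (f (xl k) - f (xu k))|
              ≤ (k:ℝ)^(-β) * (2 * ε') := mul_le_mul_of_nonneg_left hb2 (rpow_nn k _)
          _ = 2 * ε' * (k:ℝ)^(-β) := by ring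
    -- conclude
    have hsub : ∑' k, D k - ∑' k, A k = ∑' k, (D k - A k) := (Summable.tsum_sub hDsum hAsum).symm
    have habs1 : |∑' k, (D k - A k)| ≤ ∑' k, |D k - A k| := by
      have := norm_tsum_le_tsum_norm (f := fun k => D k - A k)
        (Summable.of_nonneg_of_le (fun k => abs_nonneg _) key ((sumβ.mul_left (2 * ε'))))
      simpa using this
    have habs2 : ∑' k, |D k - A k| ≤ 2 * ε' * C := by
      rw [hCdef, ← tsum_mul_left]
      exact Summable.tsum_le_tsum key
        (Summable.of_nonneg_of_le (fun k => abs_nonneg _) key ((sumβ.mul_left (2 * ε'))))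
        (sumβ.mul_left _)
    have hξm : |f (ξ (m-1)) - f (xl n)| < ε' := by
      have hm1 : m - 1 < m := by omega
      obtain ⟨h1, h2⟩ := hξi (m-1) hm1
      have hmm : m - 1 + 1 = m := by omega
      rw [hmm] at h2
      have hmesh' := hmesh (m-1) hm1
      rw [hmm] at hmesh'
      have hd : dist (ξ (m-1)) (xl n) < δ := by
        rw [Real.dist_eq, abs_sub_lt_iff]
        have := htm ▸ tltm (m-1) hm1
        constructor <;> [skip; skip] <;> · rw [← htm]; linarith
      have := hδUC _ (ξrange (m-1) hm1) _ (hmem n hn).1 hd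
      rwa [Real.dist_eq] at this
    have hnC : (n:ℝ)^(-β) ≤ C := Summable.le_tsum sumβ n (fun j _ => rpow_nn j _)
    calc |f (ξ (m-1)) * (n:ℝ)^(-β) + ∑' k, D k -
          ((n:ℝ)^(-β) * f (xl n) + ∑' k, A k)|
        = |(f (ξ (m-1)) - f (xl n)) * (n:ℝ)^(-β) + ∑' k, (D k - A k)| := by
          rw [← hsub]; ring_nf
    _ ≤ |(f (ξ (m-1)) - f (xl n)) * (n:ℝ)^(-β)| + |∑' k, (D k - A k)| := abs_add_le _ _
    _ ≤ |f (ξ (m-1)) - f (xl n)| * (n:ℝ)^(-β) + 2 * ε' * C := by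
        rw [abs_mul, abs_of_nonneg (rpow_nn n _)]
        exact add_le_add le_rfl (le_trans habs1 habs2)
    _ ≤ ε' * C + 2 * ε' * C := by
        apply add_le_add_left
        calc |f (ξ (m-1)) - f (xl n)| * (n:ℝ)^(-β) ≤ ε' * (n:ℝ)^(-β) :=
            mul_le_mul_of_nonneg_right (le_of_lt hξm) (rpow_nn n _)
        _ ≤ ε' * C := mul_le_mul_of_nonneg_left hnC (le_of_lt hε')
    _ = 3 * (ε' * C) := by ring
    _ < ε := by
        have hεC : ε' * C = ε / 4 := by
          rw [hε'def, div_mul_eq_mul_div, mul_comm 4 C, ← div_div,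
            mul_div_assoc, div_self (ne_of_gt hCpos), mul_one]
        rw [hεC]; linarith
  -- Now the negativity of the integral for large n
  have hs1 : 1 < β + γ := by linarith
  have sumS : Summable (fun k : ℕ => (k:ℝ) ^ (-(β+γ))) := by
    rw [Real.summable_nat_rpow]; linarith
  have htend : Filter.Tendsto (fun n : ℕ => α * 2^(-(β+γ)) * (n:ℝ)^(1-γ))
      Filter.atTop Filter.atTop := by
    apply Filter.Tendsto.const_mul_atTop (by positivity : (0:ℝ) < α * 2^(-(β+γ)))
    exact (tendsto_rpow_atTop (by linarith : (0:ℝ) < 1 - γ)).comp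
      tendsto_natCast_atTop_atTop
  obtain ⟨n₀, hn₀⟩ := Filter.eventually_atTop.mp (htend.eventually_gt_atTop M)
  refine ⟨max n₀ 1, le_max_right _ _, ?_⟩
  intro n hn
  have hn1 : 1 ≤ n := le_trans (le_max_right n₀ 1) hn
  have hn0' : n₀ ≤ n := le_trans (le_max_left _ _) hn
  have hnM := hn₀ n hn0'
  have npos : (0:ℝ) < (n:ℝ) := by exact_mod_cast hn1
  rw [RSIntegral_eq (h_lt n hn1) (main n hn1)]
  -- bound the first term
  have hterm1 : (n:ℝ)^(-β) * f (xl n) ≤ (n:ℝ)^(-β) * M :=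
    mul_le_mul_of_nonneg_left (hfM _ (hmem n hn1).1) (rpow_nn n _)
  -- bound the tsum
  set G : ℕ → ℝ := fun k => if n < k then (k:ℝ)^(-(β+γ)) else 0 with hGdef
  have hGnn : ∀ k, 0 ≤ G k := by
    intro k; simp only [hGdef]; split_ifs; exacts [rpow_nn k _, le_rfl]
  have hGsum : Summable G := by
    apply Summable.of_nonneg_of_le hGnn _ sumS
    intro k; simp only [hGdef]; split_ifs; exacts [le_rfl, rpow_nn k _]
  have hAG : ∀ k : ℕ, (if n < k then (k:ℝ)^(-β) * (f (xl k) - f (xu k)) else 0)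
      ≤ -α * G k := by
    intro k
    simp only [hGdef]
    split_ifs with hk
    · have hk1 : 1 ≤ k := by omega
      have hkpos : (0:ℝ) < (k:ℝ) := by exact_mod_cast hk1
      have hosc := h_osc k hk1
      have e : (k:ℝ)^(-β) * (k:ℝ)^(-γ) = (k:ℝ)^(-(β+γ)) := by
        rw [← Real.rpow_add hkpos]; ring_nf
      calc (k:ℝ)^(-β) * (f (xl k) - f (xu k)) ≤ (k:ℝ)^(-β) * (-(α * (k:ℝ)^(-γ))) :=
          mul_le_mul_of_nonneg_left (by linarith) (rpow_nn k _)
      _ = -α * ((k:ℝ)^(-β) * (k:ℝ)^(-γ)) := by ring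
      _ = -α * (k:ℝ)^(-(β+γ)) := by rw [e]
    · simp
  have hAsum' : Summable (fun k : ℕ => if n < k then (k:ℝ)^(-β) * (f (xl k) - f (xu k)) else 0) := by
    apply Summable.of_abs
    apply Summable.of_nonneg_of_le (fun k => abs_nonneg _) _ (sumβ.mul_left M)
    intro k
    split_ifs with hk
    · have hk1 : 1 ≤ k := by omega
      have h1 := (hf_pos _ (hmem k hk1).1)
      have h2 := (hf_pos _ (hmem k hk1).2)
      have h3 := hfM _ (hmem k hk1).1
      have h4 := hfM _ (hmem k hk1).2
      rw [abs_mul, abs_of_nonneg (rpow_nn k _), mul_comm M _]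
      apply mul_le_mul_of_nonneg_left _ (rpow_nn k _)
      rw [abs_sub_le_iff]
      constructor <;> linarith
    · simp; positivity
  have htsum_le : (∑' k : ℕ, (if n < k then (k:ℝ)^(-β) * (f (xl k) - f (xu k)) else 0))
      ≤ -α * ∑' k, G k := by
    rw [← tsum_mul_left]
    exact Summable.tsum_le_tsum hAG hAsum' (hGsum.mul_left _)
  -- lower bound for ∑' G
  have hGlb : (n:ℝ) * (2*(n:ℝ))^(-(β+γ)) ≤ ∑' k, G k := by
    have hcard : (Finset.Ioc n (2*n)).card = n := by
      rw [Nat.card_Ioc]; omega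
    have hlb : ∀ k ∈ Finset.Ioc n (2*n), (2*(n:ℝ))^(-(β+γ)) ≤ G k := by
      intro k hk
      rw [Finset.mem_Ioc] at hk
      simp only [hGdef]
      rw [if_pos hk.1]
      have hkpos : (0:ℝ) < (k:ℝ) := by exact_mod_cast (by omega : 0 < k)
      apply Real.rpow_le_rpow_of_nonpos hkpos _ (by linarith)
      exact_mod_cast hk.2
    have hc1 : (n:ℝ) * (2*(n:ℝ))^(-(β+γ))
        = (Finset.Ioc n (2*n)).card • ((2*(n:ℝ))^(-(β+γ))) := by
      rw [hcard, nsmul_eq_mul]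
    rw [hc1]
    have hc2 : (Finset.Ioc n (2*n)).card • ((2*(n:ℝ))^(-(β+γ)))
        ≤ ∑ k ∈ Finset.Ioc n (2*n), G k := Finset.card_nsmul_le_sum _ _ _ hlb
    have hc3 : ∑ k ∈ Finset.Ioc n (2*n), G k ≤ ∑' k, G k :=
      Summable.sum_le_tsum _ (fun k _ => hGnn k) hGsum
    linarith
  have hstep2 : -α * ∑' k, G k ≤ -α * ((n:ℝ) * (2*(n:ℝ))^(-(β+γ))) := by
    apply mul_le_mul_of_nonpos_left hGlb (by linarith)
  -- final numeric comparison
  have e1 : (2*(n:ℝ))^(-(β+γ)) = 2^(-(β+γ)) * (n:ℝ)^(-(β+γ)) :=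
    Real.mul_rpow (by norm_num) (le_of_lt npos)
  have e2 : (n:ℝ) * (n:ℝ)^(-(β+γ)) = (n:ℝ)^(1-γ) * (n:ℝ)^(-β) := by
    have a1 : (n:ℝ) * (n:ℝ)^(-(β+γ)) = (n:ℝ)^(1 + -(β+γ)) := by
      rw [Real.rpow_add npos, Real.rpow_one]
    have a2 : (n:ℝ)^(1-γ) * (n:ℝ)^(-β) = (n:ℝ)^((1-γ) + -β) := (Real.rpow_add npos _ _).symm
    rw [a1, a2]
    congr 1
    ring
  have hnegβpos : (0:ℝ) < (n:ℝ)^(-β) := Real.rpow_pos_of_pos npos _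
  have hfinal : M * (n:ℝ)^(-β) < α * ((n:ℝ) * (2*(n:ℝ))^(-(β+γ))) := by
    calc M * (n:ℝ)^(-β) < (α * 2^(-(β+γ)) * (n:ℝ)^(1-γ)) * (n:ℝ)^(-β) :=
        mul_lt_mul_of_pos_right hnM hnegβpos
    _ = α * ((n:ℝ) * (2*(n:ℝ))^(-(β+γ))) := by
        rw [e1]
        calc α * 2^(-(β+γ)) * (n:ℝ)^(1-γ) * (n:ℝ)^(-β)
            = α * 2^(-(β+γ)) * ((n:ℝ)^(1-γ) * (n:ℝ)^(-β)) := by ring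
        _ = α * 2^(-(β+γ)) * ((n:ℝ) * (n:ℝ)^(-(β+γ))) := by rw [← e2]
        _ = α * ((n:ℝ) * (2^(-(β+γ)) * (n:ℝ)^(-(β+γ)))) := by ring
  calc (n:ℝ)^(-β) * f (xl n) +
        (∑' k : ℕ, (if n < k then (k:ℝ)^(-β) * (f (xl k) - f (xu k)) else 0))
      ≤ (n:ℝ)^(-β) * M + -α * ((n:ℝ) * (2*(n:ℝ))^(-(β+γ))) :=
        add_le_add hterm1 (le_trans htsum_le hstep2)
  _ < 0 := by rw [mul_comm ((n:ℝ)^(-β)) M]; linarith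
end

section
/- Fix γ ∈ (0,1) and define f : [0,1] → (0,∞) by f(x) := x^γ sin(1/x) + 2 for x > 0 and f(0) := 2. Set x̄_n := (2/π)·1/(4n−3) and x̲_n := (2/π)·1/(4n−1) for n ∈ ℕ. Then f is continuous and strictly positive, the sequences satisfy 0 < ⋯ < x̲_n < x̄_n < ⋯ < x̲_1 < x̄_1 ≤ 1 and lim_{n→∞} x̄_n = 0, and f(x̄_n) − f(x̲_n) ≥ α n^{−γ} for all n ∈ ℕ with α = 2(2π)^{−γ}. -/
open Set Filter MeasureTheory

/-- Example 3 of the paper: `f x = x^γ sin (1/x) + 2` (with `f 0 = 2`) is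
continuous and positive on `[0, 1]`, and with `x̄ₙ = (2/π)/(4n−3)`, `x̲ₙ = (2/π)/(4n−1)` it
satisfies the hypotheses of the negative theorem with `α = 2 (2π)^{-γ}`. -/
theorem stmt_9 (γ : ℝ) (hγ : γ ∈ Set.Ioo (0 : ℝ) 1) (f : ℝ → ℝ) (xl xu : ℕ → ℝ)
    (hf0 : f 0 = 2)
    (hf : ∀ x : ℝ, 0 < x → f x = x ^ γ * Real.sin (1 / x) + 2)
    (hxu : ∀ n : ℕ, xu n = 2 / Real.pi * (1 / (4 * (n : ℝ) - 3)))
    (hxl : ∀ n : ℕ, xl n = 2 / Real.pi * (1 / (4 * (n : ℝ) - 1))) :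
    ContinuousOn f (Set.Icc 0 1) ∧
    (∀ x ∈ Set.Icc (0 : ℝ) 1, 0 < f x) ∧
    (∀ n : ℕ, 1 ≤ n → 0 < xl n) ∧
    (∀ n : ℕ, 1 ≤ n → xl n < xu n) ∧
    (∀ n : ℕ, 1 ≤ n → xu (n + 1) < xl n) ∧
    xu 1 ≤ 1 ∧
    Filter.Tendsto xu Filter.atTop (nhds 0) ∧
    (∀ n : ℕ, 1 ≤ n →
      2 * (2 * Real.pi) ^ (-γ) * (n : ℝ) ^ (-γ) ≤ f (xu n) - f (xl n)) := by
  obtain ⟨hγ0, hγ1⟩ := hγ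
  have hπ : (0:ℝ) < Real.pi := Real.pi_pos
  -- the "global" formula
  have hfg : ∀ x ∈ Set.Icc (0:ℝ) 1, f x = x ^ γ * Real.sin (1 / x) + 2 := by
    intro x hx
    rcases eq_or_lt_of_le hx.1 with h | h
    · simp [← h, hf0, Real.zero_rpow hγ0.ne']
    · exact hf x h
  -- continuity
  have hcont : ContinuousOn (fun x : ℝ => x ^ γ * Real.sin (1 / x) + 2) (Set.Icc 0 1) := by
    intro x hx
    rcases eq_or_lt_of_le hx.1 with h | h
    · -- x = 0
      subst h
      have h1 : Filter.Tendsto (fun x : ℝ => x ^ γ * Real.sin (1 / x))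
          (nhdsWithin 0 (Set.Icc 0 1)) (nhds 0) := by
        apply squeeze_zero_norm' (a := fun x : ℝ => x ^ γ)
        · filter_upwards [self_mem_nhdsWithin] with x hx
          have hx0 : (0:ℝ) ≤ x := hx.1
          have h2 : |x ^ γ * Real.sin (1 / x)| ≤ x ^ γ := by
            rw [abs_mul, abs_of_nonneg (Real.rpow_nonneg hx0 γ)]
            calc x ^ γ * |Real.sin (1 / x)| ≤ x ^ γ * 1 :=
              mul_le_mul_of_nonneg_left (abs_le.mpr ⟨Real.neg_one_le_sin _, Real.sin_le_one _⟩) (Real.rpow_nonneg hx0 γ)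
            _ = x ^ γ := mul_one _
          show ‖x ^ γ * Real.sin (1 / x)‖ ≤ x ^ γ
          rw [Real.norm_eq_abs]; exact h2
        · have := (Real.continuousAt_rpow_const 0 γ (Or.inr hγ0.le)).continuousWithinAt
            (s := Set.Icc (0:ℝ) 1)
          simpa [ContinuousWithinAt, Real.zero_rpow hγ0.ne'] using this
      have : Filter.Tendsto (fun x : ℝ => x ^ γ * Real.sin (1 / x) + 2)
          (nhdsWithin 0 (Set.Icc 0 1)) (nhds ((0:ℝ) + 2)) := h1.add tendsto_const_nhds
      simpa [ContinuousWithinAt, Real.zero_rpow hγ0.ne'] using this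
    · -- x > 0
      apply ContinuousAt.continuousWithinAt
      have h1 : ContinuousAt (fun x : ℝ => x ^ γ) x :=
        Real.continuousAt_rpow_const x γ (Or.inl h.ne')
      have h2 : ContinuousAt (fun x : ℝ => Real.sin (1 / x)) x :=
        Real.continuous_sin.continuousAt.comp ((continuousAt_const.div continuousAt_id h.ne'))
      exact (h1.mul h2).add continuousAt_const
  have hfc : ContinuousOn f (Set.Icc 0 1) := hcont.congr hfg
  refine ⟨hfc, ?_, ?_, ?_, ?_, ?_, ?_, ?_⟩
  · -- positivity
    intro x hx
    rw [hfg x hx]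
    have hx0 : (0:ℝ) ≤ x := hx.1
    have hb : |x ^ γ * Real.sin (1 / x)| ≤ 1 := by
      rw [abs_mul, abs_of_nonneg (Real.rpow_nonneg hx0 γ)]
      have h1 : x ^ γ ≤ 1 := Real.rpow_le_one hx0 hx.2 hγ0.le
      calc x ^ γ * |Real.sin (1 / x)| ≤ 1 * 1 :=
        mul_le_mul h1 (abs_le.mpr ⟨Real.neg_one_le_sin _, Real.sin_le_one _⟩) (abs_nonneg _) zero_le_one
      _ = 1 := one_mul _
    nlinarith [abs_le.mp hb]
  · intro n hn
    have hn1 : (1:ℝ) ≤ (n:ℝ) := by exact_mod_cast hn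
    have h2 : (0:ℝ) < 4 * (n:ℝ) - 1 := by linarith
    rw [hxl]
    exact mul_pos (div_pos two_pos Real.pi_pos) (div_pos one_pos h2)
  · intro n hn
    have hn1 : (1:ℝ) ≤ (n:ℝ) := by exact_mod_cast hn
    rw [hxl, hxu]
    have h1 : (0:ℝ) < 4 * (n:ℝ) - 3 := by linarith
    have h2 : (0:ℝ) < 4 * (n:ℝ) - 1 := by linarith
    have h3 : 1 / (4 * (n:ℝ) - 1) < 1 / (4 * (n:ℝ) - 3) :=
      one_div_lt_one_div_of_lt h1 (by linarith)
    exact mul_lt_mul_of_pos_left h3 (by positivity)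
  · intro n hn
    have hn1 : (1:ℝ) ≤ (n:ℝ) := by exact_mod_cast hn
    rw [hxl, hxu]
    push_cast
    have h1 : (0:ℝ) < 4 * (n:ℝ) - 1 := by linarith
    have h3 : 1 / (4 * ((n:ℝ)+1) - 3) < 1 / (4 * (n:ℝ) - 1) :=
      one_div_lt_one_div_of_lt h1 (by linarith)
    exact mul_lt_mul_of_pos_left h3 (by positivity)
  · rw [hxu]
    push_cast
    have : (2:ℝ) / Real.pi ≤ 1 := by
      rw [div_le_one hπ]
      linarith [Real.pi_gt_three]
    calc 2 / Real.pi * (1 / (4 * (1:ℝ) - 3)) = 2 / Real.pi := by norm_num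
    _ ≤ 1 := this
  · -- tendsto
    have h1 : Filter.Tendsto (fun n : ℕ => 4 * (n:ℝ) - 3) Filter.atTop Filter.atTop := by
      apply Filter.tendsto_atTop_add_const_right
      exact (tendsto_natCast_atTop_atTop).const_mul_atTop (by norm_num)
    have h2 : Filter.Tendsto (fun n : ℕ => (4 * (n:ℝ) - 3)⁻¹) Filter.atTop (nhds 0) :=
      h1.inv_tendsto_atTop
    have h3 := h2.const_mul (2 / Real.pi)
    rw [mul_zero] at h3
    refine h3.congr fun n => ?_
    rw [hxu, one_div]
  · -- main inequality
    intro n hn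
    have hn1 : (1:ℝ) ≤ (n:ℝ) := by exact_mod_cast hn
    have h1 : (0:ℝ) < 4 * (n:ℝ) - 3 := by linarith
    have h2 : (0:ℝ) < 4 * (n:ℝ) - 1 := by linarith
    have hxup : 0 < xu n := by rw [hxu]; positivity
    have hxlp : 0 < xl n := by rw [hxl]; positivity
    have hsinu : Real.sin (1 / xu n) = 1 := by
      have he : 1 / xu n = Real.pi / 2 + (((n:ℤ) - 1 : ℤ) : ℝ) * (2 * Real.pi) := by
        rw [hxu]; push_cast; field_simp; ring
      rw [he, Real.sin_add_int_mul_two_pi, Real.sin_pi_div_two]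
    have hsinl : Real.sin (1 / xl n) = -1 := by
      have he : 1 / xl n = -(Real.pi / 2) + (((n:ℤ) : ℤ) : ℝ) * (2 * Real.pi) := by
        rw [hxl]; push_cast; field_simp; ring
      rw [he, Real.sin_add_int_mul_two_pi, Real.sin_neg, Real.sin_pi_div_two]
    have hfu : f (xu n) = xu n ^ γ + 2 := by rw [hf _ hxup, hsinu, mul_one]
    have hfl : f (xl n) = -(xl n ^ γ) + 2 := by rw [hf _ hxlp, hsinl]; ring
    rw [hfu, hfl]
    have hkey : ((2 * Real.pi * n : ℝ))⁻¹ ^ γ = (2 * Real.pi) ^ (-γ) * (n:ℝ) ^ (-γ) := by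
      rw [Real.inv_rpow (by positivity), ← Real.rpow_neg (by positivity),
        Real.mul_rpow (by positivity) (Nat.cast_nonneg n)]
    have hxl2 : xl n = 2 / (Real.pi * (4 * (n:ℝ) - 1)) := by
      rw [hxl, div_mul_div_comm, mul_one]
    have hxu2 : xu n = 2 / (Real.pi * (4 * (n:ℝ) - 3)) := by
      rw [hxu, div_mul_div_comm, mul_one]
    have hlow : ((2 * Real.pi * n : ℝ))⁻¹ ≤ xl n := by
      rw [hxl2, inv_eq_one_div, div_le_div_iff₀ (by positivity) (by positivity)]
      nlinarith
    have hle : xl n ≤ xu n := by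
      rw [hxl2, hxu2]
      apply div_le_div_of_nonneg_left (by norm_num) (by positivity) (by nlinarith)
    have ha : ((2 * Real.pi * n : ℝ))⁻¹ ^ γ ≤ xl n ^ γ :=
      Real.rpow_le_rpow (by positivity) hlow hγ0.le
    have hb : ((2 * Real.pi * n : ℝ))⁻¹ ^ γ ≤ xu n ^ γ :=
      Real.rpow_le_rpow (by positivity) (hlow.trans hle) hγ0.le
    have hg : 2 * (2 * Real.pi) ^ (-γ) * (n:ℝ) ^ (-γ)
        = 2 * (((2 * Real.pi * n : ℝ))⁻¹ ^ γ) := by rw [hkey]; ring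
    rw [hg]
    linarith
end

section
/- Let f : [a,b] → (0,∞) be continuous, let g : [a,b] → [0,∞) be a non-vanishing function of bounded variation with g(a) = 0, and set x_L := inf{ x ∈ [a,b] : g(x) > 0 }. If there exists ε > 0 such that f is of bounded variation on [x_L, min(x_L + ε, b)], then ∫_a^y f(x) dg(x) > 0 for some y ∈ (a,b]. -/
open Set Filter MeasureTheory

namespace RSAux

lemma abel (u v : ℕ → ℝ) (m : ℕ) (hm : 0 < m) :
    ∑ i ∈ Finset.range m, u i * (v (i+1) - v i)
      = u (m-1) * v m - u 0 * v 0
        - ∑ i ∈ Finset.range (m-1), v (i+1) * (u (i+1) - u i) := by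
  induction m with
  | zero => omega
  | succ n ih =>
    rcases Nat.eq_zero_or_pos n with rfl | hn
    · simp; ring
    · rw [Finset.sum_range_succ, ih hn]
      have h2 : n - 1 + 1 = n := Nat.succ_pred_eq_of_pos hn
      have h1 : n + 1 - 1 = n := rfl
      rw [h1, show (Finset.range n) = Finset.range (n-1+1) by rw [h2],
        Finset.sum_range_succ, h2]
      ring

lemma tmono {a b : ℝ} {m : ℕ} {t ξ : ℕ → ℝ} (h : IsTaggedPartition a b m t ξ) :
    ∀ j ≤ m, ∀ i ≤ j, t i ≤ t j := by
  intro j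
  induction j with
  | zero =>
    intro _ i hi
    interval_cases i
    exact le_rfl
  | succ n ih =>
    intro hn i hi
    rcases Nat.lt_succ_iff_lt_or_eq.mp (Nat.lt_succ_of_le hi) with h' | rfl
    · exact (ih (by omega) i (by omega)).trans (le_of_lt (h.2.2.2.1 n (by omega)))
    · exact le_rfl
lemma trange {a b : ℝ} {m : ℕ} {t ξ : ℕ → ℝ} (h : IsTaggedPartition a b m t ξ) :
    ∀ i ≤ m, a ≤ t i ∧ t i ≤ b := by
  intro i hi
  constructor
  · have := tmono h i hi 0 (Nat.zero_le _); rwa [h.2.1] at this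
  · have := tmono h m le_rfl i hi; rwa [h.2.2.1] at this

lemma xirange {a b : ℝ} {m : ℕ} {t ξ : ℕ → ℝ} (h : IsTaggedPartition a b m t ξ) :
    ∀ i < m, a ≤ ξ i ∧ ξ i ≤ b := by
  intro i hi
  obtain ⟨h1, h2⟩ := h.2.2.2.2 i hi
  exact ⟨(trange h i (le_of_lt hi)).1.trans h1,
    h2.trans (trange h (i+1) hi).2⟩

lemma exists_fine_partition {a b : ℝ} (hab : a < b) {δ : ℝ} (hδ : 0 < δ) :
    ∃ (m : ℕ) (t ξ : ℕ → ℝ), IsTaggedPartition a b m t ξ ∧ ∀ i < m, t (i+1) - t i < δ := by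
  obtain ⟨m, hm⟩ := exists_nat_gt ((b - a) / δ)
  have hm0' : (0:ℝ) < m := lt_trans (div_pos (by linarith) hδ) hm
  have hm0 : 0 < m := by exact_mod_cast hm0'
  set s := (b - a) / (m:ℝ) with hs
  have hspos : 0 < s := div_pos (by linarith) hm0'
  have hsδ : s < δ := by
    rw [hs, div_lt_iff₀ hm0']
    calc b - a = ((b-a)/δ) * δ := by field_simp
    _ < m * δ := mul_lt_mul_of_pos_right hm hδ
    _ = δ * m := by ring
  refine ⟨m, fun i => a + i * s, fun i => a + i * s, ⟨hm0, by simp, ?_, ?_, ?_⟩, ?_⟩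
  · rw [hs]; field_simp; ring
  · intro i _
    have : (i:ℝ) < (i+1:ℕ) := by exact_mod_cast Nat.lt_succ_self i
    push_cast
    nlinarith
  · intro i _
    constructor
    · exact le_rfl
    · push_cast; nlinarith
  · intro i _
    push_cast
    linarith

lemma hasRS_sub {f g g1 g2 : ℝ → ℝ} {a y I1 I2 : ℝ}
    (h1 : HasRSIntegral f g1 a y I1) (h2 : HasRSIntegral f g2 a y I2)
    (hg : ∀ x ∈ Set.Icc a y, g x = g1 x - g2 x) :
    HasRSIntegral f g a y (I1 - I2) := by
  intro ε hε
  obtain ⟨δ1, hδ1, H1⟩ := h1 (ε/2) (by positivity)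
  obtain ⟨δ2, hδ2, H2⟩ := h2 (ε/2) (by positivity)
  refine ⟨min δ1 δ2, lt_min hδ1 hδ2, ?_⟩
  intro m t ξ hp hmesh
  have key : RSSum f g m t ξ = RSSum f g1 m t ξ - RSSum f g2 m t ξ := by
    rw [RSSum, RSSum, RSSum, ← Finset.sum_sub_distrib]
    refine Finset.sum_congr rfl ?_
    intro i hi
    rw [Finset.mem_range] at hi
    rw [hg (t (i+1)) ⟨(trange hp (i+1) hi).1, (trange hp (i+1) hi).2⟩,
      hg (t i) ⟨(trange hp i (le_of_lt hi)).1, (trange hp i (le_of_lt hi)).2⟩]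
    ring
  have e1 := H1 m t ξ hp (fun i hi => lt_of_lt_of_le (hmesh i hi) (min_le_left _ _))
  have e2 := H2 m t ξ hp (fun i hi => lt_of_lt_of_le (hmesh i hi) (min_le_right _ _))
  rw [key]
  have : RSSum f g1 m t ξ - RSSum f g2 m t ξ - (I1 - I2)
      = (RSSum f g1 m t ξ - I1) - (RSSum f g2 m t ξ - I2) := by ring
  rw [this]
  calc |(RSSum f g1 m t ξ - I1) - (RSSum f g2 m t ξ - I2)|
      ≤ |RSSum f g1 m t ξ - I1| + |RSSum f g2 m t ξ - I2| := abs_sub _ _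
  _ < ε/2 + ε/2 := add_lt_add e1 e2
  _ = ε := by ring
lemma hasRS_mono {a y : ℝ} (hay : a < y) {f g : ℝ → ℝ}
    (hf : ContinuousOn f (Set.Icc a y)) (hg : MonotoneOn g (Set.Icc a y)) :
    ∃ I, HasRSIntegral f g a y I := by
  classical
  have hmem : ∀ x : ℝ, max a (min x y) ∈ Set.Icc a y :=
    fun x => ⟨le_max_left _ _, max_le hay.le (min_le_right _ _)⟩
  set G : ℝ → ℝ := fun x => g (max a (min x y)) with hGdef
  have hGmono : Monotone G := by
    intro x x' hxx'
    exact hg (hmem x) (hmem x') (max_le_max le_rfl (min_le_min_right _ hxx'))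
  have hGeq : ∀ x ∈ Set.Icc a y, G x = g x := by
    intro x hx
    simp only [hGdef]
    rw [min_eq_left hx.2, max_eq_right hx.1]
  set σ := hGmono.stieltjesFunction with hσdef
  have hσ : ∀ x, σ x = Function.rightLim G x := fun x => hGmono.stieltjesFunction_eq x
  have hGle : ∀ x, G x ≤ σ x := fun x => (hσ x) ▸ hGmono.le_rightLim le_rfl
  have hσle : ∀ x z, x < z → σ x ≤ G z := fun x z h => (hσ x) ▸ hGmono.rightLim_le h
  have hσy : σ y = g y := by
    have h1 : σ y ≤ G (y+1) := hσle y (y+1) (by linarith)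
    have h2 : G (y+1) = g y := by
      show g (max a (min (y+1) y)) = g y
      rw [min_eq_right (by linarith), max_eq_right hay.le]
    have h3 : G y = g y := hGeq y ⟨hay.le, le_rfl⟩
    exact le_antisymm (h2 ▸ h1) (h3 ▸ hGle y)
  have hσa_ub : σ a ≤ g y := by
    have := hσle a y hay
    rwa [hGeq y ⟨hay.le, le_rfl⟩] at this
  have hσa_lb : g a ≤ σ a := by
    have := hGle a
    rwa [hGeq a ⟨le_rfl, hay.le⟩] at this
  have hσmono : Monotone (fun x => σ x) := σ.mono
  have hμIoc : ∀ u v : ℝ, σ.measure (Set.Ioc u v) = ENNReal.ofReal (σ v - σ u) :=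
    fun u v => σ.measure_Ioc u v
  have hintIcc : IntegrableOn f (Set.Icc a y) σ.measure := hf.integrableOn_Icc
  have hint : ∀ u v, a ≤ u → v ≤ y → IntegrableOn f (Set.Ioc u v) σ.measure := by
    intro u v hu hv
    exact hintIcc.mono_set (fun x hx => ⟨hu.trans (le_of_lt hx.1), hx.2.trans hv⟩)
  refine ⟨(∫ x in Set.Ioc a y, f x ∂σ.measure) + f a * (σ a - g a), ?_⟩
  intro ε' hε'
  have hVg : 0 ≤ g y - g a := by
    have := hg ⟨le_rfl, hay.le⟩ ⟨hay.le, le_rfl⟩ hay.le; linarith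
  set Vg := g y - g a with hVgdef
  set ε := ε' / (3 * Vg + 1) with hεdef
  have hεpos : 0 < ε := div_pos hε' (by linarith)
  have hunif := (isCompact_Icc (a := a) (b := y)).uniformContinuousOn_of_continuous hf
  rw [Metric.uniformContinuousOn_iff] at hunif
  obtain ⟨δ, hδpos, hδ⟩ := hunif ε hεpos
  refine ⟨δ/2, by positivity, ?_⟩
  intro m t ξ hp hmesh
  have htr : ∀ i ≤ m, a ≤ t i ∧ t i ≤ y := trange hp
  have hξr : ∀ i < m, a ≤ ξ i ∧ ξ i ≤ y := xirange hp
  have hm : 0 < m := hp.1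
  have ht0 : t 0 = a := hp.2.1
  have htm : t m = y := hp.2.2.1
  have hstep : ∀ i < m, t i < t (i+1) := hp.2.2.2.1
  have htag : ∀ i < m, ξ i ∈ Set.Icc (t i) (t (i+1)) := hp.2.2.2.2
  have hfd : ∀ u v : ℝ, u ∈ Set.Icc a y → v ∈ Set.Icc a y → dist u v < δ → |f u - f v| ≤ ε := by
    intro u v hu hv hd
    exact le_of_lt (by simpa [Real.dist_eq] using hδ u hu v hv hd)
  -- Abel decomposition
  have habel := abel (fun i => f (ξ i)) (fun i => G (t i) - σ (t i)) m hm
  have hGtm : G (t m) - σ (t m) = 0 := by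
    rw [htm, hGeq y ⟨hay.le, le_rfl⟩, hσy]; ring
  set Sσ := ∑ i ∈ Finset.range m, f (ξ i) * (σ (t (i+1)) - σ (t i)) with hSσ
  set T := ∑ i ∈ Finset.range (m-1), (G (t (i+1)) - σ (t (i+1))) * (f (ξ (i+1)) - f (ξ i)) with hT
  have hsplit : RSSum f g m t ξ = Sσ + (f (ξ 0) * (σ a - g a) - T) := by
    rw [RSSum]
    have hcong : ∀ i ∈ Finset.range m, f (ξ i) * (g (t (i+1)) - g (t i))
        = f (ξ i) * (σ (t (i+1)) - σ (t i))
          + (fun i => f (ξ i)) i * ((fun i => G (t i) - σ (t i)) (i+1) - (fun i => G (t i) - σ (t i)) i) := by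
      intro i hi
      rw [Finset.mem_range] at hi
      simp only
      rw [← hGeq (t (i+1)) ⟨(htr (i+1) hi).1, (htr (i+1) hi).2⟩,
          ← hGeq (t i) ⟨(htr i (le_of_lt hi)).1, (htr i (le_of_lt hi)).2⟩]
      ring
    rw [Finset.sum_congr rfl hcong, Finset.sum_add_distrib, habel]
    beta_reduce
    rw [hGtm, ht0, hGeq a ⟨le_rfl, hay.le⟩]
    simp only [hSσ, hT]
    ring
  -- splitting the integral over subintervals
  have hsum_int : ∫ x in Set.Ioc a y, f x ∂σ.measure
      = ∑ i ∈ Finset.range m, ∫ x in Set.Ioc (t i) (t (i+1)), f x ∂σ.measure := by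
    have key : ∀ k, k ≤ m → (∫ x in Set.Ioc a (t k), f x ∂σ.measure)
        = ∑ i ∈ Finset.range k, ∫ x in Set.Ioc (t i) (t (i+1)), f x ∂σ.measure := by
      intro k
      induction k with
      | zero => intro _; rw [ht0]; simp
      | succ n ih =>
        intro hn
        rw [Finset.sum_range_succ, ← ih (by omega),
          ← setIntegral_union (Set.Ioc_disjoint_Ioc_of_le le_rfl) measurableSet_Ioc
            (hint a (t n) le_rfl (htr n (by omega)).2)
            (hint (t n) (t (n+1)) (htr n (by omega)).1 (htr (n+1) hn).2),
          Set.Ioc_union_Ioc_eq_Ioc (htr n (by omega)).1 (le_of_lt (hstep n (by omega)))]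
    have := key m le_rfl
    rwa [htm] at this
  -- per-interval estimate
  have hterm : ∀ i < m, |f (ξ i) * (σ (t (i+1)) - σ (t i))
      - ∫ x in Set.Ioc (t i) (t (i+1)), f x ∂σ.measure| ≤ ε * (σ (t (i+1)) - σ (t i)) := by
    intro i hi
    have hσnn : 0 ≤ σ (t (i+1)) - σ (t i) := by
      have := σ.mono (le_of_lt (hstep i hi)); linarith
    have hmes : (σ.measure (Set.Ioc (t i) (t (i+1)))).toReal = σ (t (i+1)) - σ (t i) := by
      rw [hμIoc, ENNReal.toReal_ofReal hσnn]
    have hconst : f (ξ i) * (σ (t (i+1)) - σ (t i))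
        = ∫ _x in Set.Ioc (t i) (t (i+1)), f (ξ i) ∂σ.measure := by
      rw [setIntegral_const, measureReal_def, hmes, smul_eq_mul]; ring
    have hfin : σ.measure (Set.Ioc (t i) (t (i+1))) < ⊤ := by
      rw [hμIoc]; exact ENNReal.ofReal_lt_top
    have hsub : f (ξ i) * (σ (t (i+1)) - σ (t i))
        - (∫ x in Set.Ioc (t i) (t (i+1)), f x ∂σ.measure)
        = ∫ x in Set.Ioc (t i) (t (i+1)), (f (ξ i) - f x) ∂σ.measure := by
      rw [integral_sub (integrableOn_const (C := f (ξ i)) hfin.ne)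
        (hint (t i) (t (i+1)) (htr i (le_of_lt hi)).1 (htr (i+1) hi).2), ← hconst]
    rw [hsub]
    have := norm_setIntegral_le_of_norm_le_const hfin (C := ε)
      (f := fun x => f (ξ i) - f x) ?_
    · rw [Real.norm_eq_abs] at this
      calc |∫ x in Set.Ioc (t i) (t (i+1)), (f (ξ i) - f x) ∂σ.measure|
          ≤ ε * (σ.measure (Set.Ioc (t i) (t (i+1)))).toReal := this
      _ = ε * (σ (t (i+1)) - σ (t i)) := by rw [hmes]
    · intro x hx
      have hxI : x ∈ Set.Icc a y :=
        ⟨(htr i (le_of_lt hi)).1.trans (le_of_lt hx.1), hx.2.trans (htr (i+1) hi).2⟩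
      have hξI : ξ i ∈ Set.Icc a y := ⟨(hξr i hi).1, (hξr i hi).2⟩
      have h1 := (htag i hi).1
      have h2 := (htag i hi).2
      have h3 := hmesh i hi
      have hd : dist (ξ i) x < δ := by
        rw [Real.dist_eq, abs_lt]
        obtain ⟨hx1, hx2⟩ := hx
        constructor <;> linarith
      simpa [Real.norm_eq_abs] using hfd (ξ i) x hξI hxI hd
  -- Bound 1
  have hB1 : |Sσ - ∫ x in Set.Ioc a y, f x ∂σ.measure| ≤ ε * Vg := by
    rw [hsum_int, hSσ, ← Finset.sum_sub_distrib]
    calc |∑ i ∈ Finset.range m, (f (ξ i) * (σ (t (i+1)) - σ (t i))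
          - ∫ x in Set.Ioc (t i) (t (i+1)), f x ∂σ.measure)|
        ≤ ∑ i ∈ Finset.range m, |f (ξ i) * (σ (t (i+1)) - σ (t i))
          - ∫ x in Set.Ioc (t i) (t (i+1)), f x ∂σ.measure| := Finset.abs_sum_le_sum_abs _ _
    _ ≤ ∑ i ∈ Finset.range m, ε * (σ (t (i+1)) - σ (t i)) :=
        Finset.sum_le_sum (fun i hi => hterm i (Finset.mem_range.mp hi))
    _ = ε * (σ (t m) - σ (t 0)) := by
        rw [← Finset.mul_sum, Finset.sum_range_sub (fun i => σ (t i))]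
    _ ≤ ε * Vg := by
        apply mul_le_mul_of_nonneg_left _ hεpos.le
        rw [htm, ht0, hσy, hVgdef]
        linarith
  -- Bound 2
  have hB2 : |(f (ξ 0) - f a) * (σ a - g a)| ≤ ε * Vg := by
    rw [abs_mul]
    apply mul_le_mul _ _ (abs_nonneg _) hεpos.le
    · apply hfd _ _ ⟨(hξr 0 hm).1, (hξr 0 hm).2⟩ ⟨le_rfl, hay.le⟩
      rw [Real.dist_eq, abs_lt]
      have h1 := (htag 0 hm).1
      have h2 := (htag 0 hm).2
      have h3 := hmesh 0 hm
      constructor <;> linarith [ht0, h1, h2, h3]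
    · rw [abs_of_nonneg (by linarith)]
      rw [hVgdef]; linarith
  -- Bound 3
  have hB3 : |T| ≤ ε * Vg := by
    rw [hT]
    calc |∑ i ∈ Finset.range (m-1), (G (t (i+1)) - σ (t (i+1))) * (f (ξ (i+1)) - f (ξ i))|
        ≤ ∑ i ∈ Finset.range (m-1), |(G (t (i+1)) - σ (t (i+1))) * (f (ξ (i+1)) - f (ξ i))| :=
          Finset.abs_sum_le_sum_abs _ _
    _ ≤ ∑ i ∈ Finset.range (m-1), (σ (t (i+1)) - G (t (i+1))) * ε := by
        apply Finset.sum_le_sum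
        intro i hi
        rw [Finset.mem_range] at hi
        have hi1 : i + 1 < m := by omega
        have hle := hGle (t (i+1))
        rw [abs_mul, abs_sub_comm (G (t (i+1))) (σ (t (i+1))), abs_of_nonneg (by linarith)]
        apply mul_le_mul_of_nonneg_left _ (by linarith)
        apply hfd _ _ ⟨(hξr (i+1) hi1).1, (hξr (i+1) hi1).2⟩ ⟨(hξr i (by omega)).1, (hξr i (by omega)).2⟩
        rw [Real.dist_eq, abs_lt]
        have h1 := (htag i (by omega : i < m)).1
        have h2 := (htag i (by omega : i < m)).2
        have h1' := (htag (i+1) hi1).1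
        have h2' := (htag (i+1) hi1).2
        have h3 := hmesh i (by omega)
        have h3' := hmesh (i+1) hi1
        constructor <;> linarith
    _ ≤ ∑ i ∈ Finset.range (m-1), (G (t (i+1+1)) - G (t (i+1))) * ε := by
        apply Finset.sum_le_sum
        intro i hi
        rw [Finset.mem_range] at hi
        have hi1 : i + 1 < m := by omega
        have : σ (t (i+1)) ≤ G (t (i+1+1)) := hσle _ _ (hstep (i+1) hi1)
        exact mul_le_mul_of_nonneg_right (by linarith) hεpos.le
    _ = (G (t (m-1+1)) - G (t 1)) * ε := by
        rw [← Finset.sum_mul, Finset.sum_range_sub (fun i => G (t (i+1)))]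
    _ ≤ ε * Vg := by
        have hm1 : m - 1 + 1 = m := Nat.succ_pred_eq_of_pos hm
        rw [hm1, htm, hGeq y ⟨hay.le, le_rfl⟩]
        have hG1 : g a ≤ G (t 1) := by
          have := hGmono (show t 0 ≤ t 1 from le_of_lt (hstep 0 hm))
          rw [ht0, hGeq a ⟨le_rfl, hay.le⟩] at this
          linarith
        rw [hVgdef]
        nlinarith [hεpos.le]
  -- conclusion
  have hfinal : RSSum f g m t ξ - ((∫ x in Set.Ioc a y, f x ∂σ.measure) + f a * (σ a - g a))
      = (Sσ - ∫ x in Set.Ioc a y, f x ∂σ.measure) + (f (ξ 0) - f a) * (σ a - g a) - T := by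
    rw [hsplit]; ring
  rw [hfinal]
  have hq : ε * (3 * Vg + 1) = ε' := div_mul_cancel₀ _ (by linarith)
  calc |(Sσ - ∫ x in Set.Ioc a y, f x ∂σ.measure) + (f (ξ 0) - f a) * (σ a - g a) - T|
      ≤ |Sσ - ∫ x in Set.Ioc a y, f x ∂σ.measure| + |(f (ξ 0) - f a) * (σ a - g a)| + |T| := by
        calc |(Sσ - ∫ x in Set.Ioc a y, f x ∂σ.measure) + (f (ξ 0) - f a) * (σ a - g a) - T|
            ≤ |(Sσ - ∫ x in Set.Ioc a y, f x ∂σ.measure) + (f (ξ 0) - f a) * (σ a - g a)| + |T| :=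
              abs_sub _ _
        _ ≤ _ := by gcongr; exact abs_add_le _ _
  _ ≤ ε * Vg + ε * Vg + ε * Vg := by gcongr
  _ < ε' := by nlinarith [hεpos]
lemma hasRS_bv {a y : ℝ} (hay : a < y) {f g : ℝ → ℝ}
    (hf : ContinuousOn f (Set.Icc a y)) (hg : BoundedVariationOn g (Set.Icc a y)) :
    ∃ I, HasRSIntegral f g a y I := by
  obtain ⟨p, q, hp, hq, hpq⟩ := hg.locallyBoundedVariationOn.exists_monotoneOn_sub_monotoneOn
  obtain ⟨I1, hI1⟩ := hasRS_mono hay hf hp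
  obtain ⟨I2, hI2⟩ := hasRS_mono hay hf hq
  exact ⟨I1 - I2, hasRS_sub hI1 hI2 (fun x _ => by rw [hpq]; rfl)⟩

lemma evar_small {f : ℝ → ℝ} {p q : ℝ} (hpq : p < q)
    (hbv : eVariationOn f (Set.Icc p q) ≠ ⊤)
    (hcont : ContinuousWithinAt f (Set.Icc p q) p) :
    ∀ ε > 0, ∃ w, p < w ∧ w ≤ q ∧ eVariationOn f (Set.Icc p w) ≤ ENNReal.ofReal ε := by
  classical
  intro ε hε
  rw [Metric.continuousWithinAt_iff] at hcont
  obtain ⟨η, hηpos, hη⟩ := hcont (ε/4) (by positivity)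
  set q' := min (p + η/2) q with hq'def
  have hpq' : p < q' := lt_min (by linarith) hpq
  have hq'q : q' ≤ q := min_le_right _ _
  have hnear : ∀ x ∈ Set.Icc p q', dist (f x) (f p) < ε/4 := by
    intro x hx
    apply hη ⟨hx.1, hx.2.trans hq'q⟩
    rw [Real.dist_eq, abs_of_nonneg (by linarith [hx.1])]
    have := hx.2.trans (min_le_left _ _)
    linarith
  by_contra hcon
  push_neg at hcon
  have hcon' : ∀ w, p < w → w ≤ q' → ENNReal.ofReal ε < eVariationOn f (Set.Icc p w) :=
    fun w h1 h2 => hcon w h1 (h2.trans hq'q)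
  have claim : ∀ k : ℕ, ∃ w, p < w ∧ w ≤ q' ∧
      ENNReal.ofReal (k * (ε/2)) ≤ eVariationOn f (Set.Icc w q') := by
    intro k
    induction k with
    | zero => exact ⟨q', hpq', le_rfl, by simp⟩
    | succ n ih =>
      obtain ⟨w, hw1, hw2, hw3⟩ := ih
      have hlt' : ENNReal.ofReal ε
          < ⨆ pr : ℕ × { u : ℕ → ℝ // Monotone u ∧ ∀ i, u i ∈ Set.Icc p w },
            ∑ i ∈ Finset.range pr.1, edist (f (pr.2.1 (i + 1))) (f (pr.2.1 i)) :=
        hcon' w hw1 hw2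
      obtain ⟨⟨n', ⟨u, hu, hus⟩⟩, hsum⟩ := lt_iSup_iff.mp hlt'
      simp only at hsum
      have hT : ∃ i, p < u (i + 1) := by
        by_contra hT
        push_neg at hT
        have hup : ∀ i, u i = p := by
          intro i
          cases i with
          | zero => exact le_antisymm ((hu (Nat.zero_le 1)).trans (hT 0)) (hus 0).1
          | succ j => exact le_antisymm (hT j) (hus (j+1)).1
        have hzero : ∑ i ∈ Finset.range n', edist (f (u (i + 1))) (f (u i)) = 0 :=
          Finset.sum_eq_zero (fun i _ => by rw [hup (i+1), hup i, edist_self])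
        rw [hzero] at hsum
        simp at hsum
      set j := Nat.find hT with hjdef
      have hj : p < u (j + 1) := Nat.find_spec hT
      have hjmin : ∀ i < j, ¬ p < u (i + 1) := fun i hi => Nat.find_min hT hi
      have hterms0 : ∀ i < j, edist (f (u (i + 1))) (f (u i)) = 0 := by
        intro i hi
        have hui1 : u (i+1) = p := le_antisymm (not_lt.mp (hjmin i hi)) (hus (i+1)).1
        have hui : u i = p := by
          cases i with
          | zero => exact le_antisymm (hui1 ▸ hu (Nat.zero_le 1)) (hus 0).1
          | succ i' =>
            exact le_antisymm (not_lt.mp (hjmin i' (by omega))) (hus (i'+1)).1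
        rw [hui1, hui, edist_self]
      have hjn : j < n' := by
        by_contra hjn
        push_neg at hjn
        have hzero : ∑ i ∈ Finset.range n', edist (f (u (i + 1))) (f (u i)) = 0 :=
          Finset.sum_eq_zero (fun i hi =>
            hterms0 i (lt_of_lt_of_le (Finset.mem_range.mp hi) hjn))
        rw [hzero] at hsum
        simp at hsum
      set w' := u (j+1) with hw'def
      have hw'1 : p < w' := hj
      have hw'w : w' ≤ w := (hus (j+1)).2
      -- split the sum
      have hsplit : ∑ i ∈ Finset.range n', edist (f (u (i + 1))) (f (u i))
          = edist (f (u (j+1))) (f (u j))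
            + ∑ i ∈ Finset.Ico (j+1) n', edist (f (u (i + 1))) (f (u i)) := by
        rw [Finset.range_eq_Ico, ← Finset.sum_Ico_consecutive _ (Nat.zero_le (j+1)) hjn,
          ← Finset.range_eq_Ico, Finset.sum_range_succ]
        have : ∑ i ∈ Finset.range j, edist (f (u (i + 1))) (f (u i)) = 0 :=
          Finset.sum_eq_zero (fun i hi => hterms0 i (Finset.mem_range.mp hi))
        rw [this, zero_add]
      have htermj : edist (f (u (j+1))) (f (u j)) ≤ ENNReal.ofReal (ε/2) := by
        rw [edist_dist]
        apply ENNReal.ofReal_le_ofReal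
        have h1 := hnear (u (j+1)) ⟨(hus (j+1)).1, (hus (j+1)).2.trans hw2⟩
        have h2 := hnear (u j) ⟨(hus j).1, (hus j).2.trans hw2⟩
        calc dist (f (u (j+1))) (f (u j))
            ≤ dist (f (u (j+1))) (f p) + dist (f p) (f (u j)) := dist_triangle _ _ _
        _ ≤ ε/2 := by rw [dist_comm (f p)]; linarith
      have htail : ∑ i ∈ Finset.Ico (j+1) n', edist (f (u (i + 1))) (f (u i))
          ≤ eVariationOn f (Set.Icc w' w) := by
        have hv : Monotone (fun i => u (j + 1 + i)) := fun i i' h => hu (by omega)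
        have hvs : ∀ i, u (j + 1 + i) ∈ Set.Icc w' w :=
          fun i => ⟨hu (by omega), (hus _).2⟩
        have := eVariationOn.sum_le (f := f) (n := n' - (j+1)) hv hvs
        rw [Finset.sum_Ico_eq_sum_range]
        exact this
      have hstep : ENNReal.ofReal (ε/2) < eVariationOn f (Set.Icc w' w) := by
        have h1 : ENNReal.ofReal ε < ENNReal.ofReal (ε/2) + eVariationOn f (Set.Icc w' w) := by
          calc ENNReal.ofReal ε < _ := hsum
          _ = _ := hsplit
          _ ≤ ENNReal.ofReal (ε/2) + eVariationOn f (Set.Icc w' w) := add_le_add htermj htail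
        have h2 : ENNReal.ofReal ε = ENNReal.ofReal (ε/2) + ENNReal.ofReal (ε/2) := by
          rw [← ENNReal.ofReal_add (by positivity) (by positivity)]
          norm_num
        rw [h2] at h1
        exact (ENNReal.add_lt_add_iff_left ENNReal.ofReal_ne_top).mp h1
      have hadd : eVariationOn f (Set.Icc w' w) + eVariationOn f (Set.Icc w q')
          = eVariationOn f (Set.Icc w' q') := by
        have h := eVariationOn.Icc_add_Icc f hw'w hw2 (show w ∈ Set.Icc w' q' from ⟨hw'w, hw2⟩)
        have e1 : Set.Icc w' q' ∩ Set.Icc w' w = Set.Icc w' w := by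
          rw [Set.Icc_inter_Icc, sup_idem, inf_eq_right.mpr hw2]
        have e2 : Set.Icc w' q' ∩ Set.Icc w q' = Set.Icc w q' := by
          rw [Set.Icc_inter_Icc, inf_idem, sup_eq_right.mpr hw'w]
        have e3 : Set.Icc w' q' ∩ Set.Icc w' q' = Set.Icc w' q' := Set.inter_self _
        rwa [e1, e2, e3] at h
      refine ⟨w', hw'1, hw'w.trans hw2, ?_⟩
      rw [← hadd]
      have : ENNReal.ofReal (((n:ℕ)+1 : ℕ) * (ε/2))
          = ENNReal.ofReal (ε/2) + ENNReal.ofReal (n * (ε/2)) := by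
        rw [← ENNReal.ofReal_add (by positivity) (by positivity)]
        congr 1
        push_cast
        ring
      rw [this]
      exact add_le_add hstep.le hw3
  obtain ⟨k, hk⟩ := exists_nat_gt ((eVariationOn f (Set.Icc p q)).toReal / (ε/2))
  obtain ⟨w, h1, h2, h3⟩ := claim k
  have hle : ENNReal.ofReal (k * (ε/2)) ≤ eVariationOn f (Set.Icc p q) :=
    h3.trans (eVariationOn.mono f (Set.Icc_subset_Icc h1.le hq'q))
  have hle' : (k:ℝ) * (ε/2) ≤ (eVariationOn f (Set.Icc p q)).toReal :=
    (ENNReal.ofReal_le_iff_le_toReal hbv).mp hle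
  rw [div_lt_iff₀ (by positivity)] at hk
  linarith
end RSAux

set_option maxHeartbeats 2000000 in
open RSAux in
/-- refinement of Theorem 3: it suffices that `f` is of bounded variation on
`[x_L, min (x_L + ε) b]` for some `ε > 0`, where `x_L = inf { x ∈ [a,b] : g x > 0 }`. -/
theorem stmt_14 (a b : ℝ) (hab : a ≤ b) (f g : ℝ → ℝ)
    (hf_cont : ContinuousOn f (Set.Icc a b))
    (hf_pos : ∀ x ∈ Set.Icc a b, 0 < f x)
    (hg_nonneg : ∀ x ∈ Set.Icc a b, 0 ≤ g x)
    (hg_bv : BoundedVariationOn g (Set.Icc a b))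
    (hg_ne : ∃ x ∈ Set.Icc a b, g x ≠ 0)
    (hga : g a = 0)
    (xL : ℝ) (hxL : xL = sInf {x | x ∈ Set.Icc a b ∧ 0 < g x})
    (hf_bv : ∃ ε : ℝ, 0 < ε ∧ BoundedVariationOn f (Set.Icc xL (min (xL + ε) b))) :
    ∃ y ∈ Set.Ioc a b, 0 < RSIntegral f g a y := by
  classical
  obtain ⟨x₀, hx₀ab, hx₀ne⟩ := hg_ne
  have hx₀pos : 0 < g x₀ := lt_of_le_of_ne (hg_nonneg _ hx₀ab) (Ne.symm hx₀ne)
  have hab' : a < b := by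
    rcases eq_or_lt_of_le hab with rfl | h
    · exfalso
      have hx : x₀ = a := le_antisymm hx₀ab.2 hx₀ab.1
      rw [hx, hga] at hx₀pos
      exact lt_irrefl 0 hx₀pos
    · exact h
  set S := {x | x ∈ Set.Icc a b ∧ 0 < g x} with hSdef
  have hSne : S.Nonempty := ⟨x₀, hx₀ab, hx₀pos⟩
  have hSbd : BddBelow S := ⟨a, fun x hx => hx.1.1⟩
  have hxLa : a ≤ xL := by rw [hxL]; exact le_csInf hSne (fun x hx => hx.1.1)
  have hxLb : xL ≤ b := by
    rw [hxL]
    exact le_trans (csInf_le hSbd (show x₀ ∈ S from ⟨hx₀ab, hx₀pos⟩)) hx₀ab.2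
  have hxLmem : xL ∈ Set.Icc a b := ⟨hxLa, hxLb⟩
  have hg0 : ∀ x, a ≤ x → x < xL → g x = 0 := by
    intro x hax hxxL
    by_contra hne
    have hgx : 0 < g x := lt_of_le_of_ne (hg_nonneg x ⟨hax, hxxL.le.trans hxLb⟩) (Ne.symm hne)
    have : xL ≤ x := by
      rw [hxL]; exact csInf_le hSbd (show x ∈ S from ⟨⟨hax, hxxL.le.trans hxLb⟩, hgx⟩)
    linarith
  set c := f xL with hcdef
  have hc : 0 < c := hf_pos xL hxLmem
  have hcw : ContinuousWithinAt f (Set.Icc a b) xL := hf_cont xL hxLmem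
  rw [Metric.continuousWithinAt_iff] at hcw
  obtain ⟨η, hηpos, hη⟩ := hcw (c/16) (by positivity)
  obtain ⟨ε₀, hε₀pos, hfbv⟩ := hf_bv
  have hwex : ∃ w, xL ≤ w ∧ w ≤ b ∧ w ≤ xL + η/2 ∧
      eVariationOn f (Set.Icc xL w) ≤ ENNReal.ofReal (c/16) ∧ ∃ x ∈ Set.Icc xL w, 0 < g x := by
    rcases eq_or_lt_of_le hxLb with heq | hlt
    · refine ⟨xL, le_rfl, hxLb, by linarith, ?_, ⟨xL, ⟨le_rfl, le_rfl⟩, ?_⟩⟩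
      · rw [Set.Icc_self, eVariationOn.subsingleton f (Set.subsingleton_singleton)]
        exact bot_le
      · have hx1 : xL ≤ x₀ := by
          rw [hxL]; exact csInf_le hSbd (show x₀ ∈ S from ⟨hx₀ab, hx₀pos⟩)
        have : x₀ = xL := le_antisymm (heq ▸ hx₀ab.2) hx1
        rwa [← this]
    · set q := min (min (xL + ε₀) b) (xL + η/2) with hqdef
      have hq1 : xL < q := lt_min (lt_min (by linarith) hlt) (by linarith)
      have hqb : q ≤ b := le_trans (min_le_left _ _) (min_le_right _ _)
      have hbv' : eVariationOn f (Set.Icc xL q) ≠ ⊤ :=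
        ne_top_of_le_ne_top hfbv
          (eVariationOn.mono f (Set.Icc_subset_Icc le_rfl (min_le_left _ _)))
      have hcont' : ContinuousWithinAt f (Set.Icc xL q) xL :=
        (hf_cont xL hxLmem).mono (Set.Icc_subset_Icc hxLa hqb)
      obtain ⟨w, hw1, hw2, hw3⟩ := evar_small hq1 hbv' hcont' (c/16) (by positivity)
      refine ⟨w, hw1.le, hw2.trans hqb, hw2.trans (min_le_right _ _), hw3, ?_⟩
      obtain ⟨x, hxS, hxw⟩ := exists_lt_of_csInf_lt hSne (show sInf S < w by rw [← hxL]; exact hw1)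
      have hxxL : xL ≤ x := by rw [hxL]; exact csInf_le hSbd hxS
      exact ⟨x, ⟨hxxL, hxw.le⟩, hxS.2⟩
  obtain ⟨w, hxLw, hwb, hwη, hwvar, x₁, hx₁mem, hx₁pos⟩ := hwex
  have himg_ne : (g '' Set.Icc xL w).Nonempty := ⟨g x₁, x₁, hx₁mem, rfl⟩
  have himg_bdd : BddAbove (g '' Set.Icc xL w) := by
    refine ⟨g xL + (eVariationOn g (Set.Icc a b)).toReal, ?_⟩
    rintro _ ⟨z, hz, rfl⟩
    have hz' : z ∈ Set.Icc a b := ⟨hxLa.trans hz.1, hz.2.trans hwb⟩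
    have hd := hg_bv.dist_le hz' hxLmem
    rw [Real.dist_eq] at hd
    linarith [(abs_le.mp hd).2]
  set M := sSup (g '' Set.Icc xL w) with hMdef
  have hM : 0 < M := lt_of_lt_of_le hx₁pos (le_csSup himg_bdd ⟨x₁, hx₁mem, rfl⟩)
  have hgleM : ∀ z ∈ Set.Icc xL w, g z ≤ M := fun z hz => le_csSup himg_bdd ⟨z, hz, rfl⟩
  obtain ⟨_, ⟨y, hymem, rfl⟩, hygt⟩ := exists_lt_of_lt_csSup himg_ne (half_lt_self hM)
  have hya : a < y := by
    rcases eq_or_lt_of_le (hxLa.trans hymem.1) with heq | h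
    · exfalso; rw [← heq, hga] at hygt; linarith
    · exact h
  have hyb : y ≤ b := hymem.2.trans hwb
  have hxLy : xL ≤ y := hymem.1
  have hyw : y ≤ w := hymem.2
  set β := M * c / 4 with hβdef
  have hβpos : 0 < β := div_pos (mul_pos hM hc) (by norm_num)
  set δ₀ := η/2 with hδ₀def
  have hδ₀pos : 0 < δ₀ := by positivity
  -- lower bound for fine Riemann–Stieltjes sums on [a, y]
  have hlower : ∀ (m : ℕ) (t ξ : ℕ → ℝ), IsTaggedPartition a y m t ξ →
      (∀ i < m, t (i+1) - t i < δ₀) → β ≤ RSSum f g m t ξ := by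
    intro m t ξ hp hmesh
    have htr := trange hp
    have hξr := xirange hp
    have hm : 0 < m := hp.1
    have ht0 : t 0 = a := hp.2.1
    have htm : t m = y := hp.2.2.1
    have hstep : ∀ i < m, t i < t (i+1) := hp.2.2.2.1
    have htag : ∀ i < m, ξ i ∈ Set.Icc (t i) (t (i+1)) := hp.2.2.2.2
    have hfnear : ∀ z, z ∈ Set.Icc a b → |z - xL| < η → |f z - c| ≤ c/16 := by
      intro z hz hd
      have h := hη hz (by rwa [Real.dist_eq])
      rw [Real.dist_eq] at h
      exact h.le
    have habel := abel (fun i => f (ξ i)) (fun i => g (t i)) m hm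
    beta_reduce at habel
    set E := ∑ i ∈ Finset.range (m-1), g (t (i+1)) * (f (ξ (i+1)) - f (ξ i)) with hEdef
    have hS : RSSum f g m t ξ = f (ξ (m-1)) * g y - E := by
      rw [RSSum, habel, htm, ht0, hga, hEdef]
      ring
    rw [hS]
    have hmm : m - 1 < m := by omega
    have hξm1 : c - c/16 ≤ f (ξ (m-1)) := by
      have h1 := (htag (m-1) hmm).1
      have h2 := (htag (m-1) hmm).2
      have h3 := hmesh (m-1) hmm
      have hm1 : m - 1 + 1 = m := by omega
      rw [hm1] at h2 h3
      have hz : ξ (m-1) ∈ Set.Icc a b := ⟨(hξr (m-1) hmm).1, (hξr (m-1) hmm).2.trans hyb⟩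
      have hd : |ξ (m-1) - xL| < η := by
        rw [abs_lt]
        constructor
        · linarith [htm, hxLy, h1, h3]
        · linarith [h2, htm, hyw, hwη]
      linarith [(abs_le.mp (hfnear _ hz hd)).1]
    -- bound on E
    have hEbound : |E| ≤ 3 * (M * (c/16)) := by
      rw [hEdef]
      by_cases hP : ∃ i, i < m - 1 ∧ xL ≤ t (i+1)
      · set i₀ := Nat.find hP with hi₀def
        obtain ⟨hi₀m, hi₀t⟩ : i₀ < m - 1 ∧ xL ≤ t (i₀+1) := Nat.find_spec hP
        have hi₀min : ∀ i < i₀, ¬(i < m - 1 ∧ xL ≤ t (i+1)) := fun i hi => Nat.find_min hP hi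
        have hpre : ∀ i < i₀, g (t (i+1)) * (f (ξ (i+1)) - f (ξ i)) = 0 := by
          intro i hi
          have hilt : t (i+1) < xL := by
            by_contra hge
            exact hi₀min i hi ⟨by omega, not_lt.mp hge⟩
          rw [hg0 (t (i+1)) (htr (i+1) (by omega)).1 hilt, zero_mul]
        have hsplit : ∑ i ∈ Finset.range (m-1), g (t (i+1)) * (f (ξ (i+1)) - f (ξ i))
            = ∑ i ∈ Finset.Ico i₀ (m-1), g (t (i+1)) * (f (ξ (i+1)) - f (ξ i)) := by
          rw [Finset.range_eq_Ico, ← Finset.sum_Ico_consecutive _ (Nat.zero_le i₀) (le_of_lt hi₀m)]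
          rw [Finset.sum_eq_zero (fun i hi => hpre i (Finset.mem_Ico.mp hi).2), zero_add]
        rw [hsplit, Finset.sum_eq_sum_Ico_succ_bot hi₀m]
        -- first term bound
        have hgM : ∀ i, xL ≤ t (i+1) → i + 1 ≤ m → 0 ≤ g (t (i+1)) ∧ g (t (i+1)) ≤ M := by
          intro i h1 h2
          constructor
          · exact hg_nonneg _ ⟨(htr (i+1) h2).1, (htr (i+1) h2).2.trans hyb⟩
          · exact hgleM _ ⟨h1, (htr (i+1) h2).2.trans hyw⟩
        have hfirst : |g (t (i₀+1)) * (f (ξ (i₀+1)) - f (ξ i₀))| ≤ M * (c/8) := by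
          obtain ⟨hg1, hg2⟩ := hgM i₀ hi₀t (by omega)
          rw [abs_mul, abs_of_nonneg hg1]
          have hξa : |f (ξ (i₀+1)) - c| ≤ c/16 := by
            apply hfnear _ ⟨(hξr (i₀+1) (by omega)).1, (hξr (i₀+1) (by omega)).2.trans hyb⟩
            rw [abs_lt]
            have h1 := (htag (i₀+1) (by omega)).1
            have h2 := (hξr (i₀+1) (by omega)).2
            constructor
            · linarith [hi₀t]
            · linarith [h2, hyw, hwη]
          have hξb : |f (ξ i₀) - c| ≤ c/16 := by
            apply hfnear _ ⟨(hξr i₀ (by omega)).1, (hξr i₀ (by omega)).2.trans hyb⟩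
            rw [abs_lt]
            have h1 := (htag i₀ (by omega)).1
            have h2 := (htag i₀ (by omega)).2
            have h3 := hmesh i₀ (by omega)
            have h4 := (hξr i₀ (by omega)).2
            constructor
            · linarith [hi₀t]
            · linarith [h4, hyw, hwη]
          have : |f (ξ (i₀+1)) - f (ξ i₀)| ≤ c/8 := by
            have := abs_sub_abs_le_abs_sub (f (ξ (i₀+1))) (f (ξ i₀))
            calc |f (ξ (i₀+1)) - f (ξ i₀)|
                ≤ |f (ξ (i₀+1)) - c| + |c - f (ξ i₀)| := by
                  have := abs_sub_le (f (ξ (i₀+1))) c (f (ξ i₀)); linarith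
            _ ≤ c/16 + c/16 := by rw [abs_sub_comm c]; exact add_le_add hξa hξb
            _ = c/8 := by ring
          exact mul_le_mul hg2 this (abs_nonneg _) (le_of_lt hM)
        -- tail bound
        have hξmono : ∀ k l, k ≤ l → l < m → ξ k ≤ ξ l := by
          intro k l hkl hlm
          rcases eq_or_lt_of_le hkl with rfl | h
          · exact le_rfl
          · calc ξ k ≤ t (k+1) := (htag k (by omega)).2
            _ ≤ t l := tmono hp l (by omega) (k+1) h
            _ ≤ ξ l := (htag l hlm).1
        set v : ℕ → ℝ := fun k => ξ (min (i₀+1+k) (m-1)) with hvdef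
        have hv : Monotone v := by
          intro k l hkl
          exact hξmono _ _ (by omega) (by omega)
        have hvs : ∀ k, v k ∈ Set.Icc xL w := by
          intro k
          have hidx1 : i₀ + 1 ≤ min (i₀+1+k) (m-1) := by omega
          have hidx2 : min (i₀+1+k) (m-1) < m := by omega
          constructor
          · calc xL ≤ t (i₀+1) := hi₀t
            _ ≤ t (min (i₀+1+k) (m-1)) := tmono hp _ (by omega) _ hidx1
            _ ≤ ξ (min (i₀+1+k) (m-1)) := (htag _ hidx2).1
          · exact ((hξr _ hidx2).2).trans hyw
        have hvar_le := (eVariationOn.sum_le (f := f) (n := (m-1) - (i₀+1)) hv hvs).trans hwvar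
        have htail_sum : ∑ i ∈ Finset.Ico (i₀+1) (m-1), |f (ξ (i+1)) - f (ξ i)| ≤ c/16 := by
          rw [Finset.sum_Ico_eq_sum_range]
          have heq : ∀ k ∈ Finset.range ((m-1) - (i₀+1)),
              |f (ξ (i₀+1+k+1)) - f (ξ (i₀+1+k))| = (edist (f (v (k+1))) (f (v k))).toReal := by
            intro k hk
            rw [Finset.mem_range] at hk
            have e1 : v k = ξ (i₀+1+k) := by
              simp only [hvdef]; congr 1; omega
            have e2 : v (k+1) = ξ (i₀+1+k+1) := by
              simp only [hvdef]; congr 1; omega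
            rw [e1, e2, ← dist_edist, Real.dist_eq]
          rw [Finset.sum_congr rfl heq, ← ENNReal.toReal_sum (fun k _ => edist_ne_top _ _)]
          calc (∑ k ∈ Finset.range ((m-1) - (i₀+1)), edist (f (v (k+1))) (f (v k))).toReal
              ≤ (ENNReal.ofReal (c/16)).toReal := ENNReal.toReal_mono ENNReal.ofReal_ne_top hvar_le
          _ = c/16 := ENNReal.toReal_ofReal (by positivity)
        have htail : |∑ i ∈ Finset.Ico (i₀+1) (m-1), g (t (i+1)) * (f (ξ (i+1)) - f (ξ i))|
            ≤ M * (c/16) := by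
          calc |∑ i ∈ Finset.Ico (i₀+1) (m-1), g (t (i+1)) * (f (ξ (i+1)) - f (ξ i))|
              ≤ ∑ i ∈ Finset.Ico (i₀+1) (m-1), |g (t (i+1)) * (f (ξ (i+1)) - f (ξ i))| :=
                Finset.abs_sum_le_sum_abs _ _
          _ ≤ ∑ i ∈ Finset.Ico (i₀+1) (m-1), M * |f (ξ (i+1)) - f (ξ i)| := by
              apply Finset.sum_le_sum
              intro i hi
              rw [Finset.mem_Ico] at hi
              have h1 : xL ≤ t (i+1) := hi₀t.trans (tmono hp (i+1) (by omega) (i₀+1) (by omega))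
              obtain ⟨hg1, hg2⟩ := hgM i h1 (by omega)
              rw [abs_mul, abs_of_nonneg hg1]
              exact mul_le_mul_of_nonneg_right hg2 (abs_nonneg _)
          _ = M * ∑ i ∈ Finset.Ico (i₀+1) (m-1), |f (ξ (i+1)) - f (ξ i)| := by
              rw [Finset.mul_sum]
          _ ≤ M * (c/16) := mul_le_mul_of_nonneg_left htail_sum (le_of_lt hM)
        calc |g (t (i₀+1)) * (f (ξ (i₀+1)) - f (ξ i₀))
              + ∑ i ∈ Finset.Ico (i₀+1) (m-1), g (t (i+1)) * (f (ξ (i+1)) - f (ξ i))|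
            ≤ |g (t (i₀+1)) * (f (ξ (i₀+1)) - f (ξ i₀))|
              + |∑ i ∈ Finset.Ico (i₀+1) (m-1), g (t (i+1)) * (f (ξ (i+1)) - f (ξ i))| :=
              abs_add_le _ _
        _ ≤ M * (c/8) + M * (c/16) := add_le_add hfirst htail
        _ = 3 * (M * (c/16)) := by ring
      · push_neg at hP
        have hzero : ∀ i ∈ Finset.range (m-1), g (t (i+1)) * (f (ξ (i+1)) - f (ξ i)) = 0 := by
          intro i hi
          rw [Finset.mem_range] at hi
          have hlt : t (i+1) < xL := hP i hi
          rw [hg0 (t (i+1)) (htr (i+1) (by omega)).1 hlt, zero_mul]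
        rw [Finset.sum_eq_zero hzero, abs_zero]
        nlinarith [mul_pos hM hc]
    -- combine
    have hgy0 : 0 ≤ g y := hg_nonneg y ⟨hya.le, hyb⟩
    have h1 : (c - c/16) * (M/2) ≤ f (ξ (m-1)) * g y := by
      apply mul_le_mul hξm1 hygt.le (by linarith) (by linarith)
    have h2 : E ≤ 3 * (M * (c/16)) := (le_abs_self E).trans hEbound
    rw [hβdef]
    nlinarith [mul_pos hM hc]
  -- conclusion
  have hex : ∃ I, HasRSIntegral f g a y I :=
    hasRS_bv hya (hf_cont.mono (Set.Icc_subset_Icc le_rfl hyb))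
      (hg_bv.mono (Set.Icc_subset_Icc le_rfl hyb))
  refine ⟨y, ⟨hya, hyb⟩, ?_⟩
  rw [RSIntegral, dif_pos hex]
  obtain ⟨δ, hδpos, hδI⟩ := hex.choose_spec (β/2) (by linarith)
  obtain ⟨m, t, ξ, hpart, hmesh⟩ := exists_fine_partition hya (lt_min hδpos hδ₀pos)
  have h1 := hδI m t ξ hpart (fun i hi => lt_of_lt_of_le (hmesh i hi) (min_le_left _ _))
  have h2 := hlower m t ξ hpart (fun i hi => lt_of_lt_of_le (hmesh i hi) (min_le_right _ _))
  have h3 := (abs_lt.mp h1).2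
  linarith
end
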